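/- arXiv:1501.06213 — 6 statements merged into one kernel-verified Lean document; each statement's English description precedes it below -/
import Mathlib

section
/- There exists a constant C_α > 0, depending only on α, such that for every n ∈ ℕ and every polynomial P ∈ P_n, ‖P'‖_{L²([0,∞),w)} ≤ C_α · n · ‖P‖_{L²([0,∞),w)}, where w(x) = x^α e^{−x} on [0,∞) and α > −1. -/
open MeasureTheory Polynomial

/-- The weighted L² norm of a polynomial `P` over a set `A ⊆ ℝ` with weight `w`:
`‖P‖_{L²(A,w)} = (∫_A |P(x)|² w(x) dx)^{1/2}`. -/
noncomputable def L2w (A : Set ℝ) (w : ℝ → ℝ) (P : Polynomial ℝ) : ℝ :=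
  Real.sqrt (∫ x in A, (P.eval x) ^ 2 * w x)

/-- The weighted Sobolev norm
`‖P‖_{W^{k,2}(A; w, λ₁w, …, λ_k w)} = (‖P‖²_{L²(A,w)} + ∑_{j=1}^k λ_j ‖P^{(j)}‖²_{L²(A,w)})^{1/2}`. -/
noncomputable def sobNorm (A : Set ℝ) (w : ℝ → ℝ) (k : ℕ) (lam : ℕ → ℝ)
    (P : Polynomial ℝ) : ℝ :=
  Real.sqrt ((L2w A w P) ^ 2 +
    ∑ j ∈ Finset.Icc 1 k, lam j * (L2w A w (derivative^[j] P)) ^ 2)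

open Set Filter Topology
open scoped ENNReal

namespace LagAux

variable {α : ℝ}

noncomputable def B (α : ℝ) (P Q : ℝ[X]) : ℝ :=
  ∫ x in Ioi (0:ℝ), P.eval x * Q.eval x * (x ^ α * Real.exp (-x))

lemma integrableOn_rpow_exp {β : ℝ} (hβ : -1 < β) :
    IntegrableOn (fun x : ℝ => x ^ β * Real.exp (-x)) (Ioi 0) := by
  have h := integrableOn_rpow_mul_exp_neg_rpow hβ (zero_lt_one (α := ℝ))
  refine h.congr_fun (fun x hx => ?_) measurableSet_Ioi
  beta_reduce
  rw [Real.rpow_one]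

lemma integrableOn_poly_mul {β : ℝ} (hβ : -1 < β) (P : ℝ[X]) :
    IntegrableOn (fun x : ℝ => P.eval x * (x ^ β * Real.exp (-x))) (Ioi 0) := by
  induction P using Polynomial.induction_on' with
  | add p q hp hq =>
      have h2 : IntegrableOn (fun x : ℝ => eval x p * (x ^ β * Real.exp (-x)) + eval x q * (x ^ β * Real.exp (-x))) (Ioi 0) := hp.add hq
      refine h2.congr_fun (fun x hx => ?_) measurableSet_Ioi
      simp [add_mul]
  | monomial k c =>
      have hkβ : -1 < (k : ℝ) + β := by
        have : (0:ℝ) ≤ k := Nat.cast_nonneg k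
        linarith
      have h : IntegrableOn (fun x : ℝ => c * (x ^ ((k:ℝ) + β) * Real.exp (-x))) (Ioi 0) := (integrableOn_rpow_exp hkβ).const_mul c
      refine h.congr_fun (fun x hx => ?_) measurableSet_Ioi
      have hx : (0:ℝ) < x := hx
      beta_reduce
      rw [eval_monomial, Real.rpow_add hx, Real.rpow_natCast]
      ring

lemma intB (hα : -1 < α) (P Q : ℝ[X]) :
    IntegrableOn (fun x : ℝ => P.eval x * Q.eval x * (x ^ α * Real.exp (-x))) (Ioi 0) := by
  refine (integrableOn_poly_mul hα (P*Q)).congr_fun (fun x hx => ?_) measurableSet_Ioi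
  simp [eval_mul]

lemma B_symm (P Q : ℝ[X]) : B α P Q = B α Q P := by
  unfold B
  congr 1
  funext x
  ring

lemma B_add_left (hα : -1 < α) (P Q R : ℝ[X]) :
    B α (P + Q) R = B α P R + B α Q R := by
  unfold B
  rw [← integral_add (intB hα P R) (intB hα Q R)]
  congr 1
  funext x
  simp [eval_add]
  ring

lemma B_smul_left (c : ℝ) (P R : ℝ[X]) :
    B α (c • P) R = c * B α P R := by
  unfold B
  rw [show (c * ∫ x in Ioi (0:ℝ), eval x P * eval x R * (x ^ α * Real.exp (-x)))
      = ∫ x in Ioi (0:ℝ), c • (eval x P * eval x R * (x ^ α * Real.exp (-x))) from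
    (integral_smul c _).symm]
  congr 1
  funext x
  simp [smul_eq_mul]
  ring

lemma B_add_right (hα : -1 < α) (P Q R : ℝ[X]) :
    B α P (Q + R) = B α P Q + B α P R := by
  rw [B_symm, B_add_left hα, B_symm Q P, B_symm R P]

lemma B_smul_right (c : ℝ) (P R : ℝ[X]) :
    B α P (c • R) = c * B α P R := by
  rw [B_symm, B_smul_left, B_symm R P]

lemma B_sub_left (hα : -1 < α) (P Q R : ℝ[X]) :
    B α (P - Q) R = B α P R - B α Q R := by
  have h := B_add_left hα (P - Q) Q R
  rw [sub_add_cancel] at h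
  linarith

lemma B_nonneg (P : ℝ[X]) : 0 ≤ B α P P := by
  refine setIntegral_nonneg measurableSet_Ioi (fun x hx => ?_)
  have h1 : 0 ≤ x ^ α * Real.exp (-x) :=
    mul_nonneg (Real.rpow_nonneg (le_of_lt hx) _) (Real.exp_nonneg _)
  nlinarith [mul_self_nonneg (P.eval x)]

lemma B_CS (hα : -1 < α) (P Q : ℝ[X]) : (B α P Q)^2 ≤ B α P P * B α Q Q := by
  have expand : ∀ t : ℝ, B α (t • Q + P) (t • Q + P)
      = B α Q Q * (t * t) + (2 * B α P Q) * t + B α P P := by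
    intro t
    rw [B_add_left hα, B_add_right hα, B_add_right hα, B_smul_left, B_smul_right,
      B_smul_right, B_smul_left, B_symm Q P]
    ring
  have key : ∀ t : ℝ, 0 ≤ B α Q Q * (t * t) + (2 * B α P Q) * t + B α P P := by
    intro t; rw [← expand t]; exact B_nonneg _
  have hd := discrim_le_zero key
  unfold discrim at hd
  nlinarith

noncomputable def Lop (α : ℝ) : ℝ[X] →ₗ[ℝ] ℝ[X] :=
  (LinearMap.mulLeft ℝ (X : ℝ[X])).comp derivative
    - (LinearMap.mulLeft ℝ (C (α+1) : ℝ[X])).comp derivative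
    - (LinearMap.mulLeft ℝ (X : ℝ[X])).comp (derivative ∘ₗ derivative)

lemma Lop_apply (P : ℝ[X]) :
    Lop α P = X * derivative P - C (α+1) * derivative P - X * derivative (derivative P) := rfl

lemma Lop_const (a : ℝ) : Lop α (C a) = 0 := by simp [Lop_apply]

lemma Lop_coeff (P : ℝ[X]) (j : ℕ) :
    (Lop α P).coeff (j+1) = ((j:ℝ)+1) * P.coeff (j+1)
      - ((j:ℝ)+2) * (α + ((j:ℝ)+2)) * P.coeff (j+2) := by
  simp only [Lop_apply, coeff_sub, coeff_X_mul, coeff_C_mul, coeff_derivative]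
  push_cast
  ring

lemma Lop_deg (m : ℕ) (P : ℝ[X]) (hP : P.natDegree ≤ m + 1) :
    (Lop α P - (((m+1:ℕ):ℝ)) • P).natDegree ≤ m := by
  rw [natDegree_le_iff_coeff_eq_zero]
  intro N hN
  obtain ⟨j, rfl⟩ : ∃ j, N = j + 1 := ⟨N - 1, by omega⟩
  have h2 : P.coeff (j+2) = 0 := coeff_eq_zero_of_natDegree_lt (by omega)
  by_cases hjm : j = m
  · subst hjm
    rw [coeff_sub, coeff_smul, Lop_coeff, h2]
    push_cast
    simp [smul_eq_mul]
  · have h1 : P.coeff (j+1) = 0 := coeff_eq_zero_of_natDegree_lt (by omega)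
    rw [coeff_sub, coeff_smul, Lop_coeff, h1, h2]
    simp

lemma Lop_ann : ∀ (m : ℕ) (P : ℝ[X]), P.natDegree ≤ m →
    (Polynomial.aeval (Lop α) (∏ k ∈ Finset.range (m+1), (X - C (k:ℝ)))) P = 0 := by
  intro m
  induction m with
  | zero =>
      intro P hP
      obtain ⟨a, rfl⟩ := Polynomial.natDegree_eq_zero.mp (le_antisymm hP (Nat.zero_le _))
      simp [Lop_const]
  | succ m ih =>
      intro P hP
      rw [Finset.prod_range_succ, map_mul, Module.End.mul_apply]
      have hB : (aeval (Lop α)) (X - C (((m+1 : ℕ)):ℝ)) P = Lop α P - (((m+1:ℕ):ℝ)) • P := by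
        rw [map_sub, aeval_X, aeval_C]
        rw [LinearMap.sub_apply, Module.algebraMap_end_apply]
      rw [hB]
      exact ih _ (Lop_deg m _ hP)

lemma hasDerivAt_G (P Q : ℝ[X]) {x : ℝ} (hx : 0 < x) :
    HasDerivAt (fun y : ℝ => y ^ (α+1) * Real.exp (-y) * (derivative P * Q).eval y)
      ((derivative P).eval x * (derivative Q).eval x * (x ^ (α+1) * Real.exp (-x))
        - (Lop α P).eval x * Q.eval x * (x ^ α * Real.exp (-x))) x := by
  have h1 : HasDerivAt (fun y : ℝ => y ^ (α+1)) ((α+1) * x ^ α) x := by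
    have h0 := Real.hasDerivAt_rpow_const (x := x) (p := α+1) (Or.inl hx.ne')
    convert h0 using 2
    rw [add_sub_cancel_right]
  have h2 : HasDerivAt (fun y : ℝ => Real.exp (-y)) (-Real.exp (-x)) x := by
    simpa using (hasDerivAt_neg x).exp
  have h3 := (derivative P * Q).hasDerivAt x
  have h := (h1.mul h2).mul h3
  refine h.congr_deriv ?_
  simp only [Pi.mul_apply]
  rw [Real.rpow_add_one hx.ne' α]
  simp only [derivative_mul, eval_add, eval_mul, Lop_apply, eval_sub, eval_X, eval_C]
  ring

lemma tendsto_G (P Q : ℝ[X]) (hα : -1 < α) :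
    Tendsto (fun y : ℝ => y ^ (α+1) * Real.exp (-y) * (derivative P * Q).eval y)
      atTop (𝓝 0) := by
  set R := derivative P * Q with hR
  have hsum : Tendsto (fun x : ℝ => ∑ i ∈ Finset.range (R.natDegree+1),
      R.coeff i * (x ^ ((i:ℝ)+(α+1)) * Real.exp (-x))) atTop (𝓝 0) := by
    have h := tendsto_finset_sum (Finset.range (R.natDegree+1))
      (fun i _ => (tendsto_rpow_mul_exp_neg_mul_atTop_nhds_zero ((i:ℝ)+(α+1)) 1
        one_pos).const_mul (R.coeff i))
    simpa using h
  refine Tendsto.congr' ?_ hsum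
  filter_upwards [eventually_gt_atTop (0:ℝ)] with x hx
  rw [eval_eq_sum_range, Finset.mul_sum, Finset.sum_congr rfl]
  intro i _
  rw [Real.rpow_add hx, Real.rpow_natCast]
  ring

lemma key (hα : -1 < α) (P Q : ℝ[X]) :
    B α (Lop α P) Q = ∫ x in Ioi (0:ℝ),
      (derivative P).eval x * (derivative Q).eval x * (x ^ (α+1) * Real.exp (-x)) := by
  have hα1 : -1 < α + 1 := by linarith
  have hint1 : IntegrableOn (fun x : ℝ => (derivative P).eval x * (derivative Q).eval x
      * (x ^ (α+1) * Real.exp (-x))) (Ioi 0) := intB hα1 _ _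
  have hint2 : IntegrableOn (fun x : ℝ => (Lop α P).eval x * Q.eval x
      * (x ^ α * Real.exp (-x))) (Ioi 0) := intB hα _ _
  have hcont : ContinuousWithinAt
      (fun y : ℝ => y ^ (α+1) * Real.exp (-y) * (derivative P * Q).eval y) (Ici 0) 0 := by
    refine ContinuousWithinAt.mul (ContinuousWithinAt.mul ?_ ?_) ?_
    · exact (Real.continuousAt_rpow_const 0 (α+1) (Or.inr (by linarith))).continuousWithinAt
    · exact ((Real.continuous_exp.comp continuous_neg).continuousAt).continuousWithinAt
    · exact ((derivative P * Q).continuousAt).continuousWithinAt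
  have hder : ∀ x ∈ Ioi (0:ℝ), HasDerivAt
      (fun y : ℝ => y ^ (α+1) * Real.exp (-y) * (derivative P * Q).eval y)
      ((fun x : ℝ => (derivative P).eval x * (derivative Q).eval x * (x ^ (α+1) * Real.exp (-x))
        - (Lop α P).eval x * Q.eval x * (x ^ α * Real.exp (-x))) x) x :=
    fun x hx => hasDerivAt_G P Q hx
  have h := integral_Ioi_of_hasDerivAt_of_tendsto hcont hder (hint1.sub hint2) (tendsto_G P Q hα)
  rw [integral_sub hint1 hint2] at h
  have h0 : (0:ℝ) ^ (α+1) * Real.exp (-0) * (derivative P * Q).eval 0 = 0 := by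
    rw [Real.zero_rpow (by linarith : α+1 ≠ 0)]
    ring
  rw [h0, sub_zero] at h
  unfold B
  linarith

lemma rep (hα : -1 < α) (P : ℝ[X]) {b : ℝ} (hb : 0 < b) :
    b ^ (α+1) * Real.exp (-b) * (derivative P).eval b
      = - ∫ t in Ioc (0:ℝ) b, (Lop α P).eval t * (t ^ α * Real.exp (-t)) := by
  have hcont : ContinuousOn
      (fun y : ℝ => y ^ (α+1) * Real.exp (-y) * (derivative P * 1).eval y) (Icc 0 b) := by
    intro y hy
    refine ContinuousWithinAt.mul (ContinuousWithinAt.mul ?_ ?_) ?_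
    · exact (Real.continuousAt_rpow_const y (α+1) (Or.inr (by linarith))).continuousWithinAt
    · exact ((Real.continuous_exp.comp continuous_neg).continuousAt).continuousWithinAt
    · exact ((derivative P * 1).continuousAt).continuousWithinAt
  have hder : ∀ x ∈ Ioo (0:ℝ) b, HasDerivAt
      (fun y : ℝ => y ^ (α+1) * Real.exp (-y) * (derivative P * 1).eval y)
      ((fun t : ℝ => -((Lop α P).eval t * (t ^ α * Real.exp (-t)))) x) x := by
    intro x hx
    have h := hasDerivAt_G (α := α) P 1 hx.1
    convert h using 1
    simp
  have hint : IntervalIntegrable (fun t : ℝ => -((Lop α P).eval t * (t ^ α * Real.exp (-t))))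
      volume 0 b := by
    rw [intervalIntegrable_iff_integrableOn_Ioc_of_le hb.le]
    have h : IntegrableOn (fun x : ℝ => -(eval x ((Lop α) P) * eval x 1 * (x ^ α * Real.exp (-x)))) (Ioc 0 b) :=
      ((intB hα (Lop α P) 1).mono_set Ioc_subset_Ioi_self).neg
    refine h.congr_fun (fun x hx => ?_) measurableSet_Ioc
    simp
  have h := intervalIntegral.integral_eq_sub_of_hasDerivAt_of_le hb.le hcont hder hint
  rw [intervalIntegral.integral_of_le hb.le] at h
  have h0 : (0:ℝ) ^ (α+1) * Real.exp (-0) * (derivative P * 1).eval 0 = 0 := by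
    rw [Real.zero_rpow (by linarith : α+1 ≠ 0)]
    ring
  rw [h0, sub_zero] at h
  rw [MeasureTheory.integral_neg] at h
  simp only [mul_one, eval_mul, eval_one] at h ⊢
  linarith
lemma B_zero_left (R : ℝ[X]) : B α 0 R = 0 := by unfold B; simp

lemma B_sum_left (hα : -1 < α) {ι : Type*} (s : Finset ι) (F : ι → ℝ[X]) (R : ℝ[X]) :
    B α (∑ k ∈ s, F k) R = ∑ k ∈ s, B α (F k) R := by
  classical
  induction s using Finset.induction_on with
  | empty => simp [B_zero_left]
  | insert _ _ hmem ih =>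
      rw [Finset.sum_insert hmem, Finset.sum_insert hmem, B_add_left hα, ih]

lemma sym1 (hα : -1 < α) (P Q : ℝ[X]) : B α (Lop α P) Q = B α P (Lop α Q) := by
  rw [key hα P Q, B_symm, key hα Q P]
  congr 1
  funext x
  ring

lemma Bsym (hα : -1 < α) (f : ℝ[X]) : ∀ (P Q : ℝ[X]),
    B α ((aeval (Lop α)) f P) Q = B α P ((aeval (Lop α)) f Q) := by
  induction f using Polynomial.induction_on with
  | C a =>
      intro P Q
      simp only [aeval_C, Module.algebraMap_end_apply]
      rw [B_smul_left, B_smul_right]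
  | add p q hp hq =>
      intro P Q
      simp only [map_add, LinearMap.add_apply]
      rw [B_add_left hα, B_add_right hα, hp, hq]
  | monomial k a ih =>
      intro P Q
      have h1 : (C a * X ^ (k+1)) = (C a * X ^ k) * X := by ring
      have hL : ∀ R : ℝ[X], (aeval (Lop α)) ((C a * X ^ k) * X) R
          = (aeval (Lop α)) (C a * X ^ k) (Lop α R) := by
        intro R
        rw [map_mul, aeval_X, Module.End.mul_apply]
      have hR : ∀ R : ℝ[X], (aeval (Lop α)) ((C a * X ^ k) * X) R
          = Lop α ((aeval (Lop α)) (C a * X ^ k) R) := by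
        intro R
        rw [mul_comm (C a * X ^ k) X, map_mul, aeval_X, Module.End.mul_apply]
      rw [h1, hL P, ih (Lop α P) Q, sym1 hα, ← hR Q]

lemma spec (hα : -1 < α) (n : ℕ) (P : ℝ[X]) (hP : P.natDegree ≤ n) :
    B α (Lop α P) (Lop α P) ≤ (n:ℝ)^2 * B α P P := by
  classical
  set s := Finset.range (n+1) with hs
  set p : ℝ[X] := ∏ k ∈ s, (X - C (k:ℝ)) with hp
  set ℓ : ℕ → ℝ[X] := fun k =>
    C ((∏ j ∈ s.erase k, ((k:ℝ) - (j:ℝ)))⁻¹) * ∏ j ∈ s.erase k, (X - C (j:ℝ)) with hℓ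
  set q : ℝ[X] := ∑ k ∈ s, C (((n:ℝ))^2 - ((k:ℝ))^2) * (ℓ k)^2 with hq
  have hℓ_self : ∀ k ∈ s, (ℓ k).eval (k:ℝ) = 1 := by
    intro k hk
    have hd : (∏ j ∈ s.erase k, ((k:ℝ) - (j:ℝ))) ≠ 0 := by
      rw [Finset.prod_ne_zero_iff]
      intro j hj
      have : j ≠ k := Finset.ne_of_mem_erase hj
      have : (j:ℝ) ≠ (k:ℝ) := by exact_mod_cast this
      intro hcon
      exact this (by linarith [sub_eq_zero.mp hcon])
    simp only [hℓ, eval_mul, eval_C, eval_prod, eval_sub, eval_X]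
    exact inv_mul_cancel₀ hd
  have hℓ_other : ∀ k ∈ s, ∀ j ∈ s, j ≠ k → (ℓ j).eval (k:ℝ) = 0 := by
    intro k hk j hj hjk
    have hkmem : k ∈ s.erase j := Finset.mem_erase.mpr ⟨fun h => hjk h.symm, hk⟩
    have hz : (∏ i ∈ s.erase j, ((k:ℝ) - (i:ℝ))) = 0 :=
      Finset.prod_eq_zero hkmem (sub_self _)
    simp only [hℓ, eval_mul, eval_C, eval_prod, eval_sub, eval_X, hz, mul_zero]
  have hroot : ∀ k ∈ s, IsRoot (C ((n:ℝ)^2) - X^2 - q) (k:ℝ) := by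
    intro k hk
    have hqk : q.eval (k:ℝ) = (n:ℝ)^2 - (k:ℝ)^2 := by
      rw [hq, eval_finset_sum]
      rw [Finset.sum_eq_single_of_mem k hk]
      · rw [eval_mul, eval_C, eval_pow, hℓ_self k hk]; ring
      · intro j hj hjk
        rw [eval_mul, eval_pow, hℓ_other k hk j hj hjk]
        ring
    simp [IsRoot, hqk]
  have hdvd : p ∣ (C ((n:ℝ)^2) - X^2 - q) := by
    rw [hp]
    refine Finset.prod_dvd_of_coprime ?_ (fun k _hk => dvd_iff_isRoot.mpr (hroot k _hk))
    exact (Polynomial.pairwise_coprime_X_sub_C Nat.cast_injective).set_pairwise _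
  obtain ⟨e, he⟩ := hdvd
  have hqpos : 0 ≤ B α ((aeval (Lop α)) q P) P := by
    rw [hq, map_sum, LinearMap.sum_apply, B_sum_left hα]
    refine Finset.sum_nonneg (fun k hk => ?_)
    have hck : (0:ℝ) ≤ (n:ℝ)^2 - (k:ℝ)^2 := by
      have hkn : k ≤ n := by
        rw [hs] at hk
        exact Nat.lt_succ_iff.mp (Finset.mem_range.mp hk)
      have : (k:ℝ) ≤ (n:ℝ) := by exact_mod_cast hkn
      nlinarith [Nat.cast_nonneg (α := ℝ) k]
    have happ : (aeval (Lop α)) (C (((n:ℝ))^2 - ((k:ℝ))^2) * (ℓ k)^2) P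
        = (((n:ℝ))^2 - ((k:ℝ))^2) • ((aeval (Lop α)) (ℓ k) ((aeval (Lop α)) (ℓ k) P)) := by
      rw [map_mul, map_pow, aeval_C, Module.End.mul_apply,
        pow_two ((aeval (Lop α)) (ℓ k)), Module.End.mul_apply,
        Module.algebraMap_end_apply]
    rw [happ, B_smul_left]
    refine mul_nonneg hck ?_
    rw [Bsym hα (ℓ k)]
    exact B_nonneg _
  have hdecomp : (aeval (Lop α)) (C ((n:ℝ)^2) - X^2) P = (aeval (Lop α)) q P := by
    have h2 : C ((n:ℝ)^2) - X^2 = q + e * p := by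
      rw [mul_comm e p, ← he]; ring
    rw [h2, map_add, LinearMap.add_apply, map_mul, Module.End.mul_apply,
      Lop_ann n P hP, LinearMap.map_zero, add_zero]
  have hLL : (aeval (Lop α)) (C ((n:ℝ)^2) - X^2) P = ((n:ℝ)^2) • P - Lop α (Lop α P) := by
    rw [map_sub, aeval_C, map_pow (aeval (Lop α)) X 2, aeval_X, LinearMap.sub_apply,
      Module.algebraMap_end_apply, pow_two (Lop α), Module.End.mul_apply]
  have hfinal : 0 ≤ (n:ℝ)^2 * B α P P - B α (Lop α (Lop α P)) P := by
    have := hqpos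
    rw [← hdecomp, hLL, B_sub_left hα, B_smul_left] at this
    linarith
  have hswap : B α (Lop α (Lop α P)) P = B α (Lop α P) (Lop α P) := sym1 hα (Lop α P) P
  linarith
noncomputable def pw (c : ℝ) (x : ℝ) : ℝ := Real.exp (Real.log x * c)

lemma pw_measurable (c : ℝ) : Measurable (pw c) :=
  (Real.measurable_log.mul measurable_const).exp

lemma pw_eq {x : ℝ} (hx : 0 < x) (c : ℝ) : pw c x = x ^ c :=
  (Real.rpow_def_of_pos hx c).symm

lemma pw_nonneg (c x : ℝ) : 0 ≤ pw c x := (Real.exp_pos _).le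

/-- integrability of the squared-polynomial weighted integrand, rpow form -/
lemma intSq {β : ℝ} (hβ : -1 < β) (f : ℝ[X]) :
    IntegrableOn (fun t : ℝ => (f.eval t)^2 * (t ^ β * Real.exp (-t))) (Ioi 0) := by
  refine (integrableOn_poly_mul hβ (f*f)).congr_fun (fun t ht => ?_) measurableSet_Ioi
  beta_reduce
  rw [eval_mul]
  ring

lemma setInt_CS {s : Set ℝ} (hs : MeasurableSet s) {u v : ℝ → ℝ}
    (hu : IntegrableOn (fun x => u x * u x) s) (hv : IntegrableOn (fun x => v x * v x) s)
    (huv : IntegrableOn (fun x => u x * v x) s) :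
    (∫ x in s, u x * v x)^2 ≤ (∫ x in s, u x * u x) * (∫ x in s, v x * v x) := by
  have hq : ∀ t : ℝ, 0 ≤ (∫ x in s, v x * v x) * (t*t)
      + (2 * ∫ x in s, u x * v x) * t + ∫ x in s, u x * u x := by
    intro t
    have hia : IntegrableOn (fun x => u x * u x + (2*t) * (u x * v x)) s :=
      hu.add (huv.const_mul _)
    have hib : IntegrableOn (fun x => (t*t) * (v x * v x)) s := hv.const_mul _
    have h0 : 0 ≤ ∫ x in s, (u x * u x + (2*t) * (u x * v x) + (t*t) * (v x * v x)) := by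
      refine setIntegral_nonneg hs (fun x hx => ?_)
      nlinarith [sq_nonneg (u x + t * v x)]
    rw [integral_add hia hib, integral_add hu (huv.const_mul _),
      integral_const_mul, integral_const_mul] at h0
    linarith
  have hd := discrim_le_zero hq
  unfold discrim at hd
  nlinarith

lemma edge (hα : -1 < α) (P : ℝ[X]) {ε : ℝ} (hε0 : 0 < ε) (hεα : ε < α + 1) :
    ∫ x in Ioc (0:ℝ) 1, ((derivative P).eval x)^2 * (x ^ α * Real.exp (-x))
      ≤ (Real.exp 1 / (α+1-ε)) * ((1/ε) *
          ∫ t in Ioi (0:ℝ), ((Lop α P).eval t)^2 * (t ^ α * Real.exp (-t))) := by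
  set f : ℝ[X] := Lop α P with hf
  have hαε2 : -1 < α + ε := by linarith
  have hαε1 : -1 < α - ε := by linarith
  have hc1 : (0:ℝ) < α + 1 - ε := by linarith
  set Bff : ℝ := ∫ t in Ioi (0:ℝ), (f.eval t)^2 * (t ^ α * Real.exp (-t)) with hBff
  have hBff0 : 0 ≤ Bff := setIntegral_nonneg measurableSet_Ioi (fun t ht => by
    have : (0:ℝ) < t := ht
    positivity)
  -- the inner integral
  set A : ℝ → ℝ := fun x => ∫ t in Ioc (0:ℝ) x, (f.eval t)^2 * (t ^ (α+ε) * Real.exp (-t))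
    with hA
  have hA_int : ∀ x : ℝ, IntegrableOn
      (fun t : ℝ => (f.eval t)^2 * (t ^ (α+ε) * Real.exp (-t))) (Ioc 0 x) :=
    fun x => (intSq hαε2 f).mono_set Ioc_subset_Ioi_self
  have hA_nonneg : ∀ x : ℝ, 0 ≤ A x := by
    intro x
    refine setIntegral_nonneg measurableSet_Ioc (fun t ht => ?_)
    have : (0:ℝ) < t := ht.1
    positivity
  -- Step I : pointwise bound
  have hpt : ∀ x ∈ Ioc (0:ℝ) 1, ((derivative P).eval x)^2 * (x ^ α * Real.exp (-x))
      ≤ (Real.exp 1 / (α+1-ε)) * (pw (-1-ε) x * A x) := by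
    intro x hx
    obtain ⟨hx0, hx1⟩ := hx
    have hrep := rep hα P hx0
    set Ix : ℝ := ∫ t in Ioc (0:ℝ) x, f.eval t * (t ^ α * Real.exp (-t)) with hIx'
    have hIx : Ix = -(x ^ (α+1) * Real.exp (-x) * (derivative P).eval x) := by
      rw [hrep]; ring
    -- Cauchy-Schwarz
    have hCS : Ix^2 ≤ A x * ∫ t in Ioc (0:ℝ) x, t ^ (α-ε) * Real.exp (-t) := by
      set u : ℝ → ℝ := fun t => f.eval t * (t ^ ((α+ε)/2) * Real.exp (-t/2)) with hu
      set v : ℝ → ℝ := fun t => t ^ ((α-ε)/2) * Real.exp (-t/2) with hv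
      have huv_eq : ∀ t ∈ Ioc (0:ℝ) x, f.eval t * (t ^ α * Real.exp (-t)) = u t * v t := by
        intro t ht
        have ht0 : (0:ℝ) < t := ht.1
        rw [hu, hv]
        have e1 : (t:ℝ) ^ ((α+ε)/2) * t ^ ((α-ε)/2) = t ^ α := by
          rw [← Real.rpow_add ht0]; congr 1; ring
        have e2 : Real.exp (-t/2) * Real.exp (-t/2) = Real.exp (-t) := by
          rw [← Real.exp_add]; congr 1; ring
        calc f.eval t * (t ^ α * Real.exp (-t))
            = f.eval t * ((t ^ ((α+ε)/2) * t ^ ((α-ε)/2)) * (Real.exp (-t/2) * Real.exp (-t/2))) := by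
              rw [e1, e2]
          _ = f.eval t * (t ^ ((α+ε)/2) * Real.exp (-t/2)) * (t ^ ((α-ε)/2) * Real.exp (-t/2)) := by
              ring
      have huu_eq : ∀ t ∈ Ioc (0:ℝ) x, (f.eval t)^2 * (t ^ (α+ε) * Real.exp (-t)) = u t * u t := by
        intro t ht
        have ht0 : (0:ℝ) < t := ht.1
        rw [hu]
        have e1 : (t:ℝ) ^ ((α+ε)/2) * t ^ ((α+ε)/2) = t ^ (α+ε) := by
          rw [← Real.rpow_add ht0]; congr 1; ring
        have e2 : Real.exp (-t/2) * Real.exp (-t/2) = Real.exp (-t) := by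
          rw [← Real.exp_add]; congr 1; ring
        calc (f.eval t)^2 * (t ^ (α+ε) * Real.exp (-t))
            = (f.eval t)^2 * ((t ^ ((α+ε)/2) * t ^ ((α+ε)/2)) * (Real.exp (-t/2) * Real.exp (-t/2))) := by
              rw [e1, e2]
          _ = (f.eval t * (t ^ ((α+ε)/2) * Real.exp (-t/2)))
              * (f.eval t * (t ^ ((α+ε)/2) * Real.exp (-t/2))) := by ring
      have hvv_eq : ∀ t ∈ Ioc (0:ℝ) x, t ^ (α-ε) * Real.exp (-t) = v t * v t := by
        intro t ht
        have ht0 : (0:ℝ) < t := ht.1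
        rw [hv]
        have e1 : (t:ℝ) ^ ((α-ε)/2) * t ^ ((α-ε)/2) = t ^ (α-ε) := by
          rw [← Real.rpow_add ht0]; congr 1; ring
        have e2 : Real.exp (-t/2) * Real.exp (-t/2) = Real.exp (-t) := by
          rw [← Real.exp_add]; congr 1; ring
        rw [← e1, ← e2]; ring
      have hu2 : IntegrableOn (fun t => u t * u t) (Ioc 0 x) :=
        (hA_int x).congr_fun huu_eq measurableSet_Ioc
      have hv2 : IntegrableOn (fun t => v t * v t) (Ioc 0 x) := by
        refine ((integrableOn_rpow_exp hαε1).mono_set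
          (Ioc_subset_Ioi_self)).congr_fun hvv_eq measurableSet_Ioc
      have huv2 : IntegrableOn (fun t => u t * v t) (Ioc 0 x) := by
        refine (((integrableOn_poly_mul hα f).mono_set
          (Ioc_subset_Ioi_self))).congr_fun huv_eq measurableSet_Ioc
      have hIx2 : Ix = ∫ t in Ioc (0:ℝ) x, u t * v t :=
        setIntegral_congr_fun measurableSet_Ioc huv_eq
      have hAx2 : A x = ∫ t in Ioc (0:ℝ) x, u t * u t :=
        setIntegral_congr_fun measurableSet_Ioc huu_eq
      have hVx2 : (∫ t in Ioc (0:ℝ) x, t ^ (α-ε) * Real.exp (-t))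
          = ∫ t in Ioc (0:ℝ) x, v t * v t :=
        setIntegral_congr_fun measurableSet_Ioc hvv_eq
      rw [hIx2, hAx2, hVx2]
      exact setInt_CS measurableSet_Ioc hu2 hv2 huv2
    -- bound on second factor
    have hsecond : (∫ t in Ioc (0:ℝ) x, t ^ (α-ε) * Real.exp (-t)) ≤ x ^ (α+1-ε) / (α+1-ε) := by
      have hint1 : IntegrableOn (fun t : ℝ => t ^ (α-ε)) (Ioc 0 x) := by
        rw [← intervalIntegrable_iff_integrableOn_Ioc_of_le hx0.le]
        exact intervalIntegral.intervalIntegrable_rpow' hαε1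
      have hint2 : IntegrableOn (fun t : ℝ => t ^ (α-ε) * Real.exp (-t)) (Ioc 0 x) :=
        (integrableOn_rpow_exp hαε1).mono_set Ioc_subset_Ioi_self
      have hmono : (∫ t in Ioc (0:ℝ) x, t ^ (α-ε) * Real.exp (-t))
          ≤ ∫ t in Ioc (0:ℝ) x, t ^ (α-ε) := by
        refine setIntegral_mono_on hint2 hint1 measurableSet_Ioc (fun t ht => ?_)
        have ht0 : (0:ℝ) < t := ht.1
        have h1 : Real.exp (-t) ≤ 1 := by
          rw [Real.exp_le_one_iff]; linarith
        have h2 : (0:ℝ) ≤ t ^ (α-ε) := Real.rpow_nonneg ht0.le _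
        nlinarith
      have hval : (∫ t in Ioc (0:ℝ) x, t ^ (α-ε)) = x ^ (α+1-ε) / (α+1-ε) := by
        rw [← intervalIntegral.integral_of_le hx0.le,
          integral_rpow (Or.inl hαε1)]
        rw [Real.zero_rpow (by linarith : α-ε+1 ≠ 0)]
        have hexp : α - ε + 1 = α + 1 - ε := by ring
        rw [hexp, sub_zero]
      linarith
    -- identity for the left side
    have hsq : ((derivative P).eval x)^2 * (x ^ α * Real.exp (-x))
        = Ix^2 * (pw (-α-2) x * Real.exp x) := by
      have hIsq : Ix^2 = (x ^ (α+1) * x ^ (α+1)) * (Real.exp (-x) * Real.exp (-x))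
          * ((derivative P).eval x)^2 := by
        rw [hIx]; ring
      have e1 : (x:ℝ) ^ (α+1) * x ^ (α+1) * pw (-α-2) x = x ^ α := by
        rw [pw_eq hx0, ← Real.rpow_add hx0, ← Real.rpow_add hx0]; congr 1; ring
      have e2 : Real.exp (-x) * Real.exp (-x) * Real.exp x = Real.exp (-x) := by
        rw [← Real.exp_add, ← Real.exp_add]; congr 1; ring
      calc ((derivative P).eval x)^2 * (x ^ α * Real.exp (-x))
          = ((x:ℝ) ^ (α+1) * x ^ (α+1) * pw (-α-2) x)
            * (Real.exp (-x) * Real.exp (-x) * Real.exp x) * ((derivative P).eval x)^2 := by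
            rw [e1, e2]; ring
        _ = Ix^2 * (pw (-α-2) x * Real.exp x) := by rw [hIsq]; ring
    -- combine
    have hx2 : 0 ≤ pw (-α-2) x * Real.exp x :=
      mul_nonneg (pw_nonneg _ _) (Real.exp_nonneg _)
    have hchain : Ix^2 ≤ A x * (x ^ (α+1-ε) / (α+1-ε)) := by
      refine le_trans hCS ?_
      exact mul_le_mul_of_nonneg_left hsecond (hA_nonneg x)
    have hstep : ((derivative P).eval x)^2 * (x ^ α * Real.exp (-x))
        ≤ (A x * (x ^ (α+1-ε) / (α+1-ε))) * (pw (-α-2) x * Real.exp x) := by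
      rw [hsq]
      exact mul_le_mul_of_nonneg_right hchain hx2
    refine le_trans hstep ?_
    -- simplify the rpow products
    have e3 : x ^ (α+1-ε) * pw (-α-2) x = pw (-1-ε) x := by
      rw [pw_eq hx0, pw_eq hx0, ← Real.rpow_add hx0]; congr 1; ring
    have hexp1 : Real.exp x ≤ Real.exp 1 := Real.exp_le_exp.mpr hx1
    have hpwx : 0 ≤ pw (-1-ε) x := pw_nonneg _ _
    calc (A x * (x ^ (α+1-ε) / (α+1-ε))) * (pw (-α-2) x * Real.exp x)
        = (A x * (pw (-1-ε) x) / (α+1-ε)) * Real.exp x := by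
          rw [← e3]; ring
      _ ≤ (A x * (pw (-1-ε) x) / (α+1-ε)) * Real.exp 1 := by
          refine mul_le_mul_of_nonneg_left hexp1 ?_
          exact div_nonneg (mul_nonneg (hA_nonneg x) hpwx) hc1.le
      _ = (Real.exp 1 / (α+1-ε)) * (pw (-1-ε) x * A x) := by ring
  -- Step II : integrate and apply Tonelli
  set c1 : ℝ := Real.exp 1 / (α+1-ε) with hc1def
  have hc1nn : 0 ≤ c1 := div_nonneg (Real.exp_nonneg 1) hc1.le
  set h : ℝ → ℝ := fun t => (f.eval t)^2 * (pw (α+ε) t * Real.exp (-t)) with hh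
  set H : ℝ → ℝ≥0∞ := fun t => ENNReal.ofReal (h t) with hH
  set g : ℝ → ℝ≥0∞ := fun x => ENNReal.ofReal (pw (-1-ε) x) with hg
  have hh_nonneg : ∀ t, 0 ≤ h t := fun t =>
    mul_nonneg (sq_nonneg _) (mul_nonneg (pw_nonneg _ _) (Real.exp_nonneg _))
  have hh_meas : Measurable h :=
    ((f.continuous.pow 2).measurable).mul
      ((pw_measurable (α+ε)).mul ((Real.continuous_exp.comp continuous_neg).measurable))
  have hH_meas : Measurable H := hh_meas.ennreal_ofReal
  have hg_meas : Measurable g := (pw_measurable _).ennreal_ofReal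
  have hinner : ∀ x ∈ Ioc (0:ℝ) 1,
      ENNReal.ofReal (A x) = ∫⁻ t in Ioc (0:ℝ) x, H t := by
    intro x _hx
    rw [hA]
    rw [ofReal_integral_eq_lintegral_ofReal (hA_int x)
      ((ae_restrict_iff' measurableSet_Ioc).mpr (ae_of_all _ (fun t ht => by
        have : (0:ℝ) < t := ht.1
        positivity)))]
    refine setLIntegral_congr_fun measurableSet_Ioc (fun t ht => ?_)
    rw [hH, hh]
    congr 2
    rw [pw_eq ht.1]
  -- the main left-hand side function
  set lhs : ℝ → ℝ := fun x => ((derivative P).eval x)^2 * (x ^ α * Real.exp (-x)) with hlhs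
  have hlhs_int : IntegrableOn lhs (Ioc 0 1) :=
    (intSq hα (derivative P)).mono_set Ioc_subset_Ioi_self
  have hlhs_nonneg : ∀ x ∈ Ioc (0:ℝ) 1, 0 ≤ lhs x := by
    intro x hx
    have : (0:ℝ) < x := hx.1
    rw [hlhs]
    positivity
  have h0 : ENNReal.ofReal (∫ x in Ioc (0:ℝ) 1, lhs x) = ∫⁻ x in Ioc (0:ℝ) 1,
      ENNReal.ofReal (lhs x) :=
    ofReal_integral_eq_lintegral_ofReal hlhs_int
      ((ae_restrict_iff' measurableSet_Ioc).mpr (ae_of_all _ hlhs_nonneg))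
  -- K1 : pointwise domination within the lintegral
  have hK1 : (∫⁻ x in Ioc (0:ℝ) 1, ENNReal.ofReal (lhs x))
      ≤ ∫⁻ x in Ioc (0:ℝ) 1, ENNReal.ofReal c1 * (g x * ∫⁻ t in Ioc (0:ℝ) x, H t) := by
    refine lintegral_mono_ae ((ae_restrict_iff' measurableSet_Ioc).mpr
      (ae_of_all _ (fun x hx => ?_)))
    calc ENNReal.ofReal (lhs x) ≤ ENNReal.ofReal (c1 * (pw (-1-ε) x * A x)) :=
          ENNReal.ofReal_le_ofReal (hpt x hx)
    _ = ENNReal.ofReal c1 * (ENNReal.ofReal (pw (-1-ε) x) * ENNReal.ofReal (A x)) := by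
          rw [ENNReal.ofReal_mul hc1nn, ENNReal.ofReal_mul (pw_nonneg _ _)]
    _ = ENNReal.ofReal c1 * (g x * ∫⁻ t in Ioc (0:ℝ) x, H t) := by rw [hinner x hx, hg]
  -- K2 : pull out the constant
  have hK2 : (∫⁻ x in Ioc (0:ℝ) 1, ENNReal.ofReal c1 * (g x * ∫⁻ t in Ioc (0:ℝ) x, H t))
      = ENNReal.ofReal c1 * ∫⁻ x in Ioc (0:ℝ) 1, (g x * ∫⁻ t in Ioc (0:ℝ) x, H t) :=
    lintegral_const_mul' _ _ ENNReal.ofReal_ne_top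
  -- K3 : Tonelli swap
  set Φ : ℝ → ℝ → ℝ≥0∞ := fun x t => g x * ((Ioc (0:ℝ) x).indicator H t) with hΦ
  have hstep : ∀ x, g x * (∫⁻ t in Ioc (0:ℝ) x, H t) = ∫⁻ t, Φ x t := by
    intro x
    rw [← lintegral_indicator measurableSet_Ioc]
    exact (lintegral_const_mul' (g x) _ ENNReal.ofReal_ne_top).symm
  have hS : MeasurableSet {p : ℝ × ℝ | 0 < p.2 ∧ p.2 ≤ p.1} := by
    refine MeasurableSet.inter ?_ ?_
    · exact measurableSet_lt measurable_const measurable_snd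
    · exact measurableSet_le measurable_snd measurable_fst
  have huΦ : Function.uncurry Φ = fun p : ℝ × ℝ =>
      g p.1 * ({q : ℝ × ℝ | 0 < q.2 ∧ q.2 ≤ q.1}.indicator (fun q => H q.2) p) := by
    funext p
    simp only [Function.uncurry, hΦ]
    congr 1
  have hΦ_meas : AEMeasurable (Function.uncurry Φ)
      ((volume.restrict (Ioc (0:ℝ) 1)).prod volume) := by
    rw [huΦ]
    exact ((hg_meas.comp measurable_fst).mul
      ((hH_meas.comp measurable_snd).indicator hS)).aemeasurable
  have hK3 : (∫⁻ x in Ioc (0:ℝ) 1, (g x * ∫⁻ t in Ioc (0:ℝ) x, H t))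
      = ∫⁻ t, ∫⁻ x in Ioc (0:ℝ) 1, Φ x t ∂volume := by
    rw [lintegral_congr hstep]
    exact lintegral_lintegral_swap hΦ_meas
  -- K4 : bound the inner integral for fixed t
  have hK4 : ∀ t : ℝ, (∫⁻ x in Ioc (0:ℝ) 1, Φ x t)
      ≤ (Ioc (0:ℝ) 1).indicator (fun t => H t * ENNReal.ofReal (pw (-ε) t / ε)) t := by
    intro t
    by_cases ht : t ∈ Ioc (0:ℝ) 1
    · rw [indicator_of_mem ht]
      have hΦt : ∀ x, Φ x t = (Ici t).indicator g x * H t := by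
        intro x
        simp only [hΦ]
        by_cases hxt : t ≤ x
        · rw [indicator_of_mem (show t ∈ Ioc (0:ℝ) x from ⟨ht.1, hxt⟩),
            indicator_of_mem (show x ∈ Ici t from hxt), mul_comm]
        · have h1 : t ∉ Ioc (0:ℝ) x := fun hmem => hxt hmem.2
          have h2 : x ∉ Ici t := fun hmem => hxt hmem
          rw [indicator_of_notMem h1, indicator_of_notMem h2, mul_zero, zero_mul]
      calc ∫⁻ x in Ioc (0:ℝ) 1, Φ x t
          = ∫⁻ x in Ioc (0:ℝ) 1, (Ici t).indicator g x * H t :=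
            lintegral_congr (fun x => hΦt x)
        _ = (∫⁻ x in Ioc (0:ℝ) 1, (Ici t).indicator g x) * H t :=
            lintegral_mul_const' (H t) _ ENNReal.ofReal_ne_top
        _ = (∫⁻ x in Ici t ∩ Ioc (0:ℝ) 1, g x) * H t := by
            rw [lintegral_indicator measurableSet_Ici, Measure.restrict_restrict measurableSet_Ici]
        _ ≤ (∫⁻ x in Icc t 1, g x) * H t := by
            refine mul_le_mul_left (lintegral_mono_set ?_) _
            intro x hx
            exact ⟨hx.1, hx.2.2⟩
        _ ≤ (ENNReal.ofReal (pw (-ε) t / ε)) * H t := by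
            refine mul_le_mul_left ?_ _
            have hcont : ContinuousOn (pw (-1-ε)) (Icc t 1) := by
              refine ContinuousOn.rexp (ContinuousOn.mul ?_ continuousOn_const)
              refine Real.continuousOn_log.mono ?_
              intro y hy
              exact ne_of_gt (lt_of_lt_of_le ht.1 hy.1)
            have hint : IntegrableOn (pw (-1-ε)) (Icc t 1) :=
              hcont.integrableOn_compact isCompact_Icc
            rw [← ofReal_integral_eq_lintegral_ofReal hint
              (ae_of_all _ (fun x => pw_nonneg _ _))]
            refine ENNReal.ofReal_le_ofReal ?_
            have heq : (∫ x in Icc t 1, pw (-1-ε) x) = (pw (-ε) t - 1)/ε := by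
              rw [setIntegral_congr_fun measurableSet_Icc
                (fun x hx => pw_eq (lt_of_lt_of_le ht.1 hx.1) _)]
              rw [integral_Icc_eq_integral_Ioc, ← intervalIntegral.integral_of_le ht.2]
              rw [integral_rpow (Or.inr ⟨by intro hcon; linarith,
                fun hmem => by
                  rcases Set.mem_uIcc.mp hmem with hc | hc
                  · linarith [ht.1, hc.1]
                  · linarith [hc.1]⟩)]
              have he2 : -1-ε+1 = -ε := by ring
              rw [he2, Real.one_rpow, pw_eq ht.1]
              rw [div_neg]
              ring
            rw [heq]
            have hple : pw (-ε) t - 1 ≤ pw (-ε) t := by linarith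
            gcongr
        _ = H t * ENNReal.ofReal (pw (-ε) t / ε) := mul_comm _ _
    · rw [indicator_of_notMem ht]
      have hz : ∀ x ∈ Ioc (0:ℝ) 1, Φ x t = 0 := by
        intro x hx
        simp only [hΦ]
        rw [indicator_of_notMem (fun hmem => ht ⟨hmem.1, hmem.2.trans hx.2⟩), mul_zero]
      rw [setLIntegral_congr_fun measurableSet_Ioc hz]
      simp
  -- K5 : final computation
  have hK5 : (∫⁻ t, (Ioc (0:ℝ) 1).indicator (fun t => H t * ENNReal.ofReal (pw (-ε) t / ε)) t)
      ≤ ENNReal.ofReal ((1/ε) * Bff) := by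
    rw [lintegral_indicator measurableSet_Ioc]
    have hcongr : (∫⁻ t in Ioc (0:ℝ) 1, H t * ENNReal.ofReal (pw (-ε) t / ε))
        = ∫⁻ t in Ioc (0:ℝ) 1,
            ENNReal.ofReal ((1/ε) * ((f.eval t)^2 * (t ^ α * Real.exp (-t)))) := by
      refine setLIntegral_congr_fun measurableSet_Ioc (fun t ht => ?_)
      rw [hH, ← ENNReal.ofReal_mul (hh_nonneg t)]
      congr 1
      simp only [hh, pw_eq ht.1]
      have e4 : (t:ℝ) ^ (α+ε) * t ^ (-ε) = t ^ α := by
        rw [← Real.rpow_add ht.1]; congr 1; ring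
      rw [← e4]
      ring
    rw [hcongr]
    have hint : IntegrableOn (fun t : ℝ => (1/ε) * ((f.eval t)^2 * (t ^ α * Real.exp (-t))))
        (Ioc 0 1) := ((intSq hα f).mono_set Ioc_subset_Ioi_self).const_mul _
    rw [← ofReal_integral_eq_lintegral_ofReal hint
      ((ae_restrict_iff' measurableSet_Ioc).mpr (ae_of_all _ (fun t ht => by
        have : (0:ℝ) < t := ht.1
        positivity)))]
    refine ENNReal.ofReal_le_ofReal ?_
    have hmono : (∫ t in Ioc (0:ℝ) 1, (f.eval t)^2 * (t ^ α * Real.exp (-t))) ≤ Bff := by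
      rw [hBff]
      refine setIntegral_mono_set (intSq hα f) ?_ ?_
      · exact (ae_restrict_iff' measurableSet_Ioi).mpr (ae_of_all _ (fun t ht => by
          have : (0:ℝ) < t := ht
          positivity))
      · exact HasSubset.Subset.eventuallyLE Ioc_subset_Ioi_self
    rw [integral_const_mul]
    exact mul_le_mul_of_nonneg_left hmono (by positivity)
  -- assemble
  have hfinal : ENNReal.ofReal (∫ x in Ioc (0:ℝ) 1, lhs x)
      ≤ ENNReal.ofReal (c1 * ((1/ε) * Bff)) := by
    rw [h0]
    refine le_trans hK1 ?_
    rw [hK2, hK3]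
    rw [ENNReal.ofReal_mul hc1nn]
    refine mul_le_mul_right ?_ _
    refine le_trans (lintegral_mono hK4) hK5
  have hRHS_nonneg : 0 ≤ c1 * ((1/ε) * Bff) := by positivity
  exact (ENNReal.ofReal_le_ofReal_iff hRHS_nonneg).mp hfinal
end LagAux

open LagAux

/-- Markov inequality for the Laguerre weight `w(x) = x^α e^{-x}` on `[0,∞)`, `α > -1`. -/
theorem laguerre_markov (α : ℝ) (hα : -1 < α) :
    ∃ C : ℝ, 0 < C ∧ ∀ (n : ℕ) (P : Polynomial ℝ), P.natDegree ≤ n →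
      L2w (Set.Ici 0) (fun x => x ^ α * Real.exp (-x)) (derivative P) ≤
        C * n * L2w (Set.Ici 0) (fun x => x ^ α * Real.exp (-x)) P := by
  have hα1 : -1 < α + 1 := by linarith
  set ε : ℝ := min (1/2) ((α+1)/2) with hεdef
  have hε0 : 0 < ε := lt_min (by norm_num) (by linarith)
  have hεα : ε < α + 1 := lt_of_le_of_lt (min_le_right _ _) (by linarith)
  set K : ℝ := Real.exp 1 / (α+1-ε) * (1/ε) + 1 with hKdef
  have hKpos : 0 < K := by
    have h1 : 0 < α + 1 - ε := by linarith
    have h2 : 0 < Real.exp 1 := Real.exp_pos 1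
    have : 0 ≤ Real.exp 1 / (α+1-ε) * (1/ε) := by positivity
    rw [hKdef]
    linarith
  refine ⟨Real.sqrt K, Real.sqrt_pos.mpr hKpos, ?_⟩
  intro n P hP
  -- trivial case n = 0
  rcases Nat.eq_zero_or_pos n with hn0 | hn1
  · subst hn0
    obtain ⟨a, rfl⟩ := Polynomial.natDegree_eq_zero.mp (le_antisymm hP (Nat.zero_le _))
    simp [L2w, Polynomial.derivative_C]
  -- main case
  have hn1' : (1:ℝ) ≤ (n:ℝ) := by exact_mod_cast hn1
  set W : ℝ → ℝ := fun x => x ^ α * Real.exp (-x) with hW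
  set BPP : ℝ := B α P P with hBPP
  have hBPP0 : 0 ≤ BPP := B_nonneg P
  set f : ℝ[X] := Lop α P with hf
  -- identify the L2w norms with B-quantities (moving Ici to Ioi)
  have hIci : ∀ Q : ℝ[X], (∫ x in Ici (0:ℝ), (Q.eval x)^2 * W x)
      = ∫ x in Ioi (0:ℝ), (Q.eval x)^2 * W x := fun Q => integral_Ici_eq_integral_Ioi
  have hBeq : ∀ Q : ℝ[X], (∫ x in Ioi (0:ℝ), (Q.eval x)^2 * W x) = B α Q Q := by
    intro Q
    unfold LagAux.B
    refine setIntegral_congr_fun measurableSet_Ioi (fun x _ => ?_)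
    simp only [hW]
    ring
  -- tail estimate
  have hBLL : B α f f ≤ (n:ℝ)^2 * BPP := spec hα n P hP
  have htail : (∫ x in Ioi (1:ℝ), ((derivative P).eval x)^2 * W x) ≤ (n:ℝ) * BPP := by
    have h1 : (∫ x in Ioi (1:ℝ), ((derivative P).eval x)^2 * W x)
        ≤ ∫ x in Ioi (1:ℝ), ((derivative P).eval x)^2 * (x ^ (α+1) * Real.exp (-x)) := by
      refine setIntegral_mono_on ((intSq hα (derivative P)).mono_set (fun x hx => Set.mem_Ioi.mpr (lt_trans
        zero_lt_one (Set.mem_Ioi.mp hx)))) ((intSq hα1 (derivative P)).mono_set (fun x hx => Set.mem_Ioi.mpr (lt_trans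
        zero_lt_one (Set.mem_Ioi.mp hx)))) measurableSet_Ioi (fun x hx => ?_)
      have hx1 : (1:ℝ) ≤ x := le_of_lt hx
      have h2 : x ^ α ≤ x ^ (α+1) := Real.rpow_le_rpow_of_exponent_le hx1 (by linarith)
      have h3 : 0 ≤ Real.exp (-x) := Real.exp_nonneg _
      have h4 : 0 ≤ ((derivative P).eval x)^2 := sq_nonneg _
      simp only [hW]
      nlinarith [mul_nonneg (mul_nonneg h4 h3) (sub_nonneg.mpr h2)]
    have h2 : (∫ x in Ioi (1:ℝ), ((derivative P).eval x)^2 * (x ^ (α+1) * Real.exp (-x)))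
        ≤ ∫ x in Ioi (0:ℝ), ((derivative P).eval x)^2 * (x ^ (α+1) * Real.exp (-x)) := by
      refine setIntegral_mono_set (intSq hα1 (derivative P)) ?_ ?_
      · exact (ae_restrict_iff' measurableSet_Ioi).mpr (ae_of_all _ (fun x hx => by
          have : (0:ℝ) < x := hx
          positivity))
      · exact HasSubset.Subset.eventuallyLE (fun x hx => Set.mem_Ioi.mpr (lt_trans zero_lt_one (Set.mem_Ioi.mp hx)))
    have h3 : (∫ x in Ioi (0:ℝ), ((derivative P).eval x)^2 * (x ^ (α+1) * Real.exp (-x)))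
        = B α f P := by
      rw [hf, key hα P P]
      refine setIntegral_congr_fun measurableSet_Ioi (fun x _ => ?_)
      ring
    have h4 : B α f P ≤ (n:ℝ) * BPP := by
      have hCS := B_CS hα f P
      have hmul : B α f f * B α P P ≤ ((n:ℝ)^2 * BPP) * BPP :=
        mul_le_mul_of_nonneg_right hBLL hBPP0
      have h5 : (B α f P)^2 ≤ (((n:ℝ)) * BPP)^2 := by nlinarith [hCS, hmul]
      have habs : |B α f P| ≤ (n:ℝ) * BPP := by
        calc |B α f P| = Real.sqrt ((B α f P)^2) := (Real.sqrt_sq_eq_abs _).symm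
          _ ≤ Real.sqrt (((n:ℝ) * BPP)^2) := Real.sqrt_le_sqrt h5
          _ = (n:ℝ) * BPP := Real.sqrt_sq (by positivity)
      linarith [le_abs_self (B α f P)]
    linarith
  -- edge estimate
  have hedge : (∫ x in Ioc (0:ℝ) 1, ((derivative P).eval x)^2 * W x)
      ≤ (Real.exp 1 / (α+1-ε) * (1/ε)) * ((n:ℝ)^2 * BPP) := by
    have h1 := edge hα P hε0 hεα
    have h2 : (∫ t in Ioi (0:ℝ), ((Lop α P).eval t)^2 * (t ^ α * Real.exp (-t))) = B α f f := by
      rw [hf, ← hBeq (Lop α P)]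
    rw [h2] at h1
    have h3 : (Real.exp 1 / (α+1-ε)) * ((1/ε) * B α f f)
        ≤ (Real.exp 1 / (α+1-ε) * (1/ε)) * ((n:ℝ)^2 * BPP) := by
      have hc : 0 ≤ Real.exp 1 / (α+1-ε) * (1/ε) := by
        have : 0 < α + 1 - ε := by linarith
        positivity
      calc (Real.exp 1 / (α+1-ε)) * ((1/ε) * B α f f)
          = (Real.exp 1 / (α+1-ε) * (1/ε)) * B α f f := by ring
        _ ≤ (Real.exp 1 / (α+1-ε) * (1/ε)) * ((n:ℝ)^2 * BPP) :=
            mul_le_mul_of_nonneg_left hBLL hc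
    exact le_trans h1 h3
  -- combine
  have hsplit : (∫ x in Ioi (0:ℝ), ((derivative P).eval x)^2 * W x)
      = (∫ x in Ioc (0:ℝ) 1, ((derivative P).eval x)^2 * W x)
        + ∫ x in Ioi (1:ℝ), ((derivative P).eval x)^2 * W x := by
    rw [← Ioc_union_Ioi_eq_Ioi (zero_le_one (α := ℝ))]
    refine setIntegral_union (Ioc_disjoint_Ioi le_rfl) measurableSet_Ioi
      ((intSq hα (derivative P)).mono_set Ioc_subset_Ioi_self)
      ((intSq hα (derivative P)).mono_set (fun x hx => Set.mem_Ioi.mpr (lt_trans zero_lt_one (Set.mem_Ioi.mp hx))))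
  have hmain : (∫ x in Ioi (0:ℝ), ((derivative P).eval x)^2 * W x)
      ≤ K * ((n:ℝ)^2 * BPP) := by
    rw [hsplit, hKdef]
    have hnn : (n:ℝ) ≤ (n:ℝ)^2 := by nlinarith [hn1']
    have hn2 : (n:ℝ) * BPP ≤ (n:ℝ)^2 * BPP := mul_le_mul_of_nonneg_right hnn hBPP0
    nlinarith [htail, hedge]
  -- take square roots
  have hL2P' : L2w (Set.Ici 0) W (derivative P) =
      Real.sqrt (∫ x in Ioi (0:ℝ), ((derivative P).eval x)^2 * W x) := by
    unfold L2w
    rw [hIci]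
  have hL2P : L2w (Set.Ici 0) W P = Real.sqrt BPP := by
    unfold L2w
    rw [hIci, hBeq]
  rw [hL2P', hL2P]
  calc Real.sqrt (∫ x in Ioi (0:ℝ), ((derivative P).eval x)^2 * W x)
      ≤ Real.sqrt (K * ((n:ℝ)^2 * BPP)) := Real.sqrt_le_sqrt hmain
    _ = Real.sqrt K * ((n:ℝ) * Real.sqrt BPP) := by
        rw [Real.sqrt_mul hKpos.le, Real.sqrt_mul (by positivity), Real.sqrt_sq (by positivity)]
    _ = Real.sqrt K * (n:ℝ) * Real.sqrt BPP := by ring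
end

section
/- Let w be a nonnegative measurable weight on a set A ⊆ ℝ, let n ∈ ℕ, and let C > 0 be a constant such that ‖P'‖_{L²(A,w)} ≤ C · ‖P‖_{L²(A,w)} for every polynomial P ∈ P_n. Then for every k ∈ ℕ, all λ₁, …, λ_k ≥ 0, and every P ∈ P_n, ‖P'‖_{W^{k,2}(A; w,λ₁w,…,λ_kw)} ≤ C · ‖P‖_{W^{k,2}(A; w,λ₁w,…,λ_kw)}. -/
open MeasureTheory Polynomial

lemma L2w_nonneg (A : Set ℝ) (w : ℝ → ℝ) (P : Polynomial ℝ) : 0 ≤ L2w A w P :=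
  Real.sqrt_nonneg _

lemma natDegree_iter_deriv_le (P : Polynomial ℝ) (n j : ℕ) (hP : P.natDegree ≤ n) :
    (derivative^[j] P).natDegree ≤ n := by
  induction j with
  | zero => simpa using hP
  | succ j ih =>
      rw [Function.iterate_succ_apply']
      exact le_trans (natDegree_derivative_le _) (le_trans (Nat.sub_le _ _) ih)

/-- If a Markov inequality `‖P'‖_{L²(A,w)} ≤ C ‖P‖_{L²(A,w)}` holds on `P_n`, then the same
inequality holds for the weighted Sobolev norm `W^{k,2}(A; w, λ₁w, …, λ_k w)`. -/
theorem markov_extends_to_sobolev (A : Set ℝ) (w : ℝ → ℝ) (hwmeas : Measurable w)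
    (hw : ∀ x ∈ A, 0 ≤ w x) (n : ℕ) (C : ℝ) (hC : 0 < C)
    (h : ∀ P : Polynomial ℝ, P.natDegree ≤ n → L2w A w (derivative P) ≤ C * L2w A w P) :
    ∀ (k : ℕ) (lam : ℕ → ℝ), (∀ j ∈ Finset.Icc 1 k, 0 ≤ lam j) →
      ∀ P : Polynomial ℝ, P.natDegree ≤ n →
        sobNorm A w k lam (derivative P) ≤ C * sobNorm A w k lam P := by
  intro k lam hlam P hP
  have key : ∀ Q : Polynomial ℝ, Q.natDegree ≤ n →
      (L2w A w (derivative Q)) ^ 2 ≤ C ^ 2 * (L2w A w Q) ^ 2 := by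
    intro Q hQ
    have h1 := h Q hQ
    have h2 : (L2w A w (derivative Q)) ^ 2 ≤ (C * L2w A w Q) ^ 2 :=
      pow_le_pow_left₀ (L2w_nonneg A w _) h1 2
    calc (L2w A w (derivative Q)) ^ 2 ≤ (C * L2w A w Q) ^ 2 := h2
      _ = C ^ 2 * (L2w A w Q) ^ 2 := by ring
  have hsum : (L2w A w (derivative P)) ^ 2 +
      ∑ j ∈ Finset.Icc 1 k, lam j * (L2w A w (derivative^[j] (derivative P))) ^ 2 ≤
      C ^ 2 * ((L2w A w P) ^ 2 +
        ∑ j ∈ Finset.Icc 1 k, lam j * (L2w A w (derivative^[j] P)) ^ 2) := by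
    rw [mul_add, Finset.mul_sum]
    apply add_le_add (key P hP)
    apply Finset.sum_le_sum
    intro j hj
    have : derivative^[j] (derivative P) = derivative (derivative^[j] P) := by
      rw [← Function.iterate_succ_apply, Function.iterate_succ_apply']
    rw [this]
    calc lam j * (L2w A w (derivative (derivative^[j] P))) ^ 2
        ≤ lam j * (C ^ 2 * (L2w A w (derivative^[j] P)) ^ 2) :=
          mul_le_mul_of_nonneg_left (key _ (natDegree_iter_deriv_le P n j hP)) (hlam j hj)
      _ = C ^ 2 * (lam j * (L2w A w (derivative^[j] P)) ^ 2) := by ring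
  unfold sobNorm
  calc Real.sqrt ((L2w A w (derivative P)) ^ 2 +
        ∑ j ∈ Finset.Icc 1 k, lam j * (L2w A w (derivative^[j] (derivative P))) ^ 2)
      ≤ Real.sqrt (C ^ 2 * ((L2w A w P) ^ 2 +
        ∑ j ∈ Finset.Icc 1 k, lam j * (L2w A w (derivative^[j] P)) ^ 2)) :=
        Real.sqrt_le_sqrt hsum
    _ = C * Real.sqrt ((L2w A w P) ^ 2 +
        ∑ j ∈ Finset.Icc 1 k, lam j * (L2w A w (derivative^[j] P)) ^ 2) := by
        rw [Real.sqrt_mul (sq_nonneg C), Real.sqrt_sq hC.le]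
end

section
/- There exists a constant C_α > 0, depending only on α, such that for every n ∈ ℕ, every k ∈ ℕ, all λ₁, …, λ_k ≥ 0, and every polynomial P ∈ P_n, ‖P'‖_{W^{k,2}([0,∞); w,λ₁w,…,λ_kw)} ≤ C_α · n · ‖P‖_{W^{k,2}([0,∞); w,λ₁w,…,λ_kw)}, where w(x) = x^α e^{−x} on [0,∞) and α > −1. -/
open MeasureTheory Polynomial

section LaguerreMarkovAux
open Set Finset

noncomputable def Gam (β : ℝ) (k : ℕ) : ℝ := Real.Gamma (k + β + 1)

noncomputable def Jint (β : ℝ) (R : Polynomial ℝ) : ℝ :=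
  ∫ x in Set.Ioi (0:ℝ), R.eval x * x ^ β * Real.exp (-x)

variable {β : ℝ}

lemma Gam_succ (hβ : -1 < β) (k : ℕ) : Gam β (k+1) = ((k:ℝ) + β + 1) * Gam β k := by
  have h : ((k:ℝ) + β + 1) ≠ 0 := by
    have : (0:ℝ) ≤ k := Nat.cast_nonneg k; intro h'; linarith [h'.ge]
  have := Real.Gamma_add_one h
  rw [Gam, Gam, show ((k:ℕ)+1 : ℕ) + β + 1 = ((k:ℝ) + β + 1) + 1 by push_cast; ring, this]

lemma Gam_pos (hβ : -1 < β) (k : ℕ) : 0 < Gam β k :=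
  Real.Gamma_pos_of_pos (by have : (0:ℝ) ≤ k := Nat.cast_nonneg k; linarith)

lemma moment_eq : ∀ x ∈ Ioi (0:ℝ), ∀ k : ℕ,
    Real.exp (-x) * x ^ ((k:ℝ) + β + 1 - 1) = x ^ k * x ^ β * Real.exp (-x) := by
  intro x hx k
  have hx : (0:ℝ) < x := hx
  rw [show (k:ℝ) + β + 1 - 1 = (k:ℝ) + β by ring, Real.rpow_add hx, Real.rpow_natCast]
  ring

lemma integrable_moment (hβ : -1 < β) (k : ℕ) :
    IntegrableOn (fun x : ℝ => x ^ k * x ^ β * Real.exp (-x)) (Ioi 0) := by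
  have h : (0:ℝ) < k + β + 1 := by have : (0:ℝ) ≤ k := Nat.cast_nonneg k; linarith
  exact (Real.GammaIntegral_convergent h).congr_fun
    (fun x hx => moment_eq x hx k) measurableSet_Ioi

lemma integral_moment (hβ : -1 < β) (k : ℕ) :
    ∫ x in Ioi (0:ℝ), x ^ k * x ^ β * Real.exp (-x) = Gam β k := by
  have h : (0:ℝ) < k + β + 1 := by have : (0:ℝ) ≤ k := Nat.cast_nonneg k; linarith
  rw [Gam, Real.Gamma_eq_integral h]
  exact (setIntegral_congr_fun measurableSet_Ioi (fun x hx => moment_eq x hx k)).symm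

lemma integrable_J (hβ : -1 < β) (R : Polynomial ℝ) :
    IntegrableOn (fun x : ℝ => R.eval x * x ^ β * Real.exp (-x)) (Ioi 0) := by
  have : ∀ x ∈ Ioi (0:ℝ), R.eval x * x ^ β * Real.exp (-x)
      = ∑ k ∈ Finset.range (R.natDegree + 1),
          R.coeff k * (x ^ k * x ^ β * Real.exp (-x)) := by
    intro x hx
    rw [eval_eq_sum_range' (Nat.lt_succ_self _), Finset.sum_mul, Finset.sum_mul]
    exact Finset.sum_congr rfl fun k _ => by ring
  exact IntegrableOn.congr_fun
    (integrable_finset_sum _ fun k _ => ((integrable_moment hβ k).const_mul _))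
    (fun x hx => (this x hx).symm) measurableSet_Ioi

lemma Jint_eq_sum (hβ : -1 < β) {R : Polynomial ℝ} {N : ℕ} (hN : R.natDegree < N) :
    Jint β R = ∑ k ∈ Finset.range N, R.coeff k * Gam β k := by
  have h1 : ∀ x ∈ Ioi (0:ℝ), R.eval x * x ^ β * Real.exp (-x)
      = ∑ k ∈ Finset.range N, R.coeff k * (x ^ k * x ^ β * Real.exp (-x)) := by
    intro x hx
    rw [eval_eq_sum_range' hN, Finset.sum_mul, Finset.sum_mul]
    exact Finset.sum_congr rfl fun k _ => by ring
  rw [Jint, setIntegral_congr_fun measurableSet_Ioi h1,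
    integral_finset_sum _ fun k _ => ((integrable_moment hβ k).const_mul _)]
  exact Finset.sum_congr rfl fun k _ => by
    rw [MeasureTheory.integral_const_mul, integral_moment hβ k]

lemma Gam_shift (β : ℝ) (k : ℕ) : Gam (β+1) k = Gam β (k+1) := by
  rw [Gam, Gam]
  congr 1
  push_cast
  ring

lemma Jint_sum (hβ : -1 < β) {ι : Type*} (s : Finset ι) (f : ι → Polynomial ℝ) :
    Jint β (∑ i ∈ s, f i) = ∑ i ∈ s, Jint β (f i) := by
  have h1 : ∀ x ∈ Ioi (0:ℝ), (∑ i ∈ s, f i).eval x * x ^ β * Real.exp (-x)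
      = ∑ i ∈ s, (f i).eval x * x ^ β * Real.exp (-x) := by
    intro x hx
    rw [eval_finset_sum, Finset.sum_mul, Finset.sum_mul]
  rw [Jint, setIntegral_congr_fun measurableSet_Ioi h1,
    integral_finset_sum _ fun i _ => integrable_J hβ (f i)]
  rfl

lemma Jint_smul (hβ : -1 < β) (c : ℝ) (R : Polynomial ℝ) :
    Jint β (c • R) = c * Jint β R := by
  have h1 : ∀ x ∈ Ioi (0:ℝ), (c • R).eval x * x ^ β * Real.exp (-x)
      = c * (R.eval x * x ^ β * Real.exp (-x)) := by
    intro x hx; rw [eval_smul]; simp [smul_eq_mul]; ring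
  rw [Jint, setIntegral_congr_fun measurableSet_Ioi h1, integral_const_mul]
  rfl

lemma Jint_nonneg (hβ : -1 < β) (f : Polynomial ℝ) : 0 ≤ Jint β (f * f) := by
  refine setIntegral_nonneg measurableSet_Ioi fun x hx => ?_
  have hx : (0:ℝ) < x := hx
  rw [eval_mul]
  exact mul_nonneg (mul_nonneg (mul_self_nonneg _) (Real.rpow_nonneg hx.le β))
    (Real.exp_pos _).le

lemma posQuad (hβ : -1 < β) (f g : Polynomial ℝ) :
    0 ≤ Jint β (f * f) + (2 * Jint (β+1) (f * g) + Jint (β+2) (g * g)) := by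
  have hβ1 : -1 < β + 1 := by linarith
  have hβ2 : -1 < β + 2 := by linarith
  have hA := integrable_J hβ (f*f)
  have hB := (integrable_J hβ1 (f*g)).const_mul 2
  have hC := integrable_J hβ2 (g*g)
  have hBC : Integrable (fun x : ℝ => 2 * ((f*g).eval x * x^(β+1) * Real.exp (-x))
      + (g*g).eval x * x^(β+2) * Real.exp (-x)) (volume.restrict (Ioi 0)) := hB.add hC
  have E : Jint β (f*f) + (2 * Jint (β+1) (f*g) + Jint (β+2) (g*g))
      = ∫ x in Ioi (0:ℝ), ((f*f).eval x * x ^ β * Real.exp (-x)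
        + (2 * ((f*g).eval x * x^(β+1) * Real.exp (-x))
          + (g*g).eval x * x^(β+2) * Real.exp (-x))) := by
    rw [integral_add hA hBC, integral_add hB hC, integral_const_mul]
    rfl
  rw [E]
  refine setIntegral_nonneg measurableSet_Ioi fun x hx => ?_
  have hx : (0:ℝ) < x := hx
  have e1 : x ^ (β/2) * x ^ (β/2) = x ^ β := by
    rw [← Real.rpow_add hx]; congr 1; ring
  have e2 : x ^ (β/2) * x ^ (β/2+1) = x ^ (β+1) := by
    rw [← Real.rpow_add hx]; congr 1; ring
  have e3 : x ^ (β/2+1) * x ^ (β/2+1) = x ^ (β+2) := by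
    rw [← Real.rpow_add hx]; congr 1; ring
  have key : f.eval x * g.eval x * x^(β+1)
      = (f.eval x * x^(β/2)) * (g.eval x * x^(β/2+1)) := by
    rw [← e2]; ring
  have : (f*f).eval x * x ^ β * Real.exp (-x)
      + (2 * ((f*g).eval x * x^(β+1) * Real.exp (-x))
        + (g*g).eval x * x^(β+2) * Real.exp (-x))
      = (f.eval x * x^(β/2) + g.eval x * x^(β/2+1))^2 * Real.exp (-x) := by
    rw [eval_mul, eval_mul, eval_mul, ← e1, ← e3]
    rw [show (f.eval x * g.eval x) * x^(β+1) * Real.exp (-x)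
      = ((f.eval x * x^(β/2)) * (g.eval x * x^(β/2+1))) * Real.exp (-x) by rw [← key]]
    ring
  rw [this]
  positivity

lemma Jshift (hβ : -1 < β) (R : Polynomial ℝ) : Jint (β+1) R = Jint β (X * R) := by
  have hβ1 : -1 < β + 1 := by linarith
  have hN : R.natDegree < R.natDegree + 1 := Nat.lt_succ_self _
  have hNX : (X * R).natDegree < R.natDegree + 2 := by
    calc (X * R).natDegree ≤ X.natDegree + R.natDegree := natDegree_mul_le
    _ < R.natDegree + 2 := by rw [natDegree_X]; omega
  rw [Jint_eq_sum hβ1 hN, Jint_eq_sum hβ hNX]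
  conv_rhs => rw [Finset.sum_range_succ']
  simp only [coeff_X_mul, mul_coeff_zero, coeff_X_zero, zero_mul, add_zero]
  exact Finset.sum_congr rfl fun k _ => by rw [Gam_shift]

lemma JIBP (hβ : -1 < β) (hβ0 : 0 < β) (R : Polynomial ℝ) :
    Jint β (derivative R) = Jint β R - β * Jint (β-1) R := by
  have hβ' : -1 < β - 1 := by linarith
  set N := R.natDegree + 1 with hNdef
  have hN : R.natDegree < N := Nat.lt_succ_self _
  have hND : (derivative R).natDegree < N := by
    calc (derivative R).natDegree ≤ R.natDegree - 1 := natDegree_derivative_le R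
    _ < N := by omega
  have hG : ∀ k : ℕ, Gam β k = Gam (β-1) (k+1) := by
    intro k; rw [← Gam_shift (β-1) k]; norm_num
  have hG2 : ∀ k : ℕ, Gam β k - β * Gam (β-1) k = (k:ℝ) * Gam (β-1) k := by
    intro k
    rw [hG k, Gam_succ hβ' k]; ring
  rw [Jint_eq_sum hβ hND, Jint_eq_sum hβ hN, Jint_eq_sum hβ' hN, Finset.mul_sum,
    ← Finset.sum_sub_distrib]
  have step1 : ∀ k ∈ Finset.range N, (derivative R).coeff k * Gam β k
      = R.coeff (k+1) * ((k:ℝ)+1) * Gam (β-1) (k+1) := by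
    intro k _; rw [coeff_derivative, hG k]
  rw [Finset.sum_congr rfl step1]
  have step2 : ∀ k ∈ Finset.range N,
      R.coeff k * Gam β k - β * (R.coeff k * Gam (β-1) k)
      = R.coeff k * (k:ℝ) * Gam (β-1) k := by
    intro k _
    linear_combination (R.coeff k) * hG2 k
  rw [Finset.sum_congr rfl step2]
  have top : R.coeff N * (N:ℝ) * Gam (β-1) N = 0 := by
    rw [coeff_eq_zero_of_natDegree_lt hN]; ring
  calc ∑ k ∈ Finset.range N, R.coeff (k+1) * ((k:ℝ)+1) * Gam (β-1) (k+1)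
      = ∑ j ∈ Finset.range (N+1), R.coeff j * (j:ℝ) * Gam (β-1) j := by
        conv_rhs => rw [Finset.sum_range_succ'
          (fun j => R.coeff j * (j:ℝ) * Gam (β-1) j) N]
        push_cast
        norm_num
    _ = ∑ j ∈ Finset.range N, R.coeff j * (j:ℝ) * Gam (β-1) j := by
        rw [Finset.sum_range_succ, top, add_zero]
lemma Jint_add (hβ : -1 < β) (A B : Polynomial ℝ) :
    Jint β (A + B) = Jint β A + Jint β B := by
  have := Jint_sum hβ (Finset.range 2) (fun i => if i = 0 then A else B)
  simpa [Finset.sum_range_succ] using this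

lemma Jint_sub (hβ : -1 < β) (A B : Polynomial ℝ) :
    Jint β (A - B) = Jint β A - Jint β B := by
  have h : A - B = A + (-1 : ℝ) • B := by
    rw [neg_one_smul]; ring
  rw [h, Jint_add hβ, Jint_smul hβ]; ring

noncomputable def Lop (β : ℝ) (P : Polynomial ℝ) : Polynomial ℝ :=
  X * derivative P - X * derivative (derivative P) - (β+1) • derivative P

lemma key1 (hβ : -1 < β) (P Q : Polynomial ℝ) :
    Jint (β+1) (derivative P * derivative Q) = Jint β (Lop β P * Q) := by
  have hβ1 : -1 < β + 1 := by linarith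
  have hβ0 : 0 < β + 1 := by linarith
  have hd : derivative P * derivative Q
      = derivative (derivative P * Q) - derivative (derivative P) * Q := by
    rw [derivative_mul]; ring
  have hIBP := JIBP hβ1 hβ0 (derivative P * Q)
  rw [hd, Jint_sub hβ1, hIBP]
  have hsh1 := Jshift hβ (derivative P * Q)
  have hsh2 := Jshift hβ (derivative (derivative P) * Q)
  rw [hsh1, hsh2]
  have hexp : Lop β P * Q = X * (derivative P * Q) - X * (derivative (derivative P) * Q)
      - (β+1) • (derivative P * Q) := by
    rw [Lop, sub_mul, sub_mul, smul_mul_assoc, mul_assoc, mul_assoc]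
  rw [hexp, Jint_sub hβ, Jint_sub hβ, Jint_smul hβ]
  have : (β + 1 - 1) = β := by ring
  rw [this]
  ring
noncomputable def dcoef (β : ℝ) (m : ℕ) : ℕ → ℝ
  | 0 => 1
  | (j+1) => dcoef β m j * (-(((m:ℝ) - j)) * (((m:ℝ) - j) + β) / ((j:ℝ)+1))

noncomputable def qpoly (β : ℝ) (m : ℕ) : Polynomial ℝ :=
  ∑ j ∈ Finset.range (m+1), Polynomial.C (dcoef β m j) * X^(m - j)

lemma qpoly_coeff (β : ℝ) (m k : ℕ) :
    (qpoly β m).coeff k = if k ≤ m then dcoef β m (m - k) else 0 := by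
  rw [qpoly, finset_sum_coeff]
  simp only [coeff_C_mul, coeff_X_pow]
  split
  · next h =>
    rw [Finset.sum_eq_single (m - k)]
    · rw [if_pos (by omega)]; ring
    · intro j hj hne
      rw [Finset.mem_range] at hj
      rw [if_neg (by omega)]; ring
    · intro h'; exact absurd (Finset.mem_range.mpr (by omega)) h'
  · next h =>
    refine Finset.sum_eq_zero fun j hj => ?_
    rw [Finset.mem_range] at hj
    rw [if_neg (by omega)]; ring

lemma Lop_coeff (β : ℝ) (P : Polynomial ℝ) (k : ℕ) :
    (Lop β P).coeff k
      = (k:ℝ) * P.coeff k - ((k:ℝ)+1)*((k:ℝ)+β+1)*P.coeff (k+1) := by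
  rw [Lop]
  simp only [coeff_sub, coeff_smul, smul_eq_mul]
  cases k with
  | zero =>
    simp only [mul_coeff_zero, coeff_X_zero, coeff_derivative, zero_mul, Nat.cast_zero]
    push_cast; ring
  | succ n =>
    rw [coeff_X_mul, coeff_X_mul, coeff_derivative, coeff_derivative, coeff_derivative]
    push_cast; ring

lemma dcoef_zero (β : ℝ) (m : ℕ) : dcoef β m 0 = 1 := rfl

lemma eigen (β : ℝ) (m : ℕ) : Lop β (qpoly β m) = (m:ℝ) • qpoly β m := by
  ext k
  rw [Lop_coeff, coeff_smul, smul_eq_mul, qpoly_coeff, qpoly_coeff]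
  rcases lt_trichotomy k m with hk | hk | hk
  · rw [if_pos hk.le, if_pos (by omega)]
    have hj : m - k = (m - k - 1) + 1 := by omega
    have hc : ((m - k - 1 : ℕ) : ℝ) = (m:ℝ) - k - 1 := by
      have h1 : (m - k - 1 : ℕ) = m - (k+1) := by omega
      rw [h1, Nat.cast_sub (by omega)]; push_cast; ring
    have hkk : m - (k+1) = m - k - 1 := by omega
    rw [hkk, hj, dcoef, hc]
    have hne : (m:ℝ) - (k:ℝ) ≠ 0 := by
      have : (k:ℝ) < m := by exact_mod_cast hk
      intro h; linarith
    rw [Nat.add_sub_cancel, show (m:ℝ) - k - 1 + 1 = (m:ℝ) - k by ring]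
    field_simp
    ring
  · subst hk
    rw [if_pos le_rfl, if_neg (by omega), Nat.sub_self, dcoef_zero]
    ring
  · rw [if_neg (by omega), if_neg (by omega)]
    ring

lemma qrepr (β : ℝ) : ∀ n (P : Polynomial ℝ), P.natDegree ≤ n →
    ∃ c : ℕ → ℝ, P = ∑ m ∈ Finset.range (n+1), c m • qpoly β m := by
  intro n
  induction n with
  | zero =>
    intro P hP
    refine ⟨fun _ => P.coeff 0, ?_⟩
    have hq0 : qpoly β 0 = Polynomial.C 1 := by
      ext k
      rw [qpoly_coeff, coeff_C]
      rcases Nat.eq_zero_or_pos k with hk | hk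
      · subst hk; simp [dcoef_zero]
      · rw [if_neg (by omega), if_neg (by omega)]
    rw [Finset.sum_range_one, hq0, eq_C_of_natDegree_le_zero hP]
    simp [Polynomial.smul_eq_C_mul]
  | succ n ih =>
    intro P hP
    set a := P.coeff (n+1) with ha
    have hq : (qpoly β (n+1)).coeff (n+1) = 1 := by
      rw [qpoly_coeff, if_pos le_rfl, Nat.sub_self, dcoef_zero]
    have hdeg : (P - a • qpoly β (n+1)).natDegree ≤ n := by
      rw [natDegree_le_iff_coeff_eq_zero]
      intro N hN
      rw [coeff_sub, coeff_smul, smul_eq_mul]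
      rcases eq_or_lt_of_le (Nat.succ_le_of_lt hN) with hN1 | hN1
      · rw [← hN1, hq, ← ha]; ring
      · rw [coeff_eq_zero_of_natDegree_lt (lt_of_le_of_lt hP hN1), qpoly_coeff,
          if_neg (by omega)]
        ring
    obtain ⟨c, hc⟩ := ih (P - a • qpoly β (n+1)) hdeg
    refine ⟨fun m => if m = n+1 then a else c m, ?_⟩
    rw [Finset.sum_range_succ]
    have hcongr : ∀ m ∈ Finset.range (n+1),
        (if m = n+1 then a else c m) • qpoly β m = c m • qpoly β m := by
      intro m hm
      rw [Finset.mem_range] at hm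
      rw [if_neg (by omega)]
    rw [Finset.sum_congr rfl hcongr, ← hc]
    simp only [if_pos rfl]
    exact (sub_add_cancel P (a • qpoly β (n+1))).symm

lemma eig_pair (hβ : -1 < β) (m l : ℕ) :
    Jint (β+1) (derivative (qpoly β m) * derivative (qpoly β l))
      = (m:ℝ) * Jint β (qpoly β m * qpoly β l) := by
  rw [key1 hβ, eigen, smul_mul_assoc, Jint_smul hβ]

lemma orth (hβ : -1 < β) {m l : ℕ} (hml : m ≠ l) :
    Jint β (qpoly β m * qpoly β l) = 0 := by
  have h1 := eig_pair hβ m l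
  have h2 := eig_pair hβ l m
  rw [mul_comm (qpoly β l) (qpoly β m),
    mul_comm (derivative (qpoly β l)) (derivative (qpoly β m))] at h2
  have hml' : (m:ℝ) ≠ (l:ℝ) := by exact_mod_cast hml
  have : ((m:ℝ) - l) * Jint β (qpoly β m * qpoly β l) = 0 := by
    rw [sub_mul, ← h1, ← h2]; ring
  rcases mul_eq_zero.mp this with h | h
  · exact absurd (by linarith [sub_eq_zero.mp h] : (m:ℝ) = l) hml'
  · exact h

lemma expand_prod (hβ : -1 < β) (n : ℕ) (c : ℕ → ℝ) (f : ℕ → Polynomial ℝ)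
    (h : ∀ m l, m ≠ l → Jint β (f m * f l) = 0) :
    Jint β ((∑ m ∈ Finset.range (n+1), c m • f m) * (∑ m ∈ Finset.range (n+1), c m • f m))
      = ∑ m ∈ Finset.range (n+1), c m ^ 2 * Jint β (f m * f m) := by
  rw [Finset.sum_mul_sum, Jint_sum hβ]
  have inner : ∀ m ∈ Finset.range (n+1),
      Jint β (∑ l ∈ Finset.range (n+1), (c m • f m) * (c l • f l))
        = c m ^ 2 * Jint β (f m * f m) := by
    intro m hm
    rw [Jint_sum hβ]
    rw [Finset.sum_eq_single m]
    · rw [smul_mul_assoc, mul_smul_comm, Jint_smul hβ, Jint_smul hβ]; ring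
    · intro l _ hlm
      rw [smul_mul_assoc, mul_smul_comm, Jint_smul hβ, Jint_smul hβ, h m l (Ne.symm hlm)]
      ring
    · intro hmm; exact absurd hm hmm
  rw [Finset.sum_congr rfl inner]

lemma step1 (hβ : -1 < β) (n : ℕ) (P : Polynomial ℝ) (hP : P.natDegree ≤ n) :
    Jint (β+1) (derivative P * derivative P) ≤ (n:ℝ) * Jint β (P * P) := by
  obtain ⟨c, hc⟩ := qrepr β n P hP
  have horth : ∀ m l, m ≠ l → Jint β (qpoly β m * qpoly β l) = 0 := fun m l h => orth hβ h
  have hip : Jint β (P * P)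
      = ∑ m ∈ Finset.range (n+1), c m ^ 2 * Jint β (qpoly β m * qpoly β m) := by
    rw [hc]; exact expand_prod hβ n c _ horth
  have hβ1 : -1 < β + 1 := by linarith
  have horth' : ∀ m l, m ≠ l →
      Jint (β+1) (derivative (qpoly β m) * derivative (qpoly β l)) = 0 := by
    intro m l h
    rw [eig_pair hβ m l, horth m l h]; ring
  have hBf : Jint (β+1) (derivative P * derivative P)
      = ∑ m ∈ Finset.range (n+1),
          c m ^ 2 * Jint (β+1) (derivative (qpoly β m) * derivative (qpoly β m)) := by
    rw [hc, derivative_sum]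
    have : ∀ m ∈ Finset.range (n+1),
        derivative (c m • qpoly β m) = c m • derivative (qpoly β m) := by
      intro m _; rw [derivative_smul]
    rw [Finset.sum_congr rfl this]
    exact expand_prod hβ1 n c _ horth'
  rw [hBf, hip, Finset.mul_sum]
  refine Finset.sum_le_sum fun m hm => ?_
  rw [Finset.mem_range] at hm
  rw [eig_pair hβ m m]
  have h1 : 0 ≤ Jint β (qpoly β m * qpoly β m) := Jint_nonneg hβ _
  have h2 : (m:ℝ) ≤ n := by exact_mod_cast Nat.lt_succ_iff.mp hm
  have h3 : 0 ≤ c m ^ 2 := sq_nonneg _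
  calc c m ^ 2 * ((m:ℝ) * Jint β (qpoly β m * qpoly β m))
      ≤ c m ^ 2 * ((n:ℝ) * Jint β (qpoly β m * qpoly β m)) := by
        apply mul_le_mul_of_nonneg_left _ h3
        exact mul_le_mul_of_nonneg_right h2 h1
    _ = (n:ℝ) * (c m ^ 2 * Jint β (qpoly β m * qpoly β m)) := by ring
lemma smul_mul_smul_poly (c d : ℝ) (A B : Polynomial ℝ) :
    (c • A) * (d • B) = (c * d) • (A * B) := by
  rw [smul_mul_assoc, mul_smul_comm, smul_smul]

variable {α : ℝ}

lemma lemma2 (hα : -1 < α) (n : ℕ) (u : Polynomial ℝ) (hu : u.natDegree ≤ n) :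
    Jint α (u * u) ≤ (2/(α+1) + 4*(n:ℝ)/(α+1)^2) * Jint (α+1) (u * u) := by
  have hα1 : -1 < α + 1 := by linarith
  have hα0 : 0 < α + 1 := by linarith
  set A := Jint α (u * u) with hA
  set B := Jint (α+1) (u * u) with hB
  set E := Jint (α+2) (derivative u * derivative u) with hE
  have hD : B - (α+1) * A = 2 * Jint (α+1) (u * derivative u) := by
    have h1 := JIBP hα1 hα0 (u * u)
    have h2 : derivative (u * u) = derivative u * u + u * derivative u := derivative_mul
    have h3 : (α + 1 - 1) = α := by ring
    rw [h2, Jint_add hα1, h3] at h1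
    rw [mul_comm (derivative u) u] at h1
    rw [← hA, ← hB] at h1
    linarith [h1]
  set c := Real.sqrt ((α+1)/2) with hc
  have hc2 : c * c = (α+1)/2 := Real.mul_self_sqrt (by linarith)
  have hcne : c ≠ 0 := by
    intro h
    rw [h] at hc2
    simp at hc2
    linarith
  have hpq := posQuad hα (c • u) (c⁻¹ • derivative u)
  rw [smul_mul_smul_poly, smul_mul_smul_poly, smul_mul_smul_poly,
    Jint_smul hα, Jint_smul hα1, Jint_smul (by linarith : (-1:ℝ) < α + 2),
    mul_inv_cancel₀ hcne, one_mul] at hpq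
  have hcinv : c⁻¹ * c⁻¹ = 2/(α+1) := by
    field_simp
    rw [sq, hc2]
    ring
  rw [hc2, hcinv, ← hA, ← hE] at hpq
  -- hpq : 0 ≤ (α+1)/2 * A + (2 * Jint (α+1) (u * derivative u) + 2/(α+1) * E)
  have hEB : E ≤ (n:ℝ) * B := by
    have := step1 hα1 n u hu
    have h3 : α + 1 + 1 = α + 2 := by ring
    rw [h3] at this
    exact this
  have hBnn : 0 ≤ B := Jint_nonneg hα1 u
  have key : (α+1)/2 * A ≤ B + 2/(α+1) * E := by linarith
  have key2 : (α+1)/2 * A ≤ B + 2/(α+1) * ((n:ℝ) * B) := by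
    have : 2/(α+1) * E ≤ 2/(α+1) * ((n:ℝ) * B) :=
      mul_le_mul_of_nonneg_left hEB (div_nonneg (by norm_num) (by linarith))
    linarith
  have hrw : A = 2/(α+1) * ((α+1)/2 * A) := by
    field_simp
  have h4 : A ≤ 2/(α+1) * (B + 2/(α+1) * ((n:ℝ) * B)) := by
    rw [hrw]
    exact mul_le_mul_of_nonneg_left key2 (div_nonneg (by norm_num) hα0.le)
  have h5 : 2/(α+1) * (B + 2/(α+1) * ((n:ℝ) * B))
      = (2/(α+1) + 4*(n:ℝ)/(α+1)^2) * B := by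
    field_simp
    ring
  linarith [h4, h5.le, h5.ge]

lemma L2Markov (hα : -1 < α) (n : ℕ) (P : Polynomial ℝ) (hP : P.natDegree ≤ n) :
    Jint α (derivative P * derivative P)
      ≤ (2/(α+1) + 4/(α+1)^2) * (n:ℝ)^2 * Jint α (P * P) := by
  have hα1 : -1 < α + 1 := by linarith
  rcases Nat.eq_zero_or_pos n with hn | hn
  · subst hn
    have hP0 : P.natDegree ≤ 0 := hP
    have hder : derivative P = 0 := by
      rw [eq_C_of_natDegree_le_zero hP0]; simp
    have hz : Jint α (derivative P * derivative P) = 0 := by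
      rw [hder, mul_zero]
      have := Jint_smul hα 0 (0 : Polynomial ℝ)
      simpa using this
    rw [hz]
    norm_num
  · have hu : (derivative P).natDegree ≤ n :=
      le_trans (natDegree_derivative_le P) (le_trans (Nat.sub_le _ _) hP)
    have h1 := lemma2 hα n (derivative P) hu
    have h2 := step1 hα n P hP
    have hBnnP : 0 ≤ Jint α (P * P) := Jint_nonneg hα P
    have hα0 : (0:ℝ) < α + 1 := by linarith
    have hfac : 0 ≤ 2/(α+1) + 4*(n:ℝ)/(α+1)^2 :=
      add_nonneg (div_nonneg (by norm_num) hα0.le)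
        (div_nonneg (by positivity) (sq_nonneg _))
    have h3 : Jint α (derivative P * derivative P)
        ≤ (2/(α+1) + 4*(n:ℝ)/(α+1)^2) * ((n:ℝ) * Jint α (P * P)) :=
      le_trans h1 (mul_le_mul_of_nonneg_left h2 hfac)
    have hn1 : (1:ℝ) ≤ n := by exact_mod_cast hn
    calc Jint α (derivative P * derivative P)
        ≤ (2/(α+1) + 4*(n:ℝ)/(α+1)^2) * ((n:ℝ) * Jint α (P*P)) := h3
      _ = 2/(α+1) * ((n:ℝ) * Jint α (P*P))
          + 4/(α+1)^2 * ((n:ℝ)^2 * Jint α (P*P)) := by ring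
      _ ≤ 2/(α+1) * ((n:ℝ)^2 * Jint α (P*P))
          + 4/(α+1)^2 * ((n:ℝ)^2 * Jint α (P*P)) := by
            have hnsq : (n:ℝ) * Jint α (P*P) ≤ (n:ℝ)^2 * Jint α (P*P) :=
              mul_le_mul_of_nonneg_right (by nlinarith) hBnnP
            have := mul_le_mul_of_nonneg_left hnsq
              (div_nonneg (by norm_num : (0:ℝ) ≤ 2) hα0.le)
            linarith
      _ = (2/(α+1) + 4/(α+1)^2) * (n:ℝ)^2 * Jint α (P*P) := by ring
lemma L2w_eq (α : ℝ) (Q : Polynomial ℝ) :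
    L2w (Set.Ici 0) (fun x => x ^ α * Real.exp (-x)) Q
      = Real.sqrt (Jint α (Q * Q)) := by
  rw [L2w, Jint]
  congr 1
  rw [MeasureTheory.integral_Ici_eq_integral_Ioi]
  refine setIntegral_congr_fun measurableSet_Ioi fun x _ => ?_
  rw [eval_mul]; ring

lemma natDegree_iter_le (P : Polynomial ℝ) (j : ℕ) :
    (derivative^[j] P).natDegree ≤ P.natDegree := by
  induction j with
  | zero => simp
  | succ m ih =>
    rw [Function.iterate_succ_apply']
    exact le_trans (le_trans (natDegree_derivative_le _) (Nat.sub_le _ _)) ih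

/-- Markov-type inequality in the Laguerre–Sobolev case: `w(x) = x^α e^{-x}` on `[0,∞)`, `α > -1`. -/
theorem laguerre_sobolev_markov (α : ℝ) (hα : -1 < α) :
    ∃ C : ℝ, 0 < C ∧ ∀ (n k : ℕ) (lam : ℕ → ℝ), (∀ j ∈ Finset.Icc 1 k, 0 ≤ lam j) →
      ∀ P : Polynomial ℝ, P.natDegree ≤ n →
        sobNorm (Set.Ici 0) (fun x => x ^ α * Real.exp (-x)) k lam (derivative P) ≤
          C * n * sobNorm (Set.Ici 0) (fun x => x ^ α * Real.exp (-x)) k lam P := by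
  have hα0 : (0:ℝ) < α + 1 := by linarith
  set K : ℝ := 2/(α+1) + 4/(α+1)^2 with hK
  have hKpos : 0 < K := by
    have h1 : 0 < 2/(α+1) := by positivity
    have h2 : 0 < 4/(α+1)^2 := by positivity
    rw [hK]
    exact add_pos h1 h2
  refine ⟨Real.sqrt K, Real.sqrt_pos.mpr hKpos, ?_⟩
  intro n k lam hlam P hP
  set w : ℝ → ℝ := fun x => x ^ α * Real.exp (-x) with hw
  -- basic L² Markov in L2w form
  have markov : ∀ Q : Polynomial ℝ, Q.natDegree ≤ n →
      L2w (Set.Ici 0) w (derivative Q) ≤ Real.sqrt K * n * L2w (Set.Ici 0) w Q := by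
    intro Q hQ
    rw [hw, L2w_eq, L2w_eq]
    have h := L2Markov hα n Q hQ
    calc Real.sqrt (Jint α (derivative Q * derivative Q))
        ≤ Real.sqrt (K * (n:ℝ)^2 * Jint α (Q * Q)) := Real.sqrt_le_sqrt h
      _ = Real.sqrt K * n * Real.sqrt (Jint α (Q * Q)) := by
          rw [Real.sqrt_mul (by positivity : (0:ℝ) ≤ K * (n:ℝ)^2),
            Real.sqrt_mul hKpos.le, Real.sqrt_sq (Nat.cast_nonneg n)]
  -- compare squared Sobolev norms
  have hCn : (0:ℝ) ≤ Real.sqrt K * n := by positivity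
  have sq_term : ∀ Q : Polynomial ℝ, Q.natDegree ≤ n →
      (L2w (Set.Ici 0) w (derivative Q))^2
        ≤ (Real.sqrt K * n)^2 * (L2w (Set.Ici 0) w Q)^2 := by
    intro Q hQ
    have h1 := markov Q hQ
    have h2 : (0:ℝ) ≤ L2w (Set.Ici 0) w (derivative Q) := Real.sqrt_nonneg _
    calc (L2w (Set.Ici 0) w (derivative Q))^2
        ≤ (Real.sqrt K * n * L2w (Set.Ici 0) w Q)^2 := by
          exact pow_le_pow_left₀ h2 h1 2
      _ = (Real.sqrt K * n)^2 * (L2w (Set.Ici 0) w Q)^2 := by ring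
  rw [sobNorm, sobNorm]
  have hsum : (L2w (Set.Ici 0) w (derivative P))^2
      + ∑ j ∈ Finset.Icc 1 k, lam j * (L2w (Set.Ici 0) w (derivative^[j] (derivative P)))^2
      ≤ (Real.sqrt K * n)^2 * ((L2w (Set.Ici 0) w P)^2
        + ∑ j ∈ Finset.Icc 1 k, lam j * (L2w (Set.Ici 0) w (derivative^[j] P))^2) := by
    rw [mul_add, Finset.mul_sum]
    refine add_le_add (sq_term P hP) (Finset.sum_le_sum fun j hj => ?_)
    have hcomm : derivative^[j] (derivative P) = derivative (derivative^[j] P) := by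
      rw [← Function.iterate_succ_apply, Function.iterate_succ_apply']
    rw [hcomm]
    have := sq_term (derivative^[j] P) (le_trans (natDegree_iter_le P j) hP)
    calc lam j * (L2w (Set.Ici 0) w (derivative (derivative^[j] P)))^2
        ≤ lam j * ((Real.sqrt K * n)^2 * (L2w (Set.Ici 0) w (derivative^[j] P))^2) :=
          mul_le_mul_of_nonneg_left this (hlam j hj)
      _ = (Real.sqrt K * n)^2 * (lam j * (L2w (Set.Ici 0) w (derivative^[j] P))^2) := by
          ring
  calc Real.sqrt ((L2w (Set.Ici 0) w (derivative P))^2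
        + ∑ j ∈ Finset.Icc 1 k, lam j * (L2w (Set.Ici 0) w (derivative^[j] (derivative P)))^2)
      ≤ Real.sqrt ((Real.sqrt K * n)^2 * ((L2w (Set.Ici 0) w P)^2
        + ∑ j ∈ Finset.Icc 1 k, lam j * (L2w (Set.Ici 0) w (derivative^[j] P))^2)) :=
        Real.sqrt_le_sqrt hsum
    _ = Real.sqrt K * n * Real.sqrt ((L2w (Set.Ici 0) w P)^2
        + ∑ j ∈ Finset.Icc 1 k, lam j * (L2w (Set.Ici 0) w (derivative^[j] P))^2) := by
        rw [Real.sqrt_mul (sq_nonneg _), Real.sqrt_sq hCn]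
end LaguerreMarkovAux
end

section
/- For every α ≥ 0, every n ∈ ℕ with n ≥ 1, every k ∈ ℕ, all λ₁, …, λ_k ≥ 0, and every polynomial P ∈ P_n, ‖P'‖_{W^{k,2}(ℝ; w,λ₁w,…,λ_kw)} ≤ √(2n) · ‖P‖_{W^{k,2}(ℝ; w,λ₁w,…,λ_kw)}, where w(x) = |x|^α e^{−x²} on ℝ. -/
open MeasureTheory Polynomial

section Aux
open Set

noncomputable def Mw (γ : ℝ) (q : ℝ[X]) : ℝ :=
  ∫ t in Ioi (0:ℝ), q.eval t * (t ^ γ * Real.exp (-t))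

lemma integrableMw {γ : ℝ} (hγ : -1 < γ) (q : ℝ[X]) :
    IntegrableOn (fun t => q.eval t * (t ^ γ * Real.exp (-t))) (Ioi (0:ℝ)) := by
  induction q using Polynomial.induction_on' with
  | add p q hp hq =>
      simp only [eval_add, add_mul]; exact hp.add hq
  | monomial n a =>
      have h : IntegrableOn (fun x : ℝ => a * (Real.exp (-x) * x ^ (γ + n + 1 - 1))) (Ioi 0) :=
        (Real.GammaIntegral_convergent (s := γ + n + 1) (by have := Nat.cast_nonneg (α := ℝ) n; linarith)).const_mul a
      refine h.congr_fun (fun t ht => ?_) measurableSet_Ioi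
      have ht' : (0:ℝ) < t := ht
      rw [eval_monomial]
      rw [show γ + ↑n + 1 - 1 = γ + (n:ℝ) by ring]; beta_reduce; rw [Real.rpow_add ht', Real.rpow_natCast]
      ring

lemma Mw_monomial {γ : ℝ} (hγ : -1 < γ) (n : ℕ) (a : ℝ) :
    Mw γ (monomial n a) = a * Real.Gamma (γ + n + 1) := by
  rw [Mw, Real.Gamma_eq_integral (by have := Nat.cast_nonneg (α := ℝ) n; linarith), ← integral_const_mul]
  refine setIntegral_congr_fun measurableSet_Ioi (fun t ht => ?_)
  have ht' : (0:ℝ) < t := ht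
  rw [eval_monomial, show γ + ↑n + 1 - 1 = γ + (n:ℝ) by ring, Real.rpow_add ht',
    Real.rpow_natCast]
  ring

lemma Mw_add {γ : ℝ} (hγ : -1 < γ) (p q : ℝ[X]) : Mw γ (p + q) = Mw γ p + Mw γ q := by
  rw [Mw, Mw, Mw, ← integral_add (integrableMw hγ p) (integrableMw hγ q)]
  simp [add_mul]

lemma Mw_C_mul {γ : ℝ} (c : ℝ) (q : ℝ[X]) : Mw γ (C c * q) = c * Mw γ q := by
  rw [Mw, Mw, ← integral_const_mul]
  simp [mul_assoc]

lemma Mw_zero {γ : ℝ} : Mw γ 0 = 0 := by simp [Mw]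

lemma Mw_smul {γ : ℝ} (c : ℝ) (q : ℝ[X]) : Mw γ (c • q) = c * Mw γ q := by
  rw [Polynomial.smul_eq_C_mul, Mw_C_mul]

lemma Mw_sub {γ : ℝ} (hγ : -1 < γ) (p q : ℝ[X]) : Mw γ (p - q) = Mw γ p - Mw γ q := by
  have h := Mw_add hγ (p - q) q
  simp at h; linarith

lemma Mw_sum {γ : ℝ} (hγ : -1 < γ) {ι : Type*} (s : Finset ι) (f : ι → ℝ[X]) :
    Mw γ (∑ i ∈ s, f i) = ∑ i ∈ s, Mw γ (f i) := by
  classical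
  induction s using Finset.induction_on with
  | empty => simp [Mw_zero]
  | insert _ _ h ih => rw [Finset.sum_insert h, Mw_add hγ, ih, Finset.sum_insert h]

lemma Mw_sq_nonneg (γ : ℝ) (q : ℝ[X]) : 0 ≤ Mw γ (q ^ 2) := by
  refine setIntegral_nonneg measurableSet_Ioi (fun t ht => ?_)
  have ht' : (0:ℝ) < t := ht
  rw [eval_pow]
  positivity

lemma Mw_mul_X {γ : ℝ} (q : ℝ[X]) : Mw γ (X * q) = Mw (γ + 1) q := by
  rw [Mw, Mw]
  refine setIntegral_congr_fun measurableSet_Ioi (fun t ht => ?_)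
  have ht' : (0:ℝ) < t := ht
  rw [eval_mul, eval_X, Real.rpow_add ht', Real.rpow_one]
  ring

/-- integration by parts identity -/
lemma Mw_ibp {γ : ℝ} (hγ : -1 < γ) (r : ℝ[X]) :
    Mw γ (X * derivative r) = Mw γ (X * r) - (γ + 1) * Mw γ r := by
  induction r using Polynomial.induction_on' with
  | add p q hp hq =>
      rw [derivative_add, mul_add, Mw_add hγ, hp, hq, mul_add, Mw_add hγ, Mw_add hγ p q]
      ring
  | monomial k a =>
      have hX : (X : ℝ[X]) * monomial k a = monomial (k+1) a := by
        rw [X_mul_monomial]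
      cases k with
      | zero =>
          simp only [derivative_monomial, Nat.cast_zero, mul_zero, monomial_zero_right,
            Nat.zero_sub, mul_zero, Mw_zero, hX, Mw_monomial hγ, Nat.cast_zero, Nat.cast_one]
          rw [show γ + ((0+1:ℕ):ℝ) + 1 = (γ+1)+1 by push_cast; ring,
            Real.Gamma_add_one (by linarith)]
          push_cast
          ring
      | succ k =>
          have hd : derivative (monomial (k+1) (a:ℝ)) = monomial k (a * (k+1)) := by
            rw [derivative_monomial]; congr 1 <;> push_cast <;> ring_nf
          rw [hd, X_mul_monomial, hX, Mw_monomial hγ, Mw_monomial hγ, Mw_monomial hγ]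
          have h2 : (0:ℝ) < γ + (k:ℝ) + 2 := by have := Nat.cast_nonneg (α := ℝ) k; linarith
          have hg : Real.Gamma (γ + (k:ℝ) + 2 + 1) = (γ + (k:ℝ) + 2) * Real.Gamma (γ + (k:ℝ) + 2) :=
            Real.Gamma_add_one (ne_of_gt h2)
          push_cast
          rw [show γ + ((k:ℝ) + 1 + 1) + 1 = γ + (k:ℝ) + 2 + 1 by ring, hg,
            show γ + ((k:ℝ) + 1) + 1 = γ + (k:ℝ) + 2 by ring]
          ring

noncomputable def opA (γ : ℝ) (q : ℝ[X]) : ℝ[X] :=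
  X * derivative q - X * derivative (derivative q) - C (γ + 1) * derivative q

/-- the Dirichlet-form identity -/
lemma Mw_form {γ : ℝ} (hγ : -1 < γ) (u v : ℝ[X]) :
    Mw γ (X * derivative u * derivative v) = Mw γ (opA γ u * v) := by
  have h := Mw_ibp hγ (derivative u * v)
  rw [derivative_mul, mul_add, Mw_add hγ] at h
  have e1 : X * (derivative (derivative u) * v) = X * derivative (derivative u) * v := by ring
  have e2 : X * (derivative u * derivative v) = X * derivative u * derivative v := by ring
  rw [e1, e2] at h
  have e3 : opA γ u * v = X * derivative u * v - X * derivative (derivative u) * v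
      - C (γ + 1) * (derivative u * v) := by rw [opA]; ring
  rw [e3, Mw_sub hγ, Mw_sub hγ, Mw_C_mul]
  have e4 : X * (derivative u * v) = X * derivative u * v := by ring
  rw [e4] at h
  linarith

lemma coeff_X_mul_derivative (q : ℝ[X]) (k : ℕ) :
    (X * derivative q).coeff k = q.coeff k * k := by
  cases k with
  | zero => simp
  | succ k => rw [coeff_X_mul, coeff_derivative]; push_cast; ring

lemma coeff_opA (γ : ℝ) (q : ℝ[X]) (k : ℕ) :
    (opA γ q).coeff k =
      q.coeff k * k - q.coeff (k+1) * (k+1) * k - (γ+1) * (q.coeff (k+1) * (k+1)) := by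
  rw [opA, coeff_sub, coeff_sub, coeff_X_mul_derivative, coeff_X_mul_derivative,
    coeff_derivative, coeff_C_mul, coeff_derivative]

lemma natDegree_opA_le (γ : ℝ) (q : ℝ[X]) : (opA γ q).natDegree ≤ q.natDegree := by
  refine natDegree_le_iff_coeff_eq_zero.2 (fun N hN => ?_)
  rw [coeff_opA, coeff_eq_zero_of_natDegree_lt hN,
    coeff_eq_zero_of_natDegree_lt (by omega)]
  ring

/-- eigen-coefficients of the degree-(m+1) Laguerre-type polynomial -/
noncomputable def lagC (γ : ℝ) (m : ℕ) : ℕ → ℝ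
  | 0 => 1
  | (k+1) => ((k:ℝ) - (m+1)) * lagC γ m k / ((k+1) * ((k:ℝ) + 1 + γ))

noncomputable def lagP (γ : ℝ) (m : ℕ) : ℝ[X] :=
  ∑ d ∈ Finset.range (m+2), monomial d (lagC γ m d)

lemma lagC_ne_zero {γ : ℝ} (hγ : -1 < γ) (m : ℕ) : ∀ k, k ≤ m + 1 → lagC γ m k ≠ 0 := by
  intro k
  induction k with
  | zero => intro _; simp [lagC]
  | succ k ih =>
      intro hk
      have h1 : lagC γ m k ≠ 0 := ih (by omega)
      have h2 : ((k:ℝ) - (m+1)) ≠ 0 := by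
        have : (k:ℝ) < (m:ℝ) + 1 := by exact_mod_cast (by omega : k < m + 1)
        linarith
      have h3 : ((k:ℝ)+1) * ((k:ℝ) + 1 + γ) ≠ 0 := by
        have h4 : (0:ℝ) ≤ k := Nat.cast_nonneg k
        have h5 : (0:ℝ) < (k:ℝ) + 1 + γ := by linarith
        have h6 : (0:ℝ) < (k:ℝ) + 1 := by linarith
        exact ne_of_gt (mul_pos h6 h5)
      rw [lagC]
      exact div_ne_zero (mul_ne_zero h2 h1) (by push_cast; exact h3)

lemma lagP_coeff (γ : ℝ) (m : ℕ) (d : ℕ) :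
    (lagP γ m).coeff d = if d < m + 2 then lagC γ m d else 0 := by
  rw [lagP, finset_sum_coeff]
  simp only [coeff_monomial]
  rw [Finset.sum_ite_eq' (Finset.range (m+2)) d (fun b => lagC γ m b)]
  simp [Finset.mem_range]

lemma natDegree_lagP_le (γ : ℝ) (m : ℕ) : (lagP γ m).natDegree ≤ m + 1 := by
  refine natDegree_le_iff_coeff_eq_zero.2 (fun N hN => ?_)
  rw [lagP_coeff, if_neg (by omega)]

lemma lagP_eigen {γ : ℝ} (hγ : -1 < γ) (m : ℕ) :
    opA γ (lagP γ m) = ((m:ℝ) + 1) • lagP γ m := by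
  ext k
  rw [coeff_opA, coeff_smul, lagP_coeff, lagP_coeff, smul_eq_mul]
  by_cases hk : k < m + 2
  · rw [if_pos hk]
    by_cases hk1 : k + 1 < m + 2
    · rw [if_pos hk1]
      have hden : ((k:ℝ)+1) * ((k:ℝ) + 1 + γ) ≠ 0 := by
        have h4 : (0:ℝ) ≤ k := Nat.cast_nonneg k
        have h5 : (0:ℝ) < (k:ℝ) + 1 + γ := by linarith
        exact ne_of_gt (mul_pos (by linarith) h5)
      have hc : lagC γ m (k+1) = ((k:ℝ) - (m+1)) * lagC γ m k / (((k:ℝ)+1) * ((k:ℝ) + 1 + γ)) := by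
        rw [lagC]
      rw [hc]
      have hne1 : (k:ℝ) + 1 + γ ≠ 0 := ne_of_gt (by have := Nat.cast_nonneg (α := ℝ) k; linarith)
      have hne2 : (k:ℝ) + 1 ≠ 0 := ne_of_gt (by have := Nat.cast_nonneg (α := ℝ) k; linarith)
      push_cast
      field_simp
      ring
    · -- k+1 = m+2, i.e. k = m+1
      rw [if_neg hk1]
      have : k = m + 1 := by omega
      subst this
      push_cast
      ring_nf
  · rw [if_neg hk, if_neg (by omega)]
    ring

lemma lagP_orth_X_pow {γ : ℝ} (hγ : -1 < γ) (m : ℕ) :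
    ∀ j, j ≤ m → Mw γ (lagP γ m * X ^ j) = 0 := by
  have key : ∀ j : ℕ, Mw γ (opA γ (X ^ j) * lagP γ m) = ((m:ℝ) + 1) * Mw γ (lagP γ m * X ^ j) := by
    intro j
    have h1 := Mw_form hγ (X ^ j : ℝ[X]) (lagP γ m)
    have h2 := Mw_form hγ (lagP γ m) (X ^ j : ℝ[X])
    rw [show (X : ℝ[X]) * derivative (X ^ j) * derivative (lagP γ m)
        = X * derivative (lagP γ m) * derivative (X ^ j) by ring, h2,
      lagP_eigen hγ, smul_mul_assoc, Mw_smul] at h1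
    rw [← h1]
  intro j
  induction j with
  | zero =>
      intro _
      have h := key 0
      have h0 : opA γ ((X : ℝ[X]) ^ 0) = 0 := by
        simp [opA]
      rw [h0, zero_mul, Mw_zero] at h
      have hm : ((m:ℝ) + 1) ≠ 0 := by positivity
      rcases mul_eq_zero.1 h.symm with h' | h'
      · exact absurd h' hm
      · exact h'
  | succ j ih =>
      intro hj
      have h := key (j+1)
      have hderiv : derivative ((X:ℝ[X]) ^ (j+1)) = (j+1) • X ^ j := by
        rw [derivative_X_pow]; simp
      have hA : opA γ ((X:ℝ[X]) ^ (j+1)) =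
          ((j:ℝ)+1) • (X ^ (j+1)) - (((j:ℝ)+1) * ((j:ℝ) + γ + 1)) • X ^ j := by
        ext k
        rw [coeff_opA, coeff_sub]
        simp only [coeff_smul, smul_eq_mul, coeff_X_pow]
        by_cases h1 : k = j + 1
        · subst h1
          rw [if_pos rfl, if_neg (by omega), if_neg (by omega)]
          push_cast; ring
        · by_cases h2 : k = j
          · subst h2
            rw [if_neg h1, if_pos rfl, if_pos rfl]
            push_cast; ring
          · rw [if_neg h1, if_neg (by omega), if_neg h2]
            ring
      rw [hA, sub_mul, smul_mul_assoc, smul_mul_assoc, Mw_sub hγ, Mw_smul, Mw_smul,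
        show (X:ℝ[X]) ^ (j+1) * lagP γ m = lagP γ m * X ^ (j+1) by ring,
        show (X:ℝ[X]) ^ j * lagP γ m = lagP γ m * X ^ j by ring,
        ih (by omega), mul_zero, sub_zero] at h
      have hne : ((m:ℝ) + 1) - ((j:ℝ)+1) ≠ 0 := by
        have : (j:ℝ) < (m:ℝ) := by exact_mod_cast (by omega : j < m)
        exact ne_of_gt (by linarith)
      have hz : (((m:ℝ) + 1) - ((j:ℝ)+1)) * Mw γ (lagP γ m * X ^ (j+1)) = 0 := by
        rw [sub_mul]; linarith
      rcases mul_eq_zero.1 hz with h' | h'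
      · exact absurd h' hne
      · exact h'

lemma lagP_orth {γ : ℝ} (hγ : -1 < γ) (m : ℕ) (q : ℝ[X]) (hq : q.natDegree ≤ m) :
    Mw γ (lagP γ m * q) = 0 := by
  have hrep : q = ∑ j ∈ Finset.range (m+1), monomial j (q.coeff j) := by
    have := q.as_sum_range' (m+1) (by omega)
    simpa using this
  rw [hrep, Finset.mul_sum, Mw_sum hγ]
  refine Finset.sum_eq_zero (fun j hj => ?_)
  rw [Finset.mem_range] at hj
  have : lagP γ m * monomial j (q.coeff j) = C (q.coeff j) * (lagP γ m * X ^ j) := by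
    rw [← C_mul_X_pow_eq_monomial]; ring
  rw [this, Mw_C_mul, lagP_orth_X_pow hγ m j (by omega), mul_zero]

/-- Main Laguerre-type Markov inequality at the level of the moment functional. -/
lemma laguerre_markov_s5 {γ : ℝ} (hγ : -1 < γ) :
    ∀ m : ℕ, ∀ u : ℝ[X], u.natDegree ≤ m →
      Mw γ (X * (derivative u) ^ 2) ≤ m * Mw γ (u ^ 2) := by
  intro m
  induction m with
  | zero =>
      intro u hu
      rw [Polynomial.eq_C_of_natDegree_le_zero hu]
      simp [Mw_zero]
  | succ m ih =>
      intro u hu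
      set p := lagP γ m with hp
      have hpc : p.coeff (m+1) = lagC γ m (m+1) := by rw [hp, lagP_coeff, if_pos (by omega)]
      have hpcne : p.coeff (m+1) ≠ 0 := by rw [hpc]; exact lagC_ne_zero hγ m (m+1) le_rfl
      set e := u.coeff (m+1) / p.coeff (m+1) with he
      set v := u - C e * p with hv
      have hvdeg : v.natDegree ≤ m := by
        refine natDegree_le_iff_coeff_eq_zero.2 (fun N hN => ?_)
        rw [hv, coeff_sub, coeff_C_mul]
        rcases Nat.lt_or_ge (m+1) N with hN2 | hN2
        · rw [coeff_eq_zero_of_natDegree_lt (lt_of_le_of_lt hu hN2),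
            coeff_eq_zero_of_natDegree_lt (lt_of_le_of_lt (natDegree_lagP_le γ m) hN2)]
          ring
        · have : N = m + 1 := by omega
          subst this
          rw [hpc] at hpcne ⊢
          rw [he, hpc, div_mul_cancel₀ _ hpcne, sub_self]
      have hudecomp : u = v + C e * p := by rw [hv]; ring
      -- cross terms vanish
      have horthv : Mw γ (p * v) = 0 := lagP_orth hγ m v hvdeg
      have horthAv : Mw γ (p * opA γ v) = 0 :=
        lagP_orth hγ m (opA γ v) (le_trans (natDegree_opA_le γ v) hvdeg)
      -- eigen step
      have heig : opA γ p = ((m:ℝ) + 1) • p := lagP_eigen hγ m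
      have hXpp : Mw γ (X * derivative p * derivative p) = ((m:ℝ)+1) * Mw γ (p ^ 2) := by
        rw [Mw_form hγ, heig, smul_mul_assoc, Mw_smul, ← sq]
      have hXvp : Mw γ (X * derivative v * derivative p) = 0 := by
        rw [Mw_form hγ, show opA γ v * p = p * opA γ v by ring, horthAv]
      -- expand u'^2
      have hder : derivative u = derivative v + C e * derivative p := by
        rw [hudecomp]; simp [derivative_add, derivative_C_mul]
      have hexp1 : X * (derivative u) ^ 2
          = X * (derivative v) ^ 2 + C (2*e) * (X * derivative v * derivative p)
            + C (e^2) * (X * derivative p * derivative p) := by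
        rw [hder]
        simp only [C_mul, C_pow, map_ofNat]
        ring
      have hexp2 : u ^ 2 = v ^ 2 + C (2*e) * (p * v) + C (e^2) * p ^ 2 := by
        rw [hudecomp]
        simp only [C_mul, C_pow, map_ofNat]
        ring
      have hMu : Mw γ (u ^ 2) = Mw γ (v ^ 2) + e^2 * Mw γ (p ^ 2) := by
        rw [hexp2, Mw_add hγ, Mw_add hγ, Mw_C_mul, Mw_C_mul, horthv]
        ring
      have hMu' : Mw γ (X * (derivative u) ^ 2)
          = Mw γ (X * (derivative v) ^ 2) + e^2 * (((m:ℝ)+1) * Mw γ (p ^ 2)) := by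
        rw [hexp1, Mw_add hγ, Mw_add hγ, Mw_C_mul, Mw_C_mul, hXvp, hXpp]
        ring
      have hih := ih v hvdeg
      have hv2 : 0 ≤ Mw γ (v ^ 2) := Mw_sq_nonneg γ v
      have hp2 : 0 ≤ Mw γ (p ^ 2) := Mw_sq_nonneg γ p
      rw [hMu, hMu']
      push_cast
      nlinarith [sq_nonneg e]

/-- weighted moment functional on the real line -/
noncomputable def Nw (α : ℝ) (q : ℝ[X]) : ℝ :=
  ∫ x : ℝ, q.eval x * (|x| ^ α * Real.exp (-x^2))

lemma integrable_abs_rpow_mul_exp_neg_sq {s : ℝ} (hs : -1 < s) :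
    Integrable fun x : ℝ => |x| ^ s * Real.exp (-x^2) := by
  have h1 : IntegrableOn (fun x : ℝ => |x| ^ s * Real.exp (-x^2)) (Ioi 0) := by
    refine ((integrableOn_rpow_mul_exp_neg_mul_sq one_pos hs)).congr_fun (fun x hx => ?_)
      measurableSet_Ioi
    rw [abs_of_pos hx]; simp only [neg_one_mul]
  rw [← integrableOn_univ, ← Iic_union_Ioi (a := (0:ℝ)), integrableOn_union]
  refine ⟨?_, h1⟩
  rw [← Measure.map_neg_eq_self (volume : Measure ℝ)]
  have m : MeasurableEmbedding fun x : ℝ => -x := (Homeomorph.neg ℝ).measurableEmbedding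
  rw [m.integrableOn_map_iff]
  simp only [Function.comp_def, abs_neg, neg_sq, neg_preimage, neg_Iic, neg_zero]
  exact (integrableOn_Ici_iff_integrableOn_Ioi).mpr h1

lemma integrableNw {α : ℝ} (hα : -1 < α) (q : ℝ[X]) :
    Integrable fun x : ℝ => q.eval x * (|x| ^ α * Real.exp (-x^2)) := by
  induction q using Polynomial.induction_on' with
  | add p q hp hq => simp only [eval_add, add_mul]; exact hp.add hq
  | monomial n a =>
      have h := (integrable_abs_rpow_mul_exp_neg_sq (s := α + n) (by
        have := Nat.cast_nonneg (α := ℝ) n; linarith)).const_mul |a|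
      refine h.mono' ?_ ?_
      · apply Measurable.aestronglyMeasurable
        exact ((Polynomial.continuous _).measurable).mul
          ((measurable_abs.pow measurable_const).mul
            ((Real.continuous_exp.measurable).comp ((continuous_pow 2).neg.measurable)))
      · have h0 : ∀ᵐ x : ℝ, x ≠ 0 := by
          rw [ae_iff]
          simpa using Real.volume_singleton
        filter_upwards [h0] with x hx
        have hxpos : 0 < |x| := abs_pos.mpr hx
        have hw : abs (|x| ^ α * Real.exp (-x^2)) = |x| ^ α * Real.exp (-x^2) :=
          abs_of_nonneg (by positivity)
        rw [Real.norm_eq_abs, eval_monomial, abs_mul, hw, abs_mul, abs_pow,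
          Real.rpow_add hxpos, Real.rpow_natCast]
        exact le_of_eq (by ring)

lemma Nw_add {α : ℝ} (hα : -1 < α) (p q : ℝ[X]) : Nw α (p + q) = Nw α p + Nw α q := by
  rw [Nw, Nw, Nw, ← integral_add (integrableNw hα p) (integrableNw hα q)]
  simp [add_mul]

lemma Nw_sq_nonneg (α : ℝ) (q : ℝ[X]) : 0 ≤ Nw α (q ^ 2) := by
  refine integral_nonneg (fun x => ?_)
  rw [eval_pow]
  positivity

/-- odd part integrates to zero -/
lemma Nw_odd (α : ℝ) (q : ℝ[X]) : Nw α (X * expand ℝ 2 q) = 0 := by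
  have key : Nw α (X * expand ℝ 2 q) = - Nw α (X * expand ℝ 2 q) := by
    rw [Nw]
    nth_rewrite 1 [← integral_neg_eq_self]
    rw [← integral_neg]
    refine integral_congr_ae (Filter.Eventually.of_forall (fun x => ?_))
    show eval (-x) (X * expand ℝ 2 q) * (|(-x)| ^ α * Real.exp (-(-x) ^ 2))
      = -(eval x (X * expand ℝ 2 q) * (|x| ^ α * Real.exp (-x ^ 2)))
    simp only [eval_mul, eval_X, expand_eval, neg_sq, abs_neg]
    ring
  linarith

lemma Nw_monomial_even {α : ℝ} (hα : -1 < α) (d : ℕ) (a : ℝ) :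
    Nw α (monomial (2*d) a) = a * Real.Gamma ((α-1)/2 + d + 1) := by
  have hstep : Nw α (monomial (2*d) a)
      = ∫ x : ℝ, a * ((fun y : ℝ => y ^ (α + 2*d) * Real.exp (-y^2)) |x|) := by
    rw [Nw]
    refine integral_congr_ae ?_
    have h0 : ∀ᵐ x : ℝ, x ≠ 0 := by rw [ae_iff]; simpa using Real.volume_singleton
    filter_upwards [h0] with x hx
    have hxpos : 0 < |x| := abs_pos.mpr hx
    simp only [eval_monomial]
    rw [sq_abs, Real.rpow_add hxpos]
    have hxe : x ^ (2*d) = |x| ^ ((2*d : ℕ) : ℝ) := by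
      rw [Real.rpow_natCast, pow_abs, abs_of_nonneg (Even.pow_nonneg ⟨d, by omega⟩ x)]
    rw [hxe]
    push_cast
    ring
  rw [hstep, integral_const_mul,
    integral_comp_abs (f := fun y : ℝ => y ^ (α + 2*(d:ℝ)) * Real.exp (-y^2))]
  have hIoi : ∫ y in Ioi (0:ℝ), y ^ (α + 2*d) * Real.exp (-y^2)
      = (1/2) * Real.Gamma ((α + 2*d + 1)/2) := by
    rw [← integral_rpow_mul_exp_neg_rpow two_pos (by have := Nat.cast_nonneg (α := ℝ) d; push_cast; linarith)]
    refine setIntegral_congr_fun measurableSet_Ioi (fun y hy => ?_)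
    rw [show (y:ℝ) ^ (2:ℝ) = y ^ (2:ℕ) by rw [← Real.rpow_natCast y 2]; norm_num]
  rw [hIoi, show (α + 2*(d:ℝ) + 1)/2 = (α-1)/2 + d + 1 by ring]
  ring

lemma Nw_expand {α : ℝ} (hα : -1 < α) (q : ℝ[X]) :
    Nw α (expand ℝ 2 q) = Mw ((α-1)/2) q := by
  have hβ : -1 < (α-1)/2 := by linarith
  induction q using Polynomial.induction_on' with
  | add p q hp hq => rw [map_add, Nw_add hα, Mw_add hβ, hp, hq]
  | monomial k a =>
      rw [expand_monomial, show k * 2 = 2 * k by ring, Nw_monomial_even hα, Mw_monomial hβ]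


noncomputable def evenPart (P : ℝ[X]) : ℝ[X] :=
  ∑ d ∈ Finset.range (P.natDegree + 1), monomial d (P.coeff (2*d))

noncomputable def oddPart (P : ℝ[X]) : ℝ[X] :=
  ∑ d ∈ Finset.range (P.natDegree + 1), monomial d (P.coeff (2*d+1))

lemma coeff_evenPart (P : ℝ[X]) (d : ℕ) : (evenPart P).coeff d = P.coeff (2*d) := by
  rw [evenPart, finset_sum_coeff]
  simp only [coeff_monomial]
  rw [Finset.sum_ite_eq' (Finset.range (P.natDegree + 1)) d]
  by_cases h : d ∈ Finset.range (P.natDegree + 1)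
  · rw [if_pos h]
  · rw [if_neg h]
    rw [Finset.mem_range] at h
    exact (coeff_eq_zero_of_natDegree_lt (by omega)).symm

lemma coeff_oddPart (P : ℝ[X]) (d : ℕ) : (oddPart P).coeff d = P.coeff (2*d+1) := by
  rw [oddPart, finset_sum_coeff]
  simp only [coeff_monomial]
  rw [Finset.sum_ite_eq' (Finset.range (P.natDegree + 1)) d]
  by_cases h : d ∈ Finset.range (P.natDegree + 1)
  · rw [if_pos h]
  · rw [if_neg h]
    rw [Finset.mem_range] at h
    exact (coeff_eq_zero_of_natDegree_lt (by omega)).symm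

lemma split_even_odd (P : ℝ[X]) :
    P = expand ℝ 2 (evenPart P) + X * expand ℝ 2 (oddPart P) := by
  ext k
  rw [coeff_add, coeff_expand two_pos]
  rcases Nat.even_or_odd' k with ⟨d, hk | hk⟩
  · subst hk
    rw [if_pos ⟨d, by ring⟩, show (2*d)/2 = d by omega, coeff_evenPart]
    cases d with
    | zero =>
        simp only [Nat.mul_zero, mul_coeff_zero, coeff_X_zero, zero_mul, add_zero]
    | succ d =>
        rw [show 2*(d+1) = (2*d+1)+1 by ring, coeff_X_mul, coeff_expand two_pos]
        rw [if_neg (by omega)]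
        rw [show (2*d+1)+1 = 2*(d+1) by ring]
        ring
  · subst hk
    rw [if_neg (by omega), coeff_X_mul, coeff_expand two_pos, if_pos ⟨d, by ring⟩,
      show (2*d)/2 = d by omega, coeff_oddPart]
    ring

lemma natDegree_evenPart_le {P : ℝ[X]} {n : ℕ} (hP : P.natDegree ≤ n) :
    (evenPart P).natDegree ≤ n / 2 := by
  refine natDegree_le_iff_coeff_eq_zero.2 (fun N hN => ?_)
  rw [coeff_evenPart]
  exact coeff_eq_zero_of_natDegree_lt (by omega)

lemma natDegree_oddPart_le {P : ℝ[X]} {n : ℕ} (hn : 1 ≤ n) (hP : P.natDegree ≤ n) :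
    (oddPart P).natDegree ≤ (n-1) / 2 := by
  refine natDegree_le_iff_coeff_eq_zero.2 (fun N hN => ?_)
  rw [coeff_oddPart]
  exact coeff_eq_zero_of_natDegree_lt (by omega)

theorem Nw_markov {α : ℝ} (hα : 0 ≤ α) {n : ℕ} (hn : 1 ≤ n) (Q : ℝ[X])
    (hQ : Q.natDegree ≤ n) :
    Nw α ((derivative Q) ^ 2) ≤ 2 * n * Nw α (Q ^ 2) := by
  have hα' : -1 < α := by linarith
  set β := (α - 1) / 2 with hβdef
  have hβ : -1 < β := by rw [hβdef]; linarith
  have hβ1 : -1 < β + 1 := by linarith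
  set u := evenPart Q with hu
  set v := oddPart Q with hv
  have hsplit := split_even_odd Q
  -- polynomial identities
  have hQ2 : Q ^ 2 = expand ℝ 2 (u ^ 2 + X * v ^ 2) + X * expand ℝ 2 (2 * u * v) := by
    conv_lhs => rw [hsplit]
    simp only [map_add, map_mul, map_ofNat, map_pow, expand_X]
    ring
  have hQ'2 : (derivative Q) ^ 2
      = expand ℝ 2 (4 * (X * (derivative u) ^ 2) + (v + 2 * X * derivative v) ^ 2)
        + X * expand ℝ 2 (4 * derivative u * (v + 2 * X * derivative v)) := by
    conv_lhs => rw [hsplit]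
    rw [derivative_add, derivative_mul, derivative_X, derivative_expand, derivative_expand]
    simp only [map_add, map_mul, map_ofNat, map_pow, expand_X, one_mul]
    ring
  -- compute Nw of both sides
  have hNQ2 : Nw α (Q ^ 2) = Mw β (u ^ 2) + Mw β (X * v ^ 2) := by
    rw [hQ2, Nw_add hα', Nw_expand hα', Nw_odd, add_zero, ← hβdef, Mw_add hβ]
  have hNQ'2 : Nw α ((derivative Q) ^ 2)
      = 4 * Mw β (X * (derivative u) ^ 2) + Mw β ((v + 2 * X * derivative v) ^ 2) := by
    rw [hQ'2, Nw_add hα', Nw_expand hα', Nw_odd, add_zero, ← hβdef, Mw_add hβ,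
      show (4 : ℝ[X]) * (X * (derivative u) ^ 2) = C 4 * (X * (derivative u) ^ 2) by
        rw [map_ofNat], Mw_C_mul]
  -- even part estimate
  have hueven : 4 * (u.natDegree : ℝ) ≤ 2 * n := by
    have h1 : u.natDegree ≤ n / 2 := natDegree_evenPart_le hQ
    have h2 : 4 * u.natDegree ≤ 2 * n := by omega
    exact_mod_cast h2
  have heven : 4 * Mw β (X * (derivative u) ^ 2) ≤ 2 * n * Mw β (u ^ 2) := by
    have h := laguerre_markov_s5 hβ u.natDegree u le_rfl
    have h2 := Mw_sq_nonneg β u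
    nlinarith
  -- odd part estimate
  have hodd_poly : (v + 2 * X * derivative v) ^ 2
      = v ^ 2 + 2 * (X * derivative (v ^ 2)) + 4 * (X * (X * (derivative v) ^ 2)) := by
    rw [derivative_sq]
    simp only [map_ofNat]
    ring
  have hModd : Mw β ((v + 2 * X * derivative v) ^ 2)
      = Mw β (v ^ 2) + 2 * Mw β (X * derivative (v ^ 2))
        + 4 * Mw β (X * (X * (derivative v) ^ 2)) := by
    rw [hodd_poly, Mw_add hβ, Mw_add hβ,
      show (2 : ℝ[X]) * (X * derivative (v ^ 2)) = C 2 * (X * derivative (v ^ 2)) by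
        rw [map_ofNat],
      show (4 : ℝ[X]) * (X * (X * (derivative v) ^ 2)) = C 4 * (X * (X * (derivative v) ^ 2)) by
        rw [map_ofNat], Mw_C_mul, Mw_C_mul]
  have hibp : Mw β (X * derivative (v ^ 2)) = Mw β (X * v ^ 2) - (β + 1) * Mw β (v ^ 2) :=
    Mw_ibp hβ (v ^ 2)
  have hlag : Mw β (X * (X * (derivative v) ^ 2)) ≤ v.natDegree * Mw β (X * v ^ 2) := by
    rw [Mw_mul_X (q := X * (derivative v) ^ 2), Mw_mul_X (q := v ^ 2)]
    exact laguerre_markov_s5 hβ1 v.natDegree v le_rfl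
  have hvnn : 0 ≤ Mw β (X * v ^ 2) := by rw [Mw_mul_X]; exact Mw_sq_nonneg (β + 1) v
  have hvnn2 : 0 ≤ Mw β (v ^ 2) := Mw_sq_nonneg β v
  have hvodd : 4 * (v.natDegree : ℝ) + 2 ≤ 2 * n := by
    have h1 : v.natDegree ≤ (n-1) / 2 := natDegree_oddPart_le hn hQ
    have h2 : 4 * v.natDegree + 2 ≤ 2 * n := by omega
    exact_mod_cast h2
  have hbeta : 1 - 2 * (β + 1) = -α := by rw [hβdef]; ring
  have hodd : Mw β ((v + 2 * X * derivative v) ^ 2) ≤ 2 * n * Mw β (X * v ^ 2) := by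
    rw [hModd, hibp]
    nlinarith
  rw [hNQ2, hNQ'2]
  nlinarith

end Aux

/-- Markov-type inequality in the generalized Hermite–Sobolev case:
`w(x) = |x|^α e^{-x²}` on `ℝ`, `α ≥ 0`. -/
theorem generalized_hermite_sobolev_markov (α : ℝ) (hα : 0 ≤ α) (n : ℕ) (hn : 1 ≤ n)
    (k : ℕ) (lam : ℕ → ℝ) (hlam : ∀ j ∈ Finset.Icc 1 k, 0 ≤ lam j)
    (P : Polynomial ℝ) (hP : P.natDegree ≤ n) :
    sobNorm Set.univ (fun x => |x| ^ α * Real.exp (-x ^ 2)) k lam (derivative P) ≤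
      Real.sqrt (2 * n) *
        sobNorm Set.univ (fun x => |x| ^ α * Real.exp (-x ^ 2)) k lam P := by
  have hL2 : ∀ R : ℝ[X],
      (L2w Set.univ (fun x => |x| ^ α * Real.exp (-x ^ 2)) R) ^ 2 = Nw α (R ^ 2) := by
    intro R
    have hint : ∫ x in Set.univ, (R.eval x) ^ 2 * (|x| ^ α * Real.exp (-x ^ 2))
        = Nw α (R ^ 2) := by
      rw [setIntegral_univ, Nw]
      refine integral_congr_ae (Filter.Eventually.of_forall (fun x => ?_))
      simp only [eval_pow]
    rw [L2w, Real.sq_sqrt]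
    · exact hint
    · rw [hint]; exact Nw_sq_nonneg α _
  have hdeg : ∀ j : ℕ, (derivative^[j] P).natDegree ≤ n := by
    intro j
    induction j with
    | zero => simpa using hP
    | succ j ih =>
        rw [Function.iterate_succ_apply']
        exact le_trans (le_trans (natDegree_derivative_le _) (Nat.sub_le _ 1)) ih
  rw [sobNorm, sobNorm]
  have hsum : (L2w Set.univ (fun x => |x| ^ α * Real.exp (-x ^ 2)) (derivative P)) ^ 2 +
      ∑ j ∈ Finset.Icc 1 k, lam j *
        (L2w Set.univ (fun x => |x| ^ α * Real.exp (-x ^ 2)) (derivative^[j] (derivative P))) ^ 2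
      ≤ 2 * n * ((L2w Set.univ (fun x => |x| ^ α * Real.exp (-x ^ 2)) P) ^ 2 +
        ∑ j ∈ Finset.Icc 1 k, lam j *
          (L2w Set.univ (fun x => |x| ^ α * Real.exp (-x ^ 2)) (derivative^[j] P)) ^ 2) := by
    rw [mul_add, Finset.mul_sum]
    refine add_le_add ?_ (Finset.sum_le_sum (fun j hj => ?_))
    · rw [hL2, hL2]
      exact Nw_markov hα hn P hP
    · rw [hL2, hL2, ← Function.iterate_succ_apply, Function.iterate_succ_apply']
      calc lam j * Nw α ((derivative (derivative^[j] P)) ^ 2)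
          ≤ lam j * (2 * n * Nw α ((derivative^[j] P) ^ 2)) := by
            exact mul_le_mul_of_nonneg_left (Nw_markov hα hn _ (hdeg j)) (hlam j hj)
        _ = 2 * ↑n * (lam j * Nw α ((derivative^[j] P) ^ 2)) := by ring
  calc Real.sqrt _ ≤ Real.sqrt (2 * n * ((L2w Set.univ (fun x => |x| ^ α * Real.exp (-x ^ 2)) P) ^ 2 +
        ∑ j ∈ Finset.Icc 1 k, lam j *
          (L2w Set.univ (fun x => |x| ^ α * Real.exp (-x ^ 2)) (derivative^[j] P)) ^ 2)) :=
        Real.sqrt_le_sqrt hsum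
    _ = _ := by
        rw [Real.sqrt_mul (by positivity)]
end

section
/- Let a₁ < a₂ be real numbers and α, β > −1. Then there exists a constant C > 0, depending only on a₁, a₂, α, β (and not on n), such that for every n ∈ ℕ and every polynomial P ∈ P_n, ‖P'‖_{L²([a₁,a₂],w)} ≤ C · n² · ‖P‖_{L²([a₁,a₂],w)}, where w(x) = (a₂−x)^α (x−a₁)^β on [a₁,a₂]. -/
open MeasureTheory Polynomial Set

namespace JM


noncomputable def wt (a b α β : ℝ) (x : ℝ) : ℝ := (b - x) ^ α * (x - a) ^ β

lemma wt_nonneg {a b α β : ℝ} {x : ℝ} (hx : x ∈ Icc a b) : 0 ≤ wt a b α β x :=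
  mul_nonneg (Real.rpow_nonneg (by linarith [hx.2]) _) (Real.rpow_nonneg (by linarith [hx.1]) _)

lemma wt_contOn {a b α β : ℝ} {s : Set ℝ} (hs : ∀ x ∈ s, x - a ≠ 0 ∧ b - x ≠ 0) :
    ContinuousOn (wt a b α β) s := by
  apply ContinuousOn.mul
  · exact ContinuousOn.rpow_const ((continuous_const.sub continuous_id).continuousOn)
      (fun x hx => Or.inl (hs x hx).2)
  · exact ContinuousOn.rpow_const ((continuous_id.sub continuous_const).continuousOn)
      (fun x hx => Or.inl (hs x hx).1)

lemma integrableOn_mul_wt {a b α β : ℝ} (hab : a < b) (hα : -1 < α) (hβ : -1 < β)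
    {h : ℝ → ℝ} (hh : Continuous h) :
    IntegrableOn (fun x => h x * wt a b α β x) (Icc a b) := by
  obtain ⟨M, hM⟩ : ∃ M, ∀ x ∈ Icc a b, ‖h x‖ ≤ M :=
    IsCompact.exists_bound_of_continuousOn isCompact_Icc hh.continuousOn
  set m := (a + b) / 2 with hm
  have ham : a < m := by simp only [hm]; linarith
  have hmb : m < b := by simp only [hm]; linarith
  have half1 : IntegrableOn (fun x => h x * wt a b α β x) (Icc a m) := by
    have haesm : AEStronglyMeasurable (fun x => h x * wt a b α β x)
        (volume.restrict (Icc a m)) := by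
      rw [← Measure.restrict_congr_set Ioc_ae_eq_Icc]
      exact ContinuousOn.aestronglyMeasurable
        (hh.continuousOn.mul (wt_contOn (fun x hx => ⟨sub_ne_zero.2 (ne_of_gt hx.1),
          sub_ne_zero.2 (ne_of_gt (lt_of_le_of_lt hx.2 hmb))⟩))) measurableSet_Ioc
    obtain ⟨M2, hM2⟩ : ∃ M2, ∀ x ∈ Icc a m, ‖(b - x) ^ α‖ ≤ M2 := by
      apply IsCompact.exists_bound_of_continuousOn isCompact_Icc
      apply ContinuousOn.rpow_const ((continuous_const.sub continuous_id).continuousOn)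
      intro x hx
      refine Or.inl (sub_ne_zero.2 ?_)
      intro hbx
      simp only [id_eq] at hbx
      rw [← hbx] at hx
      exact absurd hx.2 (not_le.2 hmb)
    have base : IntegrableOn (fun x => (x - a) ^ β) (Icc a m) := by
      have h0 : IntervalIntegrable (fun x : ℝ => x ^ β) volume 0 (m - a) :=
        intervalIntegral.intervalIntegrable_rpow' hβ
      have h1 := h0.comp_sub_right a
      rw [zero_add, sub_add_cancel] at h1
      exact (h1.1).congr_set_ae Ioc_ae_eq_Icc.symm
    apply Integrable.mono' (base.const_mul (M * M2)) haesm
    rw [ae_restrict_iff' measurableSet_Icc]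
    filter_upwards with x hx
    have hxa : (0:ℝ) ≤ x - a := by linarith [hx.1]
    have hxab : x ∈ Icc a b := ⟨hx.1, by linarith [hx.2]⟩
    have h1 : ‖h x * wt a b α β x‖ = ‖h x‖ * ‖(b - x) ^ α‖ * ((x - a) ^ β) := by
      rw [wt, norm_mul, norm_mul, Real.norm_of_nonneg (Real.rpow_nonneg hxa β), mul_assoc]
    rw [h1]
    have e1 := hM x hxab
    have e2 := hM2 x hx
    have hrn : (0:ℝ) ≤ (x - a) ^ β := Real.rpow_nonneg hxa β
    have hn1 : (0:ℝ) ≤ ‖h x‖ := norm_nonneg _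
    have hn2 : (0:ℝ) ≤ ‖(b - x) ^ α‖ := norm_nonneg _
    exact mul_le_mul_of_nonneg_right (mul_le_mul e1 e2 hn2 (le_trans hn1 e1)) hrn
  have half2 : IntegrableOn (fun x => h x * wt a b α β x) (Icc m b) := by
    have haesm : AEStronglyMeasurable (fun x => h x * wt a b α β x)
        (volume.restrict (Icc m b)) := by
      rw [← Measure.restrict_congr_set Ico_ae_eq_Icc]
      exact ContinuousOn.aestronglyMeasurable
        (hh.continuousOn.mul (wt_contOn (fun x hx =>
          ⟨sub_ne_zero.2 (ne_of_gt (lt_of_lt_of_le ham hx.1)),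
           sub_ne_zero.2 (ne_of_gt hx.2)⟩))) measurableSet_Ico
    obtain ⟨M2, hM2⟩ : ∃ M2, ∀ x ∈ Icc m b, ‖(x - a) ^ β‖ ≤ M2 := by
      apply IsCompact.exists_bound_of_continuousOn isCompact_Icc
      apply ContinuousOn.rpow_const ((continuous_id.sub continuous_const).continuousOn)
      intro x hx
      refine Or.inl (sub_ne_zero.2 ?_)
      intro hbx
      simp only [id_eq] at hbx
      rw [hbx] at hx
      exact absurd hx.1 (not_le.2 ham)
    have base : IntegrableOn (fun x => (b - x) ^ α) (Icc m b) := by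
      have h0 : IntervalIntegrable (fun x : ℝ => x ^ α) volume 0 (b - m) :=
        intervalIntegral.intervalIntegrable_rpow' hα
      have h1 := h0.comp_sub_left b
      rw [sub_zero, sub_sub_cancel] at h1
      exact (h1.symm.1).congr_set_ae Ioc_ae_eq_Icc.symm
    apply Integrable.mono' (base.const_mul (M * M2)) haesm
    rw [ae_restrict_iff' measurableSet_Icc]
    filter_upwards with x hx
    have hxb : (0:ℝ) ≤ b - x := by linarith [hx.2]
    have hxab : x ∈ Icc a b := ⟨by linarith [hx.1], hx.2⟩
    have h1 : ‖h x * wt a b α β x‖ = ‖h x‖ * ‖(x - a) ^ β‖ * ((b - x) ^ α) := by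
      rw [wt, norm_mul, norm_mul, Real.norm_of_nonneg (Real.rpow_nonneg hxb α)]
      ring
    rw [h1]
    have e1 := hM x hxab
    have e2 := hM2 x hx
    have hrn : (0:ℝ) ≤ (b - x) ^ α := Real.rpow_nonneg hxb α
    have hn1 : (0:ℝ) ≤ ‖h x‖ := norm_nonneg _
    have hn2 : (0:ℝ) ≤ ‖(x - a) ^ β‖ := norm_nonneg _
    exact mul_le_mul_of_nonneg_right (mul_le_mul e1 e2 hn2 (le_trans hn1 e1)) hrn
  have hsub : Icc a b ⊆ Icc a m ∪ Icc m b := by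
    intro x hx
    rcases le_total x m with hc | hc
    · exact Or.inl ⟨hx.1, hc⟩
    · exact Or.inr ⟨hc, hx.2⟩
  exact (half1.union half2).mono_set hsub


noncomputable def φp (a b : ℝ) : ℝ[X] := (C b - X) * (X - C a)
noncomputable def ψp (a b α β : ℝ) : ℝ[X] := C (β+1) * (C b - X) - C (α+1) * (X - C a)
noncomputable def Lp (a b α β : ℝ) (P : ℝ[X]) : ℝ[X] :=
  φp a b * derivative (derivative P) + ψp a b α β * derivative P
noncomputable def lam (α β : ℝ) (k : ℕ) : ℝ := k * (k + α + β + 1)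


noncomputable def J (a b α β : ℝ) (p : ℝ[X]) : ℝ := ∫ x in Icc a b, p.eval x * wt a b α β x

variable {a b α β : ℝ}

lemma J_integrable (hab : a < b) (hα : -1 < α) (hβ : -1 < β) (p : ℝ[X]) :
    IntegrableOn (fun x => p.eval x * wt a b α β x) (Icc a b) :=
  integrableOn_mul_wt hab hα hβ p.continuous

lemma J_add (hab : a < b) (hα : -1 < α) (hβ : -1 < β) (p q : ℝ[X]) :
    J a b α β (p + q) = J a b α β p + J a b α β q := by
  unfold J
  rw [← integral_add (J_integrable hab hα hβ p) (J_integrable hab hα hβ q)]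
  apply setIntegral_congr_fun measurableSet_Icc
  intro x _
  simp [eval_add, add_mul]

lemma J_smul (c : ℝ) (p : ℝ[X]) : J a b α β (c • p) = c * J a b α β p := by
  unfold J
  rw [← smul_eq_mul, ← integral_smul]
  apply setIntegral_congr_fun measurableSet_Icc
  intro x _
  simp [mul_assoc]

lemma J_Cmul (c : ℝ) (p : ℝ[X]) : J a b α β (C c * p) = c * J a b α β p := by
  rw [← smul_eq_C_mul, J_smul]

lemma J_sq_nonneg (p : ℝ[X]) : 0 ≤ J a b α β (p * p) := by
  apply setIntegral_nonneg measurableSet_Icc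
  intro x hx
  exact mul_nonneg (by rw [eval_mul]; exact mul_self_nonneg _) (wt_nonneg hx)

lemma J_mono (hab : a < b) (hα : -1 < α) (hβ : -1 < β) {p q : ℝ[X]}
    (hpq : ∀ x ∈ Icc a b, p.eval x ≤ q.eval x) : J a b α β p ≤ J a b α β q :=
  setIntegral_mono_on (J_integrable hab hα hβ p) (J_integrable hab hα hβ q)
    measurableSet_Icc (fun x hx => mul_le_mul_of_nonneg_right (hpq x hx) (wt_nonneg hx))

lemma J_CS (hab : a < b) (hα : -1 < α) (hβ : -1 < β) (p q : ℝ[X]) :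
    (J a b α β (p * q)) ^ 2 ≤ J a b α β (p * p) * J a b α β (q * q) := by
  have key : ∀ t : ℝ, 0 ≤ J a b α β (p*p) * (t * t) + (2 * J a b α β (p*q)) * t
      + J a b α β (q*q) := by
    intro t
    have h0 : 0 ≤ J a b α β ((t • p + q) * (t • p + q)) := J_sq_nonneg _
    have hexp : (t • p + q) * (t • p + q)
        = (t * t) • (p * p) + ((2 * t) • (p * q) + q * q) := by
      simp only [smul_eq_C_mul, map_mul, map_ofNat]
      ring
    rw [hexp, J_add hab hα hβ, J_add hab hα hβ, J_smul, J_smul] at h0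
    linarith
  have hd := discrim_le_zero key
  rw [discrim] at hd
  nlinarith [hd]

lemma rpow_succ_aux {t : ℝ} (ht : 0 ≤ t) {γ : ℝ} (hγ : -1 < γ) : t ^ γ * t = t ^ (γ + 1) := by
  rcases eq_or_lt_of_le ht with h | h
  · rw [← h, mul_zero, Real.zero_rpow (show γ + 1 ≠ 0 by intro hc; linarith)]
  · rw [Real.rpow_add_one (ne_of_gt h)]

lemma wt_shift {x : ℝ} (hx : x ∈ Icc a b) (hα : -1 < α) (hβ : -1 < β) :
    ((φp a b).eval x) * wt a b α β x = wt a b (α+1) (β+1) x := by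
  have h1 : (b - x) ^ α * (b - x) = (b - x) ^ (α + 1) :=
    rpow_succ_aux (by linarith [hx.2]) hα
  have h2 : (x - a) ^ β * (x - a) = (x - a) ^ (β + 1) :=
    rpow_succ_aux (by linarith [hx.1]) hβ
  simp only [φp, wt, eval_mul, eval_sub, eval_C, eval_X]
  rw [← h1, ← h2]
  ring

lemma J_shift (hα : -1 < α) (hβ : -1 < β) (r : ℝ[X]) :
    J a b α β (φp a b * r) = J a b (α+1) (β+1) r := by
  unfold J
  apply setIntegral_congr_fun measurableSet_Icc
  intro x hx
  dsimp only
  rw [eval_mul, mul_comm ((φp a b).eval x), mul_assoc, wt_shift hx hα hβ]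

lemma J_sl (hab : a < b) (hα : -1 < α) (hβ : -1 < β) (u : ℝ[X]) :
    J a b α β (φp a b * derivative u + ψp a b α β * u) = 0 := by
  set f : ℝ → ℝ := fun x => (φp a b * derivative u + ψp a b α β * u).eval x * wt a b α β x
    with hf
  set F : ℝ → ℝ := fun x => (b - x) ^ (α+1) * ((x - a) ^ (β+1) * u.eval x) with hF
  have hc1 : Continuous fun t : ℝ => t ^ (α+1) :=
    Real.continuous_rpow_const (by linarith)
  have hc2 : Continuous fun t : ℝ => t ^ (β+1) :=
    Real.continuous_rpow_const (by linarith)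
  have hcont : Continuous F := by
    apply Continuous.mul
    · exact hc1.comp (continuous_const.sub continuous_id)
    · exact Continuous.mul (hc2.comp (continuous_id.sub continuous_const)) u.continuous
  have hderiv : ∀ x ∈ Ioo a b, HasDerivAt F (f x) x := by
    intro x hx
    have hbx : (0:ℝ) < b - x := by linarith [hx.2]
    have hxa : (0:ℝ) < x - a := by linarith [hx.1]
    have d1 : HasDerivAt (fun y : ℝ => (b - y) ^ (α+1)) ((α+1) * (b - x) ^ α * (-1)) x := by
      have h := Real.hasDerivAt_rpow_const (x := b - x) (p := α + 1) (Or.inl (ne_of_gt hbx))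
      have hcmp : HasDerivAt (fun y : ℝ => b - y) (-1) x := (hasDerivAt_id x).const_sub b
      have := h.comp x hcmp
      exact this.congr_deriv (by rw [add_sub_cancel_right])
    have d2 : HasDerivAt (fun y : ℝ => (y - a) ^ (β+1)) ((β+1) * (x - a) ^ β * 1) x := by
      have h := Real.hasDerivAt_rpow_const (x := x - a) (p := β + 1) (Or.inl (ne_of_gt hxa))
      have hcmp : HasDerivAt (fun y : ℝ => y - a) 1 x := (hasDerivAt_id x).sub_const a
      have := h.comp x hcmp
      exact this.congr_deriv (by rw [add_sub_cancel_right])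
    have d3 : HasDerivAt (fun y : ℝ => u.eval y) ((derivative u).eval x) x := u.hasDerivAt x
    have dF := d1.mul (d2.mul d3)
    refine dF.congr_deriv ?_
    have e1 : (b - x) ^ (α + 1) = (b - x) ^ α * (b - x) :=
      (rpow_succ_aux hbx.le hα).symm
    have e2 : (x - a) ^ (β + 1) = (x - a) ^ β * (x - a) :=
      (rpow_succ_aux hxa.le hβ).symm
    simp only [hf, wt, φp, ψp, eval_add, eval_mul, eval_sub, eval_C, eval_X, Pi.mul_apply, e1, e2]
    ring
  have hint : IntervalIntegrable f volume a b := by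
    rw [intervalIntegrable_iff_integrableOn_Ioc_of_le hab.le]
    exact ((J_integrable hab hα hβ _).mono_set Ioc_subset_Icc_self)
  have key := intervalIntegral.integral_eq_sub_of_hasDerivAt_of_le hab.le
    hcont.continuousOn hderiv hint
  have hFb : F b = 0 := by
    simp only [hF, sub_self, Real.zero_rpow (show α + 1 ≠ 0 by linarith)]
    ring
  have hFa : F a = 0 := by
    simp only [hF, sub_self, Real.zero_rpow (show β + 1 ≠ 0 by linarith)]
    ring
  have : J a b α β (φp a b * derivative u + ψp a b α β * u)
      = ∫ x in a..b, f x := by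
    rw [intervalIntegral.integral_of_le hab.le, J, integral_Icc_eq_integral_Ioc]
  rw [this, key, hFb, hFa, sub_zero]


lemma J_congr_eval (hab : a < b) (hα : -1 < α) (hβ : -1 < β) (p q : ℝ[X])
    (h : ∀ x ∈ Icc a b, p.eval x = q.eval x) : J a b α β p = J a b α β q := by
  unfold J
  apply setIntegral_congr_fun measurableSet_Icc
  intro x hx
  dsimp only
  rw [h x hx]
lemma coeff_Lp_X_pow (m : ℕ) : (Lp a b α β (X ^ m)).coeff m = -(lam α β m) := by
  match m with
  | 0 =>
    simp [Lp, lam, pow_zero]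
  | 1 =>
    have hψ : ψp a b α β = C ((β+1)*b + (α+1)*a) - C (α+β+2) * X := by
      rw [ψp]; simp only [map_add, map_mul, map_one, map_ofNat]; ring
    simp [Lp, lam, pow_one, hψ, coeff_sub, coeff_C_mul, coeff_C, coeff_X, coeff_one]
    ring
  | (k+2) =>
    have h1 : derivative (X ^ (k+2) : ℝ[X]) = C ((k:ℝ)+2) * X ^ (k+1) := by
      rw [derivative_X_pow]
      norm_num
    have h2 : derivative (C ((k:ℝ)+2) * X ^ (k+1)) = C ((k:ℝ)+2) * (C ((k:ℝ)+1) * X ^ k) := by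
      rw [derivative_C_mul, derivative_X_pow]
      norm_num
    rw [Lp, h1, h2]
    have hφ : φp a b * (C ((k:ℝ)+2) * (C ((k:ℝ)+1) * X ^ k))
        = C (((k:ℝ)+2) * ((k:ℝ)+1)) * (C b * X ^ (k+1) - C (b*a) * X ^ k - X ^ (k+2) + C a * X ^ (k+1)) := by
      rw [φp]
      simp only [map_mul]
      ring
    have hψ : ψp a b α β * (C ((k:ℝ)+2) * X ^ (k+1))
        = C ((k:ℝ)+2) * (C ((β+1)*b) * X^(k+1) - C (β+1) * X^(k+2) - C (α+1) * X^(k+2) + C ((α+1)*a) * X^(k+1)) := by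
      rw [ψp]
      simp only [map_mul]
      ring
    rw [hφ, hψ, coeff_add, coeff_C_mul, coeff_C_mul]
    simp only [coeff_add, coeff_sub, coeff_C_mul, coeff_X_pow]
    simp only [Nat.add_right_cancel_iff, lam]
    norm_num
    ring

lemma natDegree_φp_le : (φp a b).natDegree ≤ 2 := by
  rw [φp]
  refine le_trans natDegree_mul_le ?_
  have h1 : (C b - X : ℝ[X]).natDegree ≤ 1 :=
    le_trans (natDegree_sub_le _ _) (by simp)
  have h2 : (X - C a : ℝ[X]).natDegree ≤ 1 :=
    le_trans (natDegree_sub_le _ _) (by simp)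
  omega

lemma natDegree_ψp_le : (ψp a b α β).natDegree ≤ 1 := by
  rw [ψp]
  refine le_trans (natDegree_sub_le _ _) ?_
  have h1 : (C (β+1) * (C b - X) : ℝ[X]).natDegree ≤ 1 := by
    refine le_trans natDegree_mul_le ?_
    have := le_trans (natDegree_sub_le (C b) (X:ℝ[X])) (by simp : max (C b : ℝ[X]).natDegree (X:ℝ[X]).natDegree ≤ 1)
    simp only [natDegree_C]
    omega
  have h2 : (C (α+1) * (X - C a) : ℝ[X]).natDegree ≤ 1 := by
    refine le_trans natDegree_mul_le ?_
    have := le_trans (natDegree_sub_le (X:ℝ[X]) (C a)) (by simp : max (X:ℝ[X]).natDegree (C a : ℝ[X]).natDegree ≤ 1)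
    simp only [natDegree_C]
    omega
  omega

lemma natDegree_Lp_le (P : ℝ[X]) : (Lp a b α β P).natDegree ≤ P.natDegree := by
  rw [Lp]
  refine le_trans (natDegree_add_le _ _) (max_le ?_ ?_)
  · by_cases h2 : 2 ≤ P.natDegree
    · refine le_trans natDegree_mul_le ?_
      have e1 := natDegree_derivative_le (derivative P)
      have e2 := natDegree_derivative_le P
      have e3 : (φp a b).natDegree ≤ 2 := natDegree_φp_le
      omega
    · have hd : derivative (derivative P) = 0 := by
        have h1 : natDegree (derivative P) ≤ 0 := by
          have := natDegree_derivative_le P; omega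
        rw [eq_C_of_natDegree_le_zero h1, derivative_C]
      rw [hd, mul_zero]
      simp
  · by_cases h1 : 1 ≤ P.natDegree
    · refine le_trans natDegree_mul_le ?_
      have e2 := natDegree_derivative_le P
      have e3 : (ψp a b α β).natDegree ≤ 1 := natDegree_ψp_le
      omega
    · have hd : derivative P = 0 := by
        have h0 : natDegree P ≤ 0 := by omega
        rw [eq_C_of_natDegree_le_zero h0, derivative_C]
      rw [hd, mul_zero]
      simp

lemma Lp_add (P Q : ℝ[X]) : Lp a b α β (P + Q) = Lp a b α β P + Lp a b α β Q := by
  simp only [Lp, derivative_add]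
  ring

lemma Lp_smul (c : ℝ) (P : ℝ[X]) : Lp a b α β (c • P) = c • Lp a b α β P := by
  have h2 : derivative (c • P) = c • derivative P := derivative_smul c P
  have h1 : derivative (derivative (c • P)) = c • derivative (derivative P) := by
    rw [h2, derivative_smul]
  rw [Lp, h1, h2, Lp, smul_eq_C_mul, smul_eq_C_mul, smul_eq_C_mul]
  ring

lemma Lp_sub (P Q : ℝ[X]) : Lp a b α β (P - Q) = Lp a b α β P - Lp a b α β Q := by
  simp only [Lp, derivative_sub]
  ring

-- derived J lemmas
lemma J_zero' (hab : a < b) (hα : -1 < α) (hβ : -1 < β) : J a b α β 0 = 0 := by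
  have := J_smul (a := a) (b := b) (α := α) (β := β) 0 0
  simpa using this

lemma J_sub (hab : a < b) (hα : -1 < α) (hβ : -1 < β) (p q : ℝ[X]) :
    J a b α β (p - q) = J a b α β p - J a b α β q := by
  have h1 : p - q = p + (-1 : ℝ) • q := by
    simp [neg_one_smul]
    ring
  rw [h1, J_add hab hα hβ, J_smul]
  ring

lemma J_sum (hab : a < b) (hα : -1 < α) (hβ : -1 < β) {ι : Type*} (s : Finset ι) (f : ι → ℝ[X]) :
    J a b α β (∑ i ∈ s, f i) = ∑ i ∈ s, J a b α β (f i) := by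
  classical
  induction s using Finset.induction_on with
  | empty => simpa using J_zero' hab hα hβ
  | insert i s hni ih =>
    rw [Finset.sum_insert hni, Finset.sum_insert hni, J_add hab hα hβ, ih]

lemma J_congr_poly (p q : ℝ[X]) (h : p = q) : J a b α β p = J a b α β q := by rw [h]

/-- integration by parts identity -/
lemma J_parts (hab : a < b) (hα : -1 < α) (hβ : -1 < β) (P Q : ℝ[X]) :
    J a b α β (φp a b * derivative P * derivative Q) = - J a b α β (Lp a b α β P * Q) := by
  have hid : φp a b * derivative (derivative P * Q) + ψp a b α β * (derivative P * Q)
      = Lp a b α β P * Q + φp a b * derivative P * derivative Q := by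
    simp only [Lp, derivative_mul]
    ring
  have h0 := J_sl hab hα hβ (derivative P * Q)
  rw [J_congr_poly _ _ hid, J_add hab hα hβ] at h0
  linarith

/-- Gram–Schmidt orthogonal polynomials -/
noncomputable def qp (a b α β : ℝ) : ℕ → ℝ[X]
  | k => X ^ k - ∑ j ∈ (Finset.range k).attach,
      (J a b α β (X ^ k * qp a b α β j.1) / J a b α β (qp a b α β j.1 * qp a b α β j.1))
        • qp a b α β j.1
  decreasing_by exact Finset.mem_range.mp j.2

lemma qp_def (k : ℕ) : qp a b α β k = X ^ k - ∑ j ∈ (Finset.range k).attach,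
    (J a b α β (X ^ k * qp a b α β j.1) / J a b α β (qp a b α β j.1 * qp a b α β j.1))
      • qp a b α β j.1 := by
  rw [qp]

lemma qp_natDegree_le (k : ℕ) : (qp a b α β k).natDegree ≤ k ∧ (qp a b α β k).coeff k = 1 := by
  induction k using Nat.strong_induction_on with
  | _ k ih =>
    constructor
    · rw [qp_def]
      refine le_trans (natDegree_sub_le _ _) (max_le (by simp [natDegree_X_pow]) ?_)
      refine Polynomial.natDegree_sum_le_of_forall_le _ _ ?_
      intro j hj
      have hjk := Finset.mem_range.mp j.2
      refine le_trans (natDegree_smul_le _ _) ?_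
      exact le_trans (ih j.1 hjk).1 (le_of_lt hjk)
    · rw [qp_def, coeff_sub, coeff_X_pow, if_pos rfl, finset_sum_coeff]
      have hz : ∀ j ∈ (Finset.range k).attach,
          ((J a b α β (X ^ k * qp a b α β j.1) / J a b α β (qp a b α β j.1 * qp a b α β j.1))
            • qp a b α β j.1).coeff k = 0 := by
        intro j hj
        have hjk := Finset.mem_range.mp j.2
        rw [coeff_smul]
        have : (qp a b α β j.1).coeff k = 0 :=
          coeff_eq_zero_of_natDegree_lt (lt_of_le_of_lt (ih j.1 hjk).1 hjk)
        rw [this, smul_zero]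
      rw [Finset.sum_congr rfl hz]
      simp

lemma qp_orth (hab : a < b) (hα : -1 < α) (hβ : -1 < β) :
    ∀ k j, j < k → J a b α β (qp a b α β k * qp a b α β j) = 0 := by
  intro k
  induction k using Nat.strong_induction_on with
  | _ k ih =>
    intro j hjk
    have hexp : qp a b α β k * qp a b α β j = X ^ k * qp a b α β j
        - ∑ i ∈ (Finset.range k).attach,
          (J a b α β (X ^ k * qp a b α β i.1) / J a b α β (qp a b α β i.1 * qp a b α β i.1))
            • (qp a b α β i.1 * qp a b α β j) := by
      rw [qp_def (a := a) (b := b) (α := α) (β := β) k, sub_mul, Finset.sum_mul]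
      congr 1
      refine Finset.sum_congr rfl ?_
      intro i hi
      rw [smul_mul_assoc]
    rw [hexp, J_sub hab hα hβ, J_sum hab hα hβ]
    have hsum : ∀ i ∈ (Finset.range k).attach, i.1 ≠ j →
        J a b α β ((J a b α β (X ^ k * qp a b α β i.1) / J a b α β (qp a b α β i.1 * qp a b α β i.1))
          • (qp a b α β i.1 * qp a b α β j)) = 0 := by
      intro i hi hij
      rw [J_smul]
      have : J a b α β (qp a b α β i.1 * qp a b α β j) = 0 := by
        rcases lt_or_gt_of_ne hij with h | h
        · have := ih j hjk i.1 h
          rwa [mul_comm] at this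
        · exact ih i.1 (Finset.mem_range.mp i.2) j h
      rw [this, mul_zero]
    -- the sum reduces to the j-th term
    have hj_mem : (⟨j, Finset.mem_range.mpr hjk⟩ : {x // x ∈ Finset.range k}) ∈ (Finset.range k).attach :=
      Finset.mem_attach _ _
    rw [Finset.sum_eq_single_of_mem _ hj_mem (fun i hi hij => hsum i hi (by
      intro hc
      apply hij
      exact Subtype.ext hc))]
    rw [J_smul]
    set Nj := J a b α β (qp a b α β j * qp a b α β j) with hNj
    by_cases hN : Nj = 0
    · rw [hN, mul_zero, sub_zero]
      have hcs := J_CS hab hα hβ (X ^ k) (qp a b α β j)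
      rw [← hNj, hN, mul_zero] at hcs
      have h0 : (J a b α β (X ^ k * qp a b α β j))^2 = 0 := le_antisymm hcs (sq_nonneg _)
      exact pow_eq_zero_iff (n := 2) (by norm_num) |>.mp h0
    · rw [div_mul_cancel₀ _ hN]
      ring

lemma qp_orth_lower (hab : a < b) (hα : -1 < α) (hβ : -1 < β) :
    ∀ d k (S : ℝ[X]), S.natDegree ≤ d → d < k → J a b α β (qp a b α β k * S) = 0 := by
  intro d
  induction d with
  | zero =>
    intro k S hS hk
    have hq0 : qp a b α β 0 = 1 := by
      rw [qp_def]
      simp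
    rw [eq_C_of_natDegree_le_zero hS]
    have : qp a b α β k * C (S.coeff 0) = S.coeff 0 • (qp a b α β k * qp a b α β 0) := by
      rw [hq0, smul_eq_C_mul]
      ring
    rw [this, J_smul, qp_orth hab hα hβ k 0 hk, mul_zero]
  | succ d ihd =>
    intro k S hS hk
    set c := S.coeff (d+1) with hc
    set T := S - c • qp a b α β (d+1) with hT
    have hTdeg : T.natDegree ≤ d := by
      rw [natDegree_le_iff_coeff_eq_zero]
      intro N hN
      rw [hT, coeff_sub, coeff_smul]
      rcases eq_or_lt_of_le (Nat.succ_le_of_lt hN) with h | h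
      · rw [← h, ← hc, (qp_natDegree_le (d+1)).2]
        simp
      · rw [coeff_eq_zero_of_natDegree_lt (lt_of_le_of_lt hS h),
          coeff_eq_zero_of_natDegree_lt (lt_of_le_of_lt (qp_natDegree_le (d+1)).1 h)]
        simp
    have hSplit : qp a b α β k * S = qp a b α β k * T
        + c • (qp a b α β k * qp a b α β (d+1)) := by
      rw [hT, smul_eq_C_mul, smul_eq_C_mul]
      ring
    rw [hSplit, J_add hab hα hβ, J_smul, ihd k T hTdeg (by omega),
      qp_orth hab hα hβ k (d+1) hk, mul_zero, add_zero]

lemma coeff_Lp_qp (hab : a < b) (hα : -1 < α) (hβ : -1 < β) (k : ℕ) :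
    (Lp a b α β (qp a b α β k)).coeff k = -(lam α β k) := by
  rw [qp_def, Lp_sub, coeff_sub, coeff_Lp_X_pow]
  have : (Lp a b α β (∑ j ∈ (Finset.range k).attach,
      (J a b α β (X ^ k * qp a b α β j.1) / J a b α β (qp a b α β j.1 * qp a b α β j.1))
        • qp a b α β j.1)).coeff k = 0 := by
    by_cases hk : k = 0
    · subst hk
      have hempty : (∑ j ∈ (Finset.range 0).attach,
          (J a b α β (X ^ 0 * qp a b α β j.1) / J a b α β (qp a b α β j.1 * qp a b α β j.1))
            • qp a b α β j.1) = 0 := by simp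
      rw [hempty]
      have hz : Lp a b α β 0 = 0 := by simp [Lp]
      simp [hz]
    apply coeff_eq_zero_of_natDegree_lt
    refine lt_of_le_of_lt (natDegree_Lp_le _) ?_
    refine lt_of_le_of_lt (Polynomial.natDegree_sum_le_of_forall_le _ _ ?_)
      (show k - 1 < k by omega)
    · intro j hj
      have hjk := Finset.mem_range.mp j.2
      refine le_trans (natDegree_smul_le _ _) (le_trans (qp_natDegree_le j.1).1 ?_)
      omega
  rw [this, sub_zero]

lemma lam_nonneg (hα : -1 < α) (hβ : -1 < β) (m : ℕ) : 0 ≤ lam α β m := by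
  rw [lam]
  rcases Nat.eq_zero_or_pos m with h | h
  · subst h; simp
  · have : (1:ℝ) ≤ m := by exact_mod_cast h
    have : (0:ℝ) ≤ m := by linarith
    nlinarith

lemma lam_mono (hα : -1 < α) (hβ : -1 < β) {m n : ℕ} (h : m ≤ n) : lam α β m ≤ lam α β n := by
  rw [lam, lam]
  have hc : (m:ℝ) ≤ n := by exact_mod_cast h
  have h0 : (0:ℝ) ≤ m := by positivity
  rcases Nat.eq_zero_or_pos n with hn | hn
  · have : m = 0 := by omega
    subst this; subst hn
    exact le_refl _
  · have h1 : (1:ℝ) ≤ n := by exact_mod_cast hn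
    nlinarith [mul_nonneg (sub_nonneg.2 hc) (show (0:ℝ) ≤ (n:ℝ) + m + α + β + 1 by linarith)]

/-- Bernstein-type step -/
lemma bernstein (hab : a < b) (hα : -1 < α) (hβ : -1 < β) :
    ∀ m (P : ℝ[X]), P.natDegree ≤ m →
      J a b α β (φp a b * derivative P * derivative P) ≤ lam α β m * J a b α β (P * P) := by
  intro m
  induction m with
  | zero =>
    intro P hP
    have hd : derivative P = 0 := by
      rw [eq_C_of_natDegree_le_zero hP, derivative_C]
    rw [hd, mul_zero, J_zero' hab hα hβ]
    have h0 : lam α β 0 = 0 := by simp [lam]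
    rw [h0, zero_mul]
  | succ m ihm =>
    intro P hP
    set q := qp a b α β (m+1) with hq
    set c := P.coeff (m+1) with hc
    set R := P - c • q with hR
    have hq_deg : q.natDegree ≤ m + 1 := (qp_natDegree_le (m+1)).1
    have hq_coeff : q.coeff (m+1) = 1 := (qp_natDegree_le (m+1)).2
    have hRdeg : R.natDegree ≤ m := by
      rw [natDegree_le_iff_coeff_eq_zero]
      intro N hN
      rw [hR, coeff_sub, coeff_smul]
      rcases eq_or_lt_of_le (Nat.succ_le_of_lt hN) with h | h
      · rw [← h, hq_coeff, ← hc]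
        simp
      · rw [coeff_eq_zero_of_natDegree_lt (lt_of_le_of_lt hP h),
          coeff_eq_zero_of_natDegree_lt (lt_of_le_of_lt hq_deg h)]
        simp
    have hPval : P = C c * q + R := by
      rw [hR, smul_eq_C_mul]
      ring
    -- eigen-relation at top level
    have hr_deg : (Lp a b α β q + lam α β (m+1) • q).natDegree ≤ m := by
      rw [natDegree_le_iff_coeff_eq_zero]
      intro N hN
      rcases eq_or_lt_of_le (Nat.succ_le_of_lt hN) with h | h
      · rw [coeff_add, coeff_smul, ← h, coeff_Lp_qp hab hα hβ, hq_coeff]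
        simp
      · rw [coeff_add, coeff_smul,
          coeff_eq_zero_of_natDegree_lt (lt_of_le_of_lt (le_trans (natDegree_Lp_le _) hq_deg) h),
          coeff_eq_zero_of_natDegree_lt (lt_of_le_of_lt hq_deg h)]
        simp
    have hBqq : J a b α β (φp a b * derivative q * derivative q)
        = lam α β (m+1) * J a b α β (q * q) := by
      rw [J_parts hab hα hβ]
      have hLq : Lp a b α β q = (Lp a b α β q + lam α β (m+1) • q) - lam α β (m+1) • q := by
        ring
      rw [hLq]
      have : ((Lp a b α β q + lam α β (m+1) • q) - lam α β (m+1) • q) * q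
          = q * (Lp a b α β q + lam α β (m+1) • q) - lam α β (m+1) • (q * q) := by
        rw [smul_eq_C_mul, smul_eq_C_mul]
        ring
      rw [this, J_sub hab hα hβ, J_smul,
        qp_orth_lower hab hα hβ m (m+1) _ hr_deg (by omega)]
      ring
    have hBqR : J a b α β (φp a b * derivative q * derivative R) = 0 := by
      have hcomm : φp a b * derivative q * derivative R
          = φp a b * derivative R * derivative q := by ring
      rw [hcomm, J_parts hab hα hβ]
      have : Lp a b α β R * q = q * Lp a b α β R := by ring
      rw [this, qp_orth_lower hab hα hβ m (m+1) _ (le_trans (natDegree_Lp_le _) hRdeg) (by omega)]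
      simp
    have hqR : J a b α β (q * R) = 0 :=
      qp_orth_lower hab hα hβ m (m+1) _ hRdeg (by omega)
    -- expand
    have hBexp : φp a b * derivative P * derivative P
        = C (c*c) * (φp a b * derivative q * derivative q)
          + (C c * (φp a b * derivative q * derivative R)
            + (C c * (φp a b * derivative q * derivative R)
              + φp a b * derivative R * derivative R)) := by
      rw [hPval]
      simp only [derivative_add, derivative_mul, derivative_C, map_mul]
      ring
    have hPexp : P * P = C (c*c) * (q * q) + (C c * (q * R) + (C c * (q * R) + R * R)) := by
      rw [hPval]
      simp only [map_mul]
      ring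
    have eB : J a b α β (φp a b * derivative P * derivative P)
        = c*c*J a b α β (φp a b * derivative q * derivative q)
          + (c * J a b α β (φp a b * derivative q * derivative R)
            + (c * J a b α β (φp a b * derivative q * derivative R)
              + J a b α β (φp a b * derivative R * derivative R))) := by
      rw [J_congr_poly _ _ hBexp, J_add hab hα hβ, J_add hab hα hβ, J_add hab hα hβ,
        J_Cmul, J_Cmul]
    have eP : J a b α β (P * P)
        = c*c*J a b α β (q * q) + (c * J a b α β (q * R)
          + (c * J a b α β (q * R) + J a b α β (R * R))) := by
      rw [J_congr_poly _ _ hPexp, J_add hab hα hβ, J_add hab hα hβ, J_add hab hα hβ,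
        J_Cmul, J_Cmul]
    rw [eB, eP, hBqq, hBqR, hqR]
    have hRR := ihm R hRdeg
    have hlam := lam_mono hα hβ (Nat.le_succ m)
    have hqq := J_sq_nonneg (a := a) (b := b) (α := α) (β := β) q
    have hRR0 := J_sq_nonneg (a := a) (b := b) (α := α) (β := β) R
    have hlam0 := lam_nonneg hα hβ (m+1)
    nlinarith [sq_nonneg c]

/-! Schur step constants -/
noncomputable def s0 (α β : ℝ) : ℝ := α + β + 2
noncomputable def e0 (a b α β : ℝ) : ℝ := (β+1)*b + (α+1)*a
noncomputable def K0 (a b α β : ℝ) : ℝ := (α+1)*(β+1)*(b-a)^2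
noncomputable def cg (a b α β : ℝ) : ℝ := ((a+b)*s0 α β - e0 a b α β)/K0 a b α β
noncomputable def dg (a b α β : ℝ) : ℝ := -(s0 α β)/K0 a b α β
noncomputable def μ0 (a b α β : ℝ) : ℝ := s0 α β * (s0 α β + 1)/K0 a b α β
noncomputable def gp (a b α β : ℝ) : ℝ[X] := C (cg a b α β) + C (dg a b α β) * X
noncomputable def G0 (a b α β : ℝ) : ℝ := |cg a b α β| + |dg a b α β| * (|a| + |b|)

lemma K0_pos (hab : a < b) (hα : -1 < α) (hβ : -1 < β) : 0 < K0 a b α β := by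
  rw [K0]
  have h3 : (0:ℝ) < (b-a)^2 := by
    have : b - a ≠ 0 := by intro hc; linarith
    positivity
  exact mul_pos (mul_pos (by linarith) (by linarith)) h3

lemma μ0_pos (hab : a < b) (hα : -1 < α) (hβ : -1 < β) : 0 < μ0 a b α β := by
  rw [μ0]
  have hK := K0_pos hab hα hβ
  have hs : 0 < s0 α β := by rw [s0]; linarith
  positivity

lemma gp_key (hab : a < b) (hα : -1 < α) (hβ : -1 < β) (x : ℝ) :
    (φp a b * derivative (gp a b α β) + ψp a b α β * gp a b α β).eval x
      = (1 - C (μ0 a b α β) * φp a b).eval x := by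
  have hK := (K0_pos hab hα hβ).ne'
  simp only [gp, φp, ψp, derivative_add, derivative_C_mul, derivative_C, derivative_X,
    eval_add, eval_mul, eval_sub, eval_C, eval_X, eval_one, mul_one, mul_zero, zero_add]
  rw [cg, dg, μ0, s0, e0]
  simp only [K0] at hK ⊢
  have hα1 : α + 1 ≠ 0 := by linarith
  have hβ1 : β + 1 ≠ 0 := by linarith
  have hba : b - a ≠ 0 := by linarith
  field_simp
  ring

lemma gp_bound (hab : a < b) (x : ℝ) (hx : x ∈ Icc a b) :
    |(gp a b α β).eval x| ≤ G0 a b α β := by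
  have hxb : |x| ≤ |a| + |b| := by
    rw [abs_le]
    constructor
    · have := neg_abs_le a; have := hx.1; have := abs_nonneg b; linarith
    · have := le_abs_self b; have := hx.2; have := abs_nonneg a; linarith
  simp only [gp, eval_add, eval_mul, eval_C, eval_X, G0]
  refine le_trans (abs_add_le _ _) ?_
  rw [abs_mul]
  have := abs_nonneg (dg a b α β)
  nlinarith

/-- Schur-type step -/
lemma schur (hab : a < b) (hα : -1 < α) (hβ : -1 < β) (m : ℕ) (Q : ℝ[X])
    (hQ : Q.natDegree ≤ m) :
    J a b α β (Q*Q) ≤ (2*μ0 a b α β + 4*(G0 a b α β)^2 * lam α β m)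
      * J a b (α+1) (β+1) (Q*Q) := by
  have hα' : (-1:ℝ) < α + 1 := by linarith
  have hβ' : (-1:ℝ) < β + 1 := by linarith
  set g := gp a b α β with hg
  set μ := μ0 a b α β with hμ
  set G := G0 a b α β with hG
  set X0 := J a b α β (Q*Q) with hX0
  set Y0 := J a b (α+1) (β+1) (Q*Q) with hY0
  set Z0 := J a b (α+1) (β+1) (Q * (g * derivative Q)) with hZ0
  have hX0n : 0 ≤ X0 := J_sq_nonneg _
  have hY0n : 0 ≤ Y0 := J_sq_nonneg _
  -- main identity
  have hident : X0 = μ * Y0 - 2 * Z0 := by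
    have hsplit : φp a b * derivative (g * (Q*Q)) + ψp a b α β * (g * (Q*Q))
        = (φp a b * derivative g + ψp a b α β * g) * (Q*Q)
          + (φp a b * (Q * (g * derivative Q)) + φp a b * (Q * (g * derivative Q))) := by
      simp only [derivative_mul]
      ring
    have h0 := J_sl hab hα hβ (g * (Q*Q))
    rw [J_congr_poly _ _ hsplit, J_add hab hα hβ, J_add hab hα hβ,
      J_shift hα hβ] at h0
    have hcongr : J a b α β ((φp a b * derivative g + ψp a b α β * g) * (Q*Q))
        = J a b α β ((1 - C μ * φp a b) * (Q*Q)) := by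
      apply J_congr_eval hab hα hβ
      intro x hx
      simp only [hμ, eval_mul]
      rw [gp_key hab hα hβ x]
    have hone : J a b α β ((1 - C μ * φp a b) * (Q*Q)) = X0 - μ * Y0 := by
      have hpoly : (1 - C μ * φp a b) * (Q*Q) = Q*Q - C μ * (φp a b * (Q*Q)) := by ring
      rw [J_congr_poly _ _ hpoly, J_sub hab hα hβ, J_Cmul, J_shift hα hβ]
    rw [hcongr, hone] at h0
    rw [← hZ0] at h0
    linarith
  -- Cauchy–Schwarz
  have hCS : Z0^2 ≤ Y0 * J a b (α+1) (β+1) ((g * derivative Q) * (g * derivative Q)) :=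
    J_CS hab hα' hβ' Q (g * derivative Q)
  -- bound |g| ≤ G
  have hgb : J a b (α+1) (β+1) ((g * derivative Q) * (g * derivative Q))
      ≤ G^2 * J a b (α+1) (β+1) (derivative Q * derivative Q) := by
    have hmono : J a b (α+1) (β+1) ((g * derivative Q) * (g * derivative Q))
        ≤ J a b (α+1) (β+1) (C (G^2) * (derivative Q * derivative Q)) := by
      apply J_mono hab hα' hβ'
      intro x hx
      simp only [eval_mul, eval_C]
      have hb := gp_bound (α := α) (β := β) hab x hx
      rw [← hg, ← hG] at hb
      have h1 := abs_le.mp hb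
      have hg2 : (g.eval x)^2 ≤ G^2 := sq_le_sq' h1.1 h1.2
      nlinarith [mul_le_mul_of_nonneg_right hg2 (sq_nonneg ((derivative Q).eval x))]
    rw [J_Cmul] at hmono
    exact hmono
  -- Bernstein
  have hbern : J a b (α+1) (β+1) (derivative Q * derivative Q) ≤ lam α β m * X0 := by
    have h1 := bernstein hab hα hβ m Q hQ
    have h2 : φp a b * derivative Q * derivative Q = φp a b * (derivative Q * derivative Q) := by
      ring
    rw [J_congr_poly _ _ h2, J_shift hα hβ] at h1
    exact h1
  -- combine
  have hμpos := μ0_pos hab hα hβ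
  rw [← hμ] at hμpos
  have hlam := lam_nonneg hα hβ m
  have hG2 : (0:ℝ) ≤ G^2 := sq_nonneg _
  have hZsq : Z0^2 ≤ Y0 * (G^2 * (lam α β m * X0)) := by
    refine le_trans hCS ?_
    have step1 : J a b (α+1) (β+1) ((g * derivative Q) * (g * derivative Q))
        ≤ G^2 * (lam α β m * X0) := by
      refine le_trans hgb ?_
      exact mul_le_mul_of_nonneg_left hbern hG2
    exact mul_le_mul_of_nonneg_left step1 hY0n
  -- now: X0 = μ Y0 - 2 Z0, Z0² ≤ Y0 G² lam X0; conclude X0 ≤ (2μ + 4G²lam) Y0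
  by_contra hcon
  push_neg at hcon
  set T := 4*G^2*lam α β m with hT
  have hT0 : 0 ≤ T := by positivity
  have hXpos : 0 < X0 := by
    by_contra hX
    push_neg at hX
    have : X0 = 0 := le_antisymm hX hX0n
    rw [this] at hcon
    nlinarith
  have hEq : X0 - μ*Y0 = -(2*Z0) := by linarith
  have hkey : (X0 - μ*Y0)^2 ≤ T*(X0*Y0) := by
    rw [hEq]
    have he : (-(2*Z0))^2 = 4*Z0^2 := by ring
    rw [he, hT]
    nlinarith [hZsq]
  have hc2 : X0 * ((2*μ + T)*Y0) < X0 * X0 := mul_lt_mul_of_pos_left hcon hXpos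
  nlinarith [hkey, hc2, sq_nonneg (μ*Y0)]


end JM

open JM in
/-- Markov inequality for the Jacobi weight transferred to an arbitrary compact interval:
`w(x) = (a₂-x)^α (x-a₁)^β` on `[a₁,a₂]`, `α, β > -1`. -/
theorem jacobi_markov_affine (a₁ a₂ : ℝ) (ha : a₁ < a₂) (α β : ℝ) (hα : -1 < α) (hβ : -1 < β) :
    ∃ C : ℝ, 0 < C ∧ ∀ (n : ℕ) (P : Polynomial ℝ), P.natDegree ≤ n →
      L2w (Set.Icc a₁ a₂) (fun x => (a₂ - x) ^ α * (x - a₁) ^ β) (derivative P) ≤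
        C * n ^ 2 * L2w (Set.Icc a₁ a₂) (fun x => (a₂ - x) ^ α * (x - a₁) ^ β) P := by
  classical
  set σ := 1 + |α + β + 1| with hσ
  have hσ1 : (1:ℝ) ≤ σ := by
    rw [hσ]
    have := abs_nonneg (α + β + 1)
    linarith
  have hμ := μ0_pos ha hα hβ
  have hG2 : (0:ℝ) ≤ (G0 a₁ a₂ α β)^2 := sq_nonneg _
  set D := (2*μ0 a₁ a₂ α β + 4*(G0 a₁ a₂ α β)^2*σ)*σ with hD
  have hDpos : 0 < D := by
    rw [hD]
    have h1 : (0:ℝ) < 2*μ0 a₁ a₂ α β + 4*(G0 a₁ a₂ α β)^2*σ := by nlinarith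
    nlinarith
  refine ⟨Real.sqrt D, Real.sqrt_pos.mpr hDpos, ?_⟩
  intro n P hP
  have hL2 : ∀ Q : ℝ[X], L2w (Set.Icc a₁ a₂) (fun x => (a₂ - x) ^ α * (x - a₁) ^ β) Q
      = Real.sqrt (J a₁ a₂ α β (Q*Q)) := by
    intro Q
    rw [L2w, J]
    congr 1
    have hfun : (fun x => (Q.eval x) ^ 2 * ((a₂ - x) ^ α * (x - a₁) ^ β))
        = fun x => (Q*Q).eval x * wt a₁ a₂ α β x := by
      funext x
      simp [wt, eval_mul, sq]
    rw [hfun]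
  rw [hL2, hL2]
  rcases Nat.eq_zero_or_pos n with hn0 | hn
  · subst hn0
    have hPd : derivative P = 0 := by
      rw [eq_C_of_natDegree_le_zero hP, derivative_C]
    rw [hPd]
    have hz : (0 : ℝ[X]) * 0 = 0 := by ring
    rw [J_congr_poly _ _ hz, J_zero' ha hα hβ, Real.sqrt_zero]
    push_cast
    rw [zero_pow (by norm_num), mul_zero, zero_mul]
  · have hn1 : (1:ℝ) ≤ (n:ℝ) := by exact_mod_cast hn
    have hQdeg : (derivative P).natDegree ≤ n :=
      le_trans (natDegree_derivative_le P) (by omega)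
    have hJPP : (0:ℝ) ≤ J a₁ a₂ α β (P*P) := J_sq_nonneg _
    have hlam0 := lam_nonneg hα hβ n
    have hschur := schur ha hα hβ n (derivative P) hQdeg
    have hbern : J a₁ a₂ (α+1) (β+1) (derivative P * derivative P)
        ≤ lam α β n * J a₁ a₂ α β (P*P) := by
      have h1 := bernstein ha hα hβ n P hP
      have h2 : φp a₁ a₂ * derivative P * derivative P
          = φp a₁ a₂ * (derivative P * derivative P) := by ring
      rw [J_congr_poly _ _ h2, J_shift hα hβ] at h1
      exact h1
    set NN := (n:ℝ)^2 with hNN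
    have hNN1 : (1:ℝ) ≤ NN := by rw [hNN]; nlinarith
    have hlamb : lam α β n ≤ σ * NN := by
      rw [lam, hσ, hNN]
      have h1 := le_abs_self (α + β + 1)
      have h2 := abs_nonneg (α + β + 1)
      have hn0 : (0:ℝ) ≤ (n:ℝ) := by linarith
      have e1 : (n:ℝ)*(α+β+1) ≤ (n:ℝ)*|α+β+1| := mul_le_mul_of_nonneg_left h1 hn0
      have e2 : (n:ℝ)*|α+β+1| ≤ (n:ℝ)^2*|α+β+1| :=
        mul_le_mul_of_nonneg_right (by nlinarith : (n:ℝ) ≤ (n:ℝ)^2) h2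
      nlinarith
    have hfac1 : (0:ℝ) ≤ 2*μ0 a₁ a₂ α β + 4*(G0 a₁ a₂ α β)^2 * lam α β n := by
      have := mul_nonneg (mul_nonneg (by norm_num : (0:ℝ) ≤ 4) hG2) hlam0
      nlinarith
    have step : J a₁ a₂ α β (derivative P * derivative P)
        ≤ (2*μ0 a₁ a₂ α β + 4*(G0 a₁ a₂ α β)^2 * lam α β n)
          * (lam α β n * J a₁ a₂ α β (P*P)) :=
      le_trans hschur (mul_le_mul_of_nonneg_left hbern hfac1)
    have l1 : lam α β n * J a₁ a₂ α β (P*P) ≤ σ * NN * J a₁ a₂ α β (P*P) :=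
      mul_le_mul_of_nonneg_right hlamb hJPP
    have l2 : 2*μ0 a₁ a₂ α β + 4*(G0 a₁ a₂ α β)^2 * lam α β n
        ≤ (2*μ0 a₁ a₂ α β + 4*(G0 a₁ a₂ α β)^2*σ) * NN := by
      have h3 : 4*(G0 a₁ a₂ α β)^2 * lam α β n ≤ 4*(G0 a₁ a₂ α β)^2 * (σ * NN) := by
        apply mul_le_mul_of_nonneg_left hlamb
        linarith
      have h4 : 2*μ0 a₁ a₂ α β * 1 ≤ 2*μ0 a₁ a₂ α β * NN :=
        mul_le_mul_of_nonneg_left hNN1 (by linarith)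
      have h5 : (2*μ0 a₁ a₂ α β + 4*(G0 a₁ a₂ α β)^2*σ) * NN
          = 2*μ0 a₁ a₂ α β * NN + 4*(G0 a₁ a₂ α β)^2 * (σ * NN) := by ring
      linarith
    have l3 : (2*μ0 a₁ a₂ α β + 4*(G0 a₁ a₂ α β)^2 * lam α β n)
          * (lam α β n * J a₁ a₂ α β (P*P))
        ≤ ((2*μ0 a₁ a₂ α β + 4*(G0 a₁ a₂ α β)^2*σ) * NN) * (σ * NN * J a₁ a₂ α β (P*P)) := by
      apply mul_le_mul l2 l1 (mul_nonneg hlam0 hJPP)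
      have h6 : (0:ℝ) ≤ 4*(G0 a₁ a₂ α β)^2*σ := by
        apply mul_nonneg (by linarith)
        linarith
      have h7 : (0:ℝ) ≤ 2*μ0 a₁ a₂ α β + 4*(G0 a₁ a₂ α β)^2*σ := by linarith
      exact mul_nonneg h7 (by linarith)
    have l4 : J a₁ a₂ α β (derivative P * derivative P)
        ≤ D * (NN*NN) * J a₁ a₂ α β (P*P) := by
      have heq : ((2*μ0 a₁ a₂ α β + 4*(G0 a₁ a₂ α β)^2*σ) * NN) * (σ * NN * J a₁ a₂ α β (P*P))
          = D * (NN*NN) * J a₁ a₂ α β (P*P) := by rw [hD]; ring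
      linarith
    have hNN0 : (0:ℝ) ≤ NN := by linarith
    calc Real.sqrt (J a₁ a₂ α β (derivative P * derivative P))
        ≤ Real.sqrt (D * (NN*NN) * J a₁ a₂ α β (P*P)) := Real.sqrt_le_sqrt l4
      _ = Real.sqrt D * NN * Real.sqrt (J a₁ a₂ α β (P*P)) := by
          rw [Real.sqrt_mul (mul_nonneg hDpos.le (mul_nonneg hNN0 hNN0)),
            Real.sqrt_mul hDpos.le, Real.sqrt_mul_self hNN0]
      _ = Real.sqrt D * (n:ℝ)^2 * Real.sqrt (J a₁ a₂ α β (P*P)) := by rw [hNN]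
end

section
/- Let −∞ ≤ a < b ≤ ∞, and let w be an integrable function on (a,b) with w > 0 a.e. on (a,b) such that all moments r_n := ∫_a^b xⁿ w(x) dx (n ≥ 0) are finite. Let (p_ν)_{ν≥0} be the sequence of orthonormal polynomials with respect to w, i.e., p_ν has degree ν with positive leading coefficient and ∫_a^b p_ν(x) p_μ(x) w(x) dx = δ_{νμ}. Then for every n ∈ ℕ with n ≥ 1 and every polynomial P ∈ P_n, ‖P'‖_{L²((a,b),w)} ≤ ( Σ_{ν=1}^{n} ν · ‖p_ν'‖²_{L²((a,b),w)} )^{1/2} · ‖P‖_{L²((a,b),w)}. -/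
open MeasureTheory Polynomial

noncomputable def Bform (A : Set ℝ) (w : ℝ → ℝ) (Q R : Polynomial ℝ) : ℝ :=
  ∫ x in A, Q.eval x * R.eval x * w x

section Aux
variable {A : Set ℝ} {w : ℝ → ℝ}

lemma poly_mul_w_int (hmoments : ∀ n : ℕ, IntegrableOn (fun x => x ^ n * w x) A)
    (Q : Polynomial ℝ) : IntegrableOn (fun x => Q.eval x * w x) A := by
  have h : (fun x => Q.eval x * w x)
      = fun x => ∑ i ∈ Finset.range (Q.natDegree + 1), Q.coeff i * (x ^ i * w x) := by
    funext x
    rw [Polynomial.eval_eq_sum_range, Finset.sum_mul]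
    exact Finset.sum_congr rfl fun i _ => by ring
  rw [h]
  exact integrable_finset_sum _ fun i _ => (hmoments i).const_mul _

lemma poly2_mul_w_int (hmoments : ∀ n : ℕ, IntegrableOn (fun x => x ^ n * w x) A)
    (Q R : Polynomial ℝ) : IntegrableOn (fun x => Q.eval x * R.eval x * w x) A := by
  have := poly_mul_w_int hmoments (Q * R)
  simpa [Polynomial.eval_mul] using this

lemma B_symm (Q R : Polynomial ℝ) : Bform A w Q R = Bform A w R Q := by
  unfold Bform; congr 1; funext x; ring

lemma B_nonneg (hw_pos : ∀ᵐ x ∂(volume.restrict A), 0 < w x) (Q : Polynomial ℝ) :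
    0 ≤ Bform A w Q Q := by
  refine integral_nonneg_of_ae ?_
  filter_upwards [hw_pos] with x hx
  have : 0 ≤ Q.eval x * Q.eval x := mul_self_nonneg _
  exact mul_nonneg this hx.le

lemma B_zero_left (R : Polynomial ℝ) : Bform A w 0 R = 0 := by
  unfold Bform; simp

lemma B_add_left (hmoments : ∀ n : ℕ, IntegrableOn (fun x => x ^ n * w x) A)
    (Q₁ Q₂ R : Polynomial ℝ) :
    Bform A w (Q₁ + Q₂) R = Bform A w Q₁ R + Bform A w Q₂ R := by
  unfold Bform
  rw [← integral_add (poly2_mul_w_int hmoments Q₁ R) (poly2_mul_w_int hmoments Q₂ R)]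
  congr 1; funext x; simp; ring

lemma B_smul_left (c : ℝ) (Q R : Polynomial ℝ) :
    Bform A w (c • Q) R = c * Bform A w Q R := by
  unfold Bform
  rw [← smul_eq_mul, ← integral_smul]
  congr 1; funext x; simp; ring

lemma B_sum_left (hmoments : ∀ n : ℕ, IntegrableOn (fun x => x ^ n * w x) A)
    {ι : Type*} (s : Finset ι) (f : ι → Polynomial ℝ) (R : Polynomial ℝ) :
    Bform A w (∑ i ∈ s, f i) R = ∑ i ∈ s, Bform A w (f i) R := by
  classical
  induction s using Finset.induction with
  | empty => simp [B_zero_left]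
  | insert _ _ h ih =>
    rw [Finset.sum_insert h, Finset.sum_insert h, B_add_left hmoments, ih]

lemma B_add_right (hmoments : ∀ n : ℕ, IntegrableOn (fun x => x ^ n * w x) A)
    (Q R₁ R₂ : Polynomial ℝ) :
    Bform A w Q (R₁ + R₂) = Bform A w Q R₁ + Bform A w Q R₂ := by
  rw [B_symm, B_add_left hmoments, B_symm R₁, B_symm R₂]

lemma B_smul_right (c : ℝ) (Q R : Polynomial ℝ) :
    Bform A w Q (c • R) = c * Bform A w Q R := by
  rw [B_symm, B_smul_left, B_symm]

lemma L2w_eq_B (Q : Polynomial ℝ) : L2w A w Q = Real.sqrt (Bform A w Q Q) := by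
  unfold L2w Bform
  congr 1; congr 1; funext x; ring

lemma L2w_sq (hw_pos : ∀ᵐ x ∂(volume.restrict A), 0 < w x) (Q : Polynomial ℝ) :
    (L2w A w Q) ^ 2 = Bform A w Q Q := by
  rw [L2w_eq_B, Real.sq_sqrt (B_nonneg hw_pos Q)]

lemma B_cs (hmoments : ∀ n : ℕ, IntegrableOn (fun x => x ^ n * w x) A)
    (hw_pos : ∀ᵐ x ∂(volume.restrict A), 0 < w x) (Q R : Polynomial ℝ) :
    |Bform A w Q R| ≤ Real.sqrt (Bform A w Q Q) * Real.sqrt (Bform A w R R) := by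
  have key : ∀ t : ℝ, 0 ≤ Bform A w R R * t ^ 2 + (2 * Bform A w Q R) * t
      + Bform A w Q Q := by
    intro t
    have h0 := B_nonneg hw_pos (Q + t • R)
    have hexp : Bform A w (Q + t • R) (Q + t • R)
        = Bform A w R R * t ^ 2 + (2 * Bform A w Q R) * t + Bform A w Q Q := by
      simp only [B_add_left hmoments, B_add_right hmoments, B_smul_left,
        B_smul_right, B_symm R Q]
      ring
    linarith [hexp ▸ h0]
  have hd : discrim (Bform A w R R) (2 * Bform A w Q R) (Bform A w Q Q) ≤ 0 := by
    apply discrim_le_zero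
    intro x
    have := key x
    nlinarith [this]
  rw [discrim] at hd
  have hsq : (Bform A w Q R) ^ 2 ≤ Bform A w Q Q * Bform A w R R := by nlinarith
  calc |Bform A w Q R| = Real.sqrt ((Bform A w Q R) ^ 2) := (Real.sqrt_sq_eq_abs _).symm
    _ ≤ Real.sqrt (Bform A w Q Q * Bform A w R R) := Real.sqrt_le_sqrt hsq
    _ = _ := Real.sqrt_mul (B_nonneg hw_pos Q) _

lemma expand_aux (p : ℕ → Polynomial ℝ) (hdeg : ∀ ν, (p ν).natDegree = ν)
    (hlead : ∀ ν, 0 < (p ν).leadingCoeff) :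
    ∀ m : ℕ, ∀ P : Polynomial ℝ, P.natDegree ≤ m →
      ∃ c : ℕ → ℝ, P = ∑ ν ∈ Finset.range (m + 1), c ν • p ν := by
  intro m
  induction m with
  | zero =>
    intro P hPm
    obtain ⟨x, hx⟩ := Polynomial.natDegree_eq_zero.mp (Nat.le_zero.mp hPm)
    obtain ⟨y, hy⟩ := Polynomial.natDegree_eq_zero.mp (hdeg 0)
    have hy0 : y ≠ 0 := by
      intro h
      have := hlead 0
      rw [← hy, h] at this
      simp at this
    refine ⟨fun _ => x / y, ?_⟩
    rw [Finset.sum_range_one, ← hx, ← hy, Polynomial.smul_C, smul_eq_mul,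
      div_mul_cancel₀ x hy0]
  | succ m ih =>
    intro P hPm
    set t := P.coeff (m + 1) / (p (m + 1)).leadingCoeff with ht
    have hlc : (p (m + 1)).coeff (m + 1) = (p (m + 1)).leadingCoeff := by
      rw [Polynomial.leadingCoeff, hdeg (m + 1)]
    have hl0 : (p (m + 1)).leadingCoeff ≠ 0 := (hlead (m + 1)).ne'
    have hQdeg : (P - t • p (m + 1)).natDegree ≤ m := by
      rw [Polynomial.natDegree_le_iff_coeff_eq_zero]
      intro i hi
      simp only [Polynomial.coeff_sub, Polynomial.coeff_smul, smul_eq_mul]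
      rcases eq_or_lt_of_le (Nat.succ_le_of_lt hi) with h1 | h1
      · rw [← h1, hlc, ht, div_mul_cancel₀ _ hl0, sub_self]
      · rw [Polynomial.coeff_eq_zero_of_natDegree_lt (by omega),
          Polynomial.coeff_eq_zero_of_natDegree_lt (by rw [hdeg]; omega)]
        ring
    obtain ⟨c, hc⟩ := ih _ hQdeg
    refine ⟨Function.update c (m + 1) t, ?_⟩
    rw [Finset.sum_range_succ, Function.update_self]
    have heq : ∑ ν ∈ Finset.range (m + 1), Function.update c (m + 1) t ν • p ν
        = ∑ ν ∈ Finset.range (m + 1), c ν • p ν := by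
      refine Finset.sum_congr rfl fun ν hν => ?_
      rw [Function.update_of_ne (by simp at hν; omega)]
    rw [heq, ← hc]
    ring

end Aux

/-- Mirsky's bound: if `w` is an integrable weight on `(a,b)` (with `-∞ ≤ a < b ≤ ∞`),
positive a.e., with all moments finite, and `(p_ν)` are the orthonormal polynomials with
respect to `w`, then for every `n ≥ 1` and every polynomial `P` of degree at most `n`,
`‖P'‖_{L²((a,b),w)} ≤ (∑_{ν=1}^n ν ‖p_ν'‖²_{L²((a,b),w)})^{1/2} ‖P‖_{L²((a,b),w)}`. -/
theorem mirsky_bound (a b : EReal) (hab : a < b) (w : ℝ → ℝ)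
    (A : Set ℝ) (hA : A = {x : ℝ | a < (x : EReal) ∧ (x : EReal) < b})
    (hw_int : IntegrableOn w A)
    (hw_pos : ∀ᵐ x ∂(volume.restrict A), 0 < w x)
    (hmoments : ∀ n : ℕ, IntegrableOn (fun x => x ^ n * w x) A)
    (p : ℕ → Polynomial ℝ)
    (hdeg : ∀ ν, (p ν).natDegree = ν)
    (hlead : ∀ ν, 0 < (p ν).leadingCoeff)
    (horth : ∀ ν μ, ∫ x in A, (p ν).eval x * (p μ).eval x * w x
      = if ν = μ then 1 else 0)
    (n : ℕ) (hn : 1 ≤ n) (P : Polynomial ℝ) (hP : P.natDegree ≤ n) :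
    L2w A w (derivative P) ≤
      Real.sqrt (∑ ν ∈ Finset.Icc 1 n, (ν : ℝ) * (L2w A w (derivative (p ν))) ^ 2) *
        L2w A w P := by
  obtain ⟨c, hc⟩ := expand_aux p hdeg hlead n P hP
  set D : ℕ → ℝ := fun ν => L2w A w (derivative (p ν)) with hD
  have hDnn : ∀ ν, 0 ≤ D ν := fun ν => Real.sqrt_nonneg _
  have hBp : ∀ ν μ, Bform A w (p ν) (p μ) = if ν = μ then 1 else 0 := horth
  -- coefficients
  have hco : ∀ ν ∈ Finset.range (n + 1), Bform A w (p ν) P = c ν := by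
    intro ν hν
    rw [B_symm, hc, B_sum_left hmoments]
    simp only [B_smul_left, hBp]
    simp [Finset.sum_ite_eq', hν]
  -- Parseval
  have hPar : Bform A w P P = ∑ ν ∈ Finset.range (n + 1), (c ν) ^ 2 := by
    nth_rewrite 1 [hc]
    rw [B_sum_left hmoments]
    refine Finset.sum_congr rfl fun ν hν => ?_
    rw [B_smul_left, hco ν hν, sq]
  -- derivative expansion
  have h0 : derivative (p 0) = 0 := by
    obtain ⟨y, hy⟩ := Polynomial.natDegree_eq_zero.mp (hdeg 0)
    rw [← hy]; simp
  have hins : Finset.range (n + 1) = insert 0 (Finset.Icc 1 n) := by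
    ext m; simp only [Finset.mem_range, Finset.mem_insert, Finset.mem_Icc]; omega
  have hd : derivative P = ∑ ν ∈ Finset.Icc 1 n, c ν • derivative (p ν) := by
    rw [hc, hins, Finset.sum_insert (by simp), map_add, map_sum]
    simp only [Polynomial.derivative_smul, h0, smul_zero, zero_add]
  -- double sum expansion of ‖P'‖²
  have hdd : Bform A w (derivative P) (derivative P)
      = ∑ ν ∈ Finset.Icc 1 n, ∑ μ ∈ Finset.Icc 1 n,
          (c ν * c μ) * Bform A w (derivative (p ν)) (derivative (p μ)) := by
    rw [hd, B_sum_left hmoments]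
    refine Finset.sum_congr rfl fun ν _ => ?_
    rw [B_smul_left, B_symm, B_sum_left hmoments, Finset.mul_sum]
    refine Finset.sum_congr rfl fun μ _ => ?_
    rw [B_smul_left, B_symm (Q := derivative (p μ))]
    ring
  -- term-by-term bound
  have hterm : ∀ ν ∈ Finset.Icc 1 n, ∀ μ ∈ Finset.Icc 1 n,
      (c ν * c μ) * Bform A w (derivative (p ν)) (derivative (p μ))
        ≤ (|c ν| * D ν) * (|c μ| * D μ) := by
    intro ν _ μ _
    have h1 := B_cs hmoments hw_pos (derivative (p ν)) (derivative (p μ))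
    have hDν : D ν = Real.sqrt (Bform A w (derivative (p ν)) (derivative (p ν))) :=
      L2w_eq_B _
    have hDμ : D μ = Real.sqrt (Bform A w (derivative (p μ)) (derivative (p μ))) :=
      L2w_eq_B _
    rw [← hDν, ← hDμ] at h1
    calc (c ν * c μ) * Bform A w (derivative (p ν)) (derivative (p μ))
        ≤ |(c ν * c μ) * Bform A w (derivative (p ν)) (derivative (p μ))| :=
          le_abs_self _
      _ = |c ν * c μ| * |Bform A w (derivative (p ν)) (derivative (p μ))| := abs_mul _ _
      _ ≤ |c ν * c μ| * (D ν * D μ) :=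
          mul_le_mul_of_nonneg_left h1 (abs_nonneg _)
      _ = (|c ν| * D ν) * (|c μ| * D μ) := by rw [abs_mul]; ring
  have hsum1 : Bform A w (derivative P) (derivative P)
      ≤ (∑ ν ∈ Finset.Icc 1 n, |c ν| * D ν) ^ 2 := by
    rw [hdd, sq, Finset.sum_mul_sum]
    refine Finset.sum_le_sum fun ν hν => Finset.sum_le_sum fun μ hμ => hterm ν hν μ hμ
  -- Cauchy–Schwarz on sums
  have hcs2 : (∑ ν ∈ Finset.Icc 1 n, |c ν| * D ν) ^ 2
      ≤ (∑ ν ∈ Finset.Icc 1 n, (c ν) ^ 2 / ν)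
        * (∑ ν ∈ Finset.Icc 1 n, (ν : ℝ) * D ν ^ 2) := by
    have hkey := Finset.sum_mul_sq_le_sq_mul_sq (Finset.Icc 1 n)
      (fun ν => |c ν| / Real.sqrt ν) (fun ν => Real.sqrt ν * D ν)
    have h1 : ∑ ν ∈ Finset.Icc 1 n, (|c ν| / Real.sqrt ν) * (Real.sqrt ν * D ν)
        = ∑ ν ∈ Finset.Icc 1 n, |c ν| * D ν := by
      refine Finset.sum_congr rfl fun ν hν => ?_
      have hν1 : 1 ≤ ν := (Finset.mem_Icc.mp hν).1
      have hs : Real.sqrt ν ≠ 0 :=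
        (Real.sqrt_pos.mpr (by exact_mod_cast Nat.lt_of_lt_of_le Nat.zero_lt_one hν1)).ne'
      field_simp
    have h2 : ∑ ν ∈ Finset.Icc 1 n, (|c ν| / Real.sqrt ν) ^ 2
        = ∑ ν ∈ Finset.Icc 1 n, (c ν) ^ 2 / ν := by
      refine Finset.sum_congr rfl fun ν _ => ?_
      rw [div_pow, sq_abs, Real.sq_sqrt (Nat.cast_nonneg ν)]
    have h3 : ∑ ν ∈ Finset.Icc 1 n, (Real.sqrt ν * D ν) ^ 2
        = ∑ ν ∈ Finset.Icc 1 n, (ν : ℝ) * D ν ^ 2 := by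
      refine Finset.sum_congr rfl fun ν _ => ?_
      rw [mul_pow, Real.sq_sqrt (Nat.cast_nonneg ν)]
    rw [h1, h2, h3] at hkey
    exact hkey
  have hcoef : ∑ ν ∈ Finset.Icc 1 n, (c ν) ^ 2 / ν ≤ Bform A w P P := by
    rw [hPar]
    calc ∑ ν ∈ Finset.Icc 1 n, (c ν) ^ 2 / ν
        ≤ ∑ ν ∈ Finset.Icc 1 n, (c ν) ^ 2 := by
          refine Finset.sum_le_sum fun ν hν => ?_
          have hν1 : 1 ≤ ν := (Finset.mem_Icc.mp hν).1
          exact div_le_self (sq_nonneg _) (by exact_mod_cast hν1)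
      _ ≤ ∑ ν ∈ Finset.range (n + 1), (c ν) ^ 2 := by
          refine Finset.sum_le_sum_of_subset_of_nonneg ?_ fun _ _ _ => sq_nonneg _
          intro x hx
          simp only [Finset.mem_Icc] at hx
          simp only [Finset.mem_range]
          omega
  set S : ℝ := ∑ ν ∈ Finset.Icc 1 n, (ν : ℝ) * D ν ^ 2 with hS
  have hSnn : 0 ≤ S :=
    Finset.sum_nonneg fun ν _ => mul_nonneg (Nat.cast_nonneg ν) (sq_nonneg _)
  have hfin : Bform A w (derivative P) (derivative P) ≤ S * Bform A w P P := by
    have hBPnn : 0 ≤ Bform A w P P := B_nonneg hw_pos P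
    calc Bform A w (derivative P) (derivative P)
        ≤ (∑ ν ∈ Finset.Icc 1 n, |c ν| * D ν) ^ 2 := hsum1
      _ ≤ (∑ ν ∈ Finset.Icc 1 n, (c ν) ^ 2 / ν) * S := hcs2
      _ ≤ Bform A w P P * S := mul_le_mul_of_nonneg_right hcoef hSnn
      _ = S * Bform A w P P := mul_comm _ _
  rw [L2w_eq_B, L2w_eq_B]
  calc Real.sqrt (Bform A w (derivative P) (derivative P))
      ≤ Real.sqrt (S * Bform A w P P) := Real.sqrt_le_sqrt hfin
    _ = Real.sqrt S * Real.sqrt (Bform A w P P) := Real.sqrt_mul hSnn _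
end
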